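/- arXiv:math/0703898 — 5 statements merged into one kernel-verified Lean document; each statement's English description precedes it below -/
import Mathlib

section
/- Let τ be the canonical sequence of a partition and let σ = 1(τ+1), i.e., the symbol 1 followed by τ with every entry increased by 1. Then for every n ≥ 1, p(n;σ) = Σ_{i=0}^{n−1} C(n−1,i) · p(i;τ), where C(n−1,i) is the binomial coefficient. -/
/-- `π` is the canonical sequence of a set partition: every entry is at least 1,
and each entry is at most one more than the maximum of the preceding entries
(so the first entry is 1). -/
def IsCanonicalSeq (π : List ℕ) : Prop :=
  ∀ i (h : i < π.length), 1 ≤ π.get ⟨i, h⟩ ∧ π.get ⟨i, h⟩ ≤ (π.take i).foldr max 0 + 1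

/-- `π` contains the pattern `σ`: there is a subsequence of `π`
order-isomorphic to `σ`. -/
def ContainsPat (π σ : List ℕ) : Prop :=
  ∃ f : Fin σ.length → Fin π.length, StrictMono f ∧
    ∀ i j : Fin σ.length, σ.get i < σ.get j ↔ π.get (f i) < π.get (f j)

/-- `π` avoids the pattern `σ`. -/
def AvoidsPat (π σ : List ℕ) : Prop := ¬ ContainsPat π σ

/-- `pAvoid n σ` is the number of canonical sequences of partitions of `[n]`
avoiding the pattern `σ`. -/
noncomputable def pAvoid (n : ℕ) (σ : List ℕ) : ℕ :=
  Set.ncard {π : List ℕ | π.length = n ∧ IsCanonicalSeq π ∧ AvoidsPat π σ}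

/-- Two patterns are equivalent if they have the same number of avoiders of
each size. -/
def PatEquiv (σ σ' : List ℕ) : Prop := ∀ n, pAvoid n σ = pAvoid n σ'

/-- The increasing sequence `1, 2, …, k`. -/
def iota (k : ℕ) : List ℕ := (List.range k).map (· + 1)

/-! ### Auxiliary machinery -/

/-- recursive canonicity with running max `M` -/
def Canon : ℕ → List ℕ → Prop
  | _, [] => True
  | M, a :: t => 1 ≤ a ∧ a ≤ M + 1 ∧ Canon (max M a) t

lemma foldr_max_max (l : List ℕ) (a M : ℕ) :
    l.foldr max (max a M) = max a (l.foldr max M) := by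
  induction l with
  | nil => rfl
  | cons b t ih => simp [List.foldr_cons, ih, max_left_comm]

lemma canon_iff_get (M : ℕ) (l : List ℕ) :
    Canon M l ↔ ∀ i (h : i < l.length),
      1 ≤ l.get ⟨i, h⟩ ∧ l.get ⟨i, h⟩ ≤ (l.take i).foldr max M + 1 := by
  induction l generalizing M with
  | nil => simp [Canon]
  | cons a t ih =>
    simp only [Canon, ih]
    constructor
    · rintro ⟨h1, h2, h3⟩ i hi
      match i with
      | 0 => exact ⟨h1, h2⟩
      | (j+1) =>
        have := h3 j (by simpa using hi)
        simpa [List.take_succ_cons, foldr_max_max, max_comm] using this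
    · intro h
      refine ⟨(h 0 (by simp)).1, (h 0 (by simp)).2, fun j hj => ?_⟩
      have := h (j+1) (by simpa using hj)
      simpa [List.take_succ_cons, foldr_max_max, max_comm] using this

lemma isCanonicalSeq_iff (l : List ℕ) : IsCanonicalSeq l ↔ Canon 0 l := by
  rw [canon_iff_get]; rfl

lemma canon_pos {M : ℕ} {l : List ℕ} (h : Canon M l) : ∀ a ∈ l, 1 ≤ a := by
  induction l generalizing M with
  | nil => simp
  | cons a t ih =>
    obtain ⟨h1, -, h3⟩ := h
    intro b hb
    rcases List.mem_cons.1 hb with rfl | hb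
    · exact h1
    · exact ih h3 b hb

lemma canon_bound {M : ℕ} {l : List ℕ} (h : Canon M l) : ∀ a ∈ l, a ≤ M + l.length := by
  induction l generalizing M with
  | nil => simp
  | cons a t ih =>
    obtain ⟨-, h2, h3⟩ := h
    intro b hb
    rcases List.mem_cons.1 hb with rfl | hb
    · simp; omega
    · have := ih h3 b hb
      have : b ≤ max M a + t.length := this
      simp [List.length_cons]
      omega

/-- the entries greater than 1, each decreased by 1 -/
def core (x : List ℕ) : List ℕ := (x.filter (fun a => 1 < a)).map (· - 1)

def maskOf (x : List ℕ) : List Bool := x.map (fun a => decide (1 < a))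

def build : List Bool → List ℕ → List ℕ
  | [], _ => []
  | false :: bs, ρ => 1 :: build bs ρ
  | true :: bs, [] => 2 :: build bs []
  | true :: bs, r :: ρ => (r + 1) :: build bs ρ

lemma core_cons_one (t : List ℕ) : core (1 :: t) = core t := by simp [core]

lemma core_cons_big {a : ℕ} (h : 1 < a) (t : List ℕ) :
    core (a :: t) = (a - 1) :: core t := by simp [core, h]

lemma canon_succ_iff (M : ℕ) (x : List ℕ) :
    Canon (M + 1) x ↔ (∀ a ∈ x, 1 ≤ a) ∧ Canon M (core x) := by
  induction x generalizing M with
  | nil => simp [Canon, core]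
  | cons a t ih =>
    match a with
    | 0 => simp [Canon]
    | 1 =>
      rw [core_cons_one]
      simp only [Canon, List.mem_cons]
      rw [show max (M+1) 1 = M + 1 by omega, ih]
      constructor
      · rintro ⟨-, -, h3, h4⟩
        exact ⟨fun b hb => by rcases hb with rfl | hb; omega; exact h3 b hb, h4⟩
      · rintro ⟨h0, h4⟩
        exact ⟨le_refl 1, by omega, fun b hb => h0 b (Or.inr hb), h4⟩
    | (k+2) =>
      rw [core_cons_big (by omega)]
      have h1 : max (M + 1) (k+2) = max M (k+2-1) + 1 := by omega
      simp only [Canon, h1, ih, List.mem_cons]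
      constructor
      · rintro ⟨-, h2, h3, h4⟩
        exact ⟨fun b hb => by rcases hb with rfl | hb; omega; exact h3 b hb,
          ⟨by omega, by omega, h4⟩⟩
      · rintro ⟨h0, h2, h3, h4⟩
        exact ⟨by omega, by omega, fun b hb => h0 b (Or.inr hb), h4⟩

lemma build_length (b : List Bool) (ρ : List ℕ) : (build b ρ).length = b.length := by
  induction b generalizing ρ with
  | nil => rfl
  | cons hd bs ih =>
    match hd, ρ with
    | false, ρ => simp [build, ih]
    | true, [] => simp [build, ih]
    | true, r :: ρ => simp [build, ih]

lemma build_mem_pos {b : List Bool} {ρ : List ℕ} : ∀ a ∈ build b ρ, 1 ≤ a := by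
  induction b generalizing ρ with
  | nil => simp [build]
  | cons hd bs ih =>
    match hd, ρ with
    | false, ρ => intro a ha; rcases List.mem_cons.1 ha with rfl | ha; omega; exact ih _ ha
    | true, [] => intro a ha; rcases List.mem_cons.1 ha with rfl | ha; omega; exact ih _ ha
    | true, r :: ρ => intro a ha; rcases List.mem_cons.1 ha with rfl | ha; omega; exact ih _ ha

lemma core_build {b : List Bool} {ρ : List ℕ}
    (hlen : b.count true = ρ.length) (hρ : ∀ r ∈ ρ, 1 ≤ r) :
    core (build b ρ) = ρ := by
  induction b generalizing ρ with
  | nil =>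
    simp only [List.count_nil] at hlen
    rw [List.eq_nil_of_length_eq_zero hlen.symm]; rfl
  | cons hd bs ih =>
    match hd, ρ with
    | false, ρ =>
      simp only [List.count_cons, if_neg] at hlen
      rw [build, core_cons_one]
      exact ih (by simpa using hlen) hρ
    | true, [] => simp [List.count_cons] at hlen
    | true, r :: ρ =>
      have hr : 1 ≤ r := hρ r (by simp)
      rw [build, core_cons_big (by omega)]
      simp only [List.count_cons, List.length_cons] at hlen
      rw [ih (by simpa using hlen) (fun x hx => hρ x (by simp [hx]))]
      simp

lemma maskOf_build {b : List Bool} {ρ : List ℕ}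
    (hlen : b.count true = ρ.length) (hρ : ∀ r ∈ ρ, 1 ≤ r) :
    maskOf (build b ρ) = b := by
  induction b generalizing ρ with
  | nil => rfl
  | cons hd bs ih =>
    match hd, ρ with
    | false, ρ =>
      simp only [List.count_cons, if_neg] at hlen
      have h2 := ih (show List.count true bs = ρ.length by simpa using hlen) hρ
      simp only [maskOf] at h2 ⊢
      simp [build, h2]
    | true, [] => simp [List.count_cons] at hlen
    | true, r :: ρ =>
      have hr : 1 ≤ r := hρ r (by simp)
      simp only [List.count_cons, List.length_cons] at hlen
      have h2 := ih (show List.count true bs = ρ.length by simpa using hlen)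
        (fun x hx => hρ x (by simp [hx]))
      simp only [maskOf] at h2 ⊢
      simp [build, h2]; omega

lemma build_maskOf_core {x : List ℕ} (hx : ∀ a ∈ x, 1 ≤ a) :
    build (maskOf x) (core x) = x := by
  induction x with
  | nil => rfl
  | cons a t ih =>
    have ha := hx a (by simp)
    have ht : ∀ b ∈ t, 1 ≤ b := fun b hb => hx b (by simp [hb])
    rcases Nat.lt_or_ge 1 a with h1 | h1
    · rw [maskOf, List.map_cons, core_cons_big h1,
        show decide (1 < a) = true by simpa using h1]
      show build (true :: maskOf t) ((a-1) :: core t) = a :: t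
      rw [build, show (a - 1 + 1) = a by omega]
      exact congrArg (a :: ·) (ih ht)
    · have : a = 1 := by omega
      subst this
      rw [maskOf, List.map_cons, core_cons_one]
      rw [show decide ((1:ℕ) < 1) = false by simp]
      show build (false :: maskOf t) (core t) = 1 :: t
      rw [build]
      exact congrArg (1 :: ·) (ih ht)

lemma maskOf_length (x : List ℕ) : (maskOf x).length = x.length := by simp [maskOf]

lemma count_true_maskOf (x : List ℕ) : (maskOf x).count true = (core x).length := by
  induction x with
  | nil => rfl
  | cons a t ih =>
    rcases Nat.lt_or_ge 1 a with h1 | h1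
    · rw [maskOf, List.map_cons, core_cons_big h1]
      rw [show decide (1 < a) = true by simpa using h1]
      simp only [List.count_cons, List.length_cons]
      simp [maskOf] at ih; simp [maskOf, ih]
    · rw [maskOf, List.map_cons]
      rw [show decide (1 < a) = false by simpa using Nat.not_lt.2 h1]
      have : core (a :: t) = core t := by
        simp [core, show ¬ (1 < a) from Nat.not_lt.2 h1]
      rw [this]
      simp only [List.count_cons]
      simp [maskOf] at ih; simp [maskOf, ih]

lemma containsPat_iff (π σ : List ℕ) :
    ContainsPat π σ ↔ ∃ s : List ℕ, s.Sublist π ∧ s.length = σ.length ∧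
      ∀ i j (hi : i < s.length) (hj : j < s.length)
        (hi' : i < σ.length) (hj' : j < σ.length), (s[i] < s[j] ↔ σ[i] < σ[j]) := by
  constructor
  · rintro ⟨f, hmono, hiso⟩
    refine ⟨List.ofFn (fun i : Fin σ.length => π.get (f i)), ?_, by simp, ?_⟩
    · rw [List.sublist_iff_exists_fin_orderEmbedding_get_eq]
      have hl : (List.ofFn (fun i : Fin σ.length => π.get (f i))).length = σ.length :=
        List.length_ofFn
      refine ⟨OrderEmbedding.ofStrictMono (fun i => f (Fin.cast hl i)) ?_, fun i => ?_⟩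
      · intro a b h
        apply hmono
        simp only [Fin.lt_def, Fin.coe_cast]
        exact h
      · rw [List.get_ofFn]
        rfl
    · intro i j hi hj hi' hj'
      simp only [List.getElem_ofFn]
      have := (hiso ⟨i, hi'⟩ ⟨j, hj'⟩).symm
      simpa only [List.get_eq_getElem] using this
  · rintro ⟨s, hsub, hlen, hiso⟩
    rw [List.sublist_iff_exists_fin_orderEmbedding_get_eq] at hsub
    obtain ⟨e, he⟩ := hsub
    refine ⟨fun i => e (Fin.cast hlen.symm i), ?_, ?_⟩
    · intro a b h
      apply e.strictMono
      simp only [Fin.lt_def, Fin.coe_cast]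
      exact h
    · intro i j
      have h1 := he (Fin.cast hlen.symm i)
      have h2 := he (Fin.cast hlen.symm j)
      have h3 := hiso i.val j.val (by omega) (by omega) i.isLt j.isLt
      simp only [List.get_eq_getElem] at h1 h2 ⊢
      rw [← h1, ← h2]
      simp only [Fin.coe_cast]
      exact h3.symm

lemma contains_transfer (x τ : List ℕ) (hτ : ∀ a ∈ τ, 1 ≤ a) (hx : ∀ a ∈ x, 1 ≤ a) :
    ContainsPat (1 :: x) (1 :: τ.map (· + 1)) ↔ ContainsPat (core x) τ := by
  rw [containsPat_iff, containsPat_iff]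
  constructor
  · rintro ⟨t, hsub, hlen, hiso⟩
    rcases t with _ | ⟨v, s⟩
    · simp at hlen
    have hslen : s.length = τ.length := by simpa using hlen
    have hv : 1 ≤ v := by
      have hm := hsub.subset (List.mem_cons_self)
      rcases List.mem_cons.1 hm with h | h
      · omega
      · exact hx v h
    have key : ∀ k (hk : k < s.length), v < s[k] := by
      intro k hk
      have hk' : k < τ.length := hslen ▸ hk
      have H := hiso 0 (k+1) (by simp) (by simp; omega) (by simp) (by simp; omega)
      simp only [List.getElem_cons_zero, List.getElem_cons_succ, List.getElem_map] at H
      have hτk : 1 ≤ τ[k] := hτ _ (List.getElem_mem hk')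
      exact H.mpr (by omega)
    have hs2 : ∀ a ∈ s, 1 < a := by
      intro a ha
      obtain ⟨k, hk, rfl⟩ := List.getElem_of_mem ha
      have := key k hk
      omega
    refine ⟨s.map (· - 1), ?_, by simpa using hslen, ?_⟩
    · have h4 : s.Sublist (1 :: x) := (List.sublist_cons_self v s).trans hsub
      have h5 := h4.filter (fun a => decide (1 < a))
      rw [List.filter_eq_self.2 (fun a ha => by simpa using hs2 a ha)] at h5
      rw [List.filter_cons] at h5
      simp only [show decide ((1:ℕ) < 1) = false by simp] at h5
      exact (h5.map (· - 1) : _)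
    · intro i j hi hj hi' hj'
      simp only [List.length_map] at hi hj
      have H := hiso (i+1) (j+1) (by simp; omega) (by simp; omega)
        (by simp; omega) (by simp; omega)
      simp only [List.getElem_cons_succ, List.getElem_map] at H
      simp only [List.getElem_map]
      have h1 := hs2 _ (List.getElem_mem hi)
      have h2 := hs2 _ (List.getElem_mem hj)
      omega
  · rintro ⟨s, hsub, hlen, hiso⟩
    rw [core, List.sublist_map_iff] at hsub
    obtain ⟨s', hsub', rfl⟩ := hsub
    have hs'2 : ∀ a ∈ s', 1 < a := by
      intro a ha
      have := (List.mem_filter.1 (hsub'.subset ha)).2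
      simpa using this
    have hs'x : s'.Sublist x := hsub'.trans (List.filter_sublist)
    have hs'len : s'.length = τ.length := by simpa using hlen
    refine ⟨1 :: s', hs'x.cons₂ 1, by simpa using hs'len, ?_⟩
    intro i j hi hj hi' hj'
    simp only [List.length_cons] at hi hj
    match i, j with
    | 0, 0 => simp
    | 0, (l+1) =>
      have hl : l < s'.length := by omega
      have hl' : l < τ.length := by omega
      simp only [List.getElem_cons_zero, List.getElem_cons_succ, List.getElem_map]
      have := hs'2 _ (List.getElem_mem hl)
      have hτl : 1 ≤ τ[l] := hτ _ (List.getElem_mem hl')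
      omega
    | (k+1), 0 =>
      have hk : k < s'.length := by omega
      simp only [List.getElem_cons_zero, List.getElem_cons_succ, List.getElem_map]
      have := hs'2 _ (List.getElem_mem hk)
      omega
    | (k+1), (l+1) =>
      have hk : k < s'.length := by omega
      have hl : l < s'.length := by omega
      have H := hiso k l (by simpa using hk) (by simpa using hl) (by omega) (by omega)
      simp only [List.getElem_cons_succ, List.getElem_map] at H ⊢
      have h1 := hs'2 _ (List.getElem_mem hk)
      have h2 := hs'2 _ (List.getElem_mem hl)
      omega

lemma finite_bounded (n N : ℕ) : {l : List ℕ | l.length = n ∧ ∀ a ∈ l, a ≤ N}.Finite := by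
  induction n with
  | zero =>
    apply Set.Finite.subset (Set.finite_singleton ([] : List ℕ))
    rintro l ⟨hl, -⟩
    simp [List.length_eq_zero_iff.1 hl]
  | succ n ih =>
    apply Set.Finite.subset
      ((Finset.range (N+1)).finite_toSet.biUnion (fun a _ => ih.image (a :: ·)))
    rintro l ⟨hl, hb⟩
    rcases l with _ | ⟨hd, tl⟩
    · simp at hl
    · have hhd : hd ∈ Finset.range (N+1) := by
        have := hb hd (by simp); simp; omega
      exact Set.mem_biUnion hhd ⟨tl, ⟨by simpa using hl, fun a ha => hb a (by simp [ha])⟩, rfl⟩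

lemma finite_length_count (m i : ℕ) :
    {b : List Bool | b.length = m ∧ b.count true = i}.Finite :=
  (List.finite_length_eq Bool m).subset (fun b hb => hb.1)

lemma mask_count (m : ℕ) : ∀ i, {b : List Bool | b.length = m ∧ b.count true = i}.ncard
    = Nat.choose m i := by
  induction m with
  | zero =>
    intro i
    match i with
    | 0 =>
      rw [show {b : List Bool | b.length = 0 ∧ b.count true = 0} = {[]} by
        ext b; rcases b with _ | ⟨h, t⟩ <;> simp]
      simp
    | (i+1) =>
      rw [show {b : List Bool | b.length = 0 ∧ b.count true = i+1} = ∅ by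
        ext b; rcases b with _ | ⟨h, t⟩ <;> simp]
      simp
  | succ m ih =>
    intro i
    match i with
    | 0 =>
      rw [show {b : List Bool | b.length = m+1 ∧ b.count true = 0}
          = (false :: ·) '' {b : List Bool | b.length = m ∧ b.count true = 0} by
        ext b
        rcases b with _ | ⟨h, t⟩
        · simp
        · cases h <;> simp [List.count_cons]]
      rw [Set.ncard_image_of_injective _ (List.cons_injective), ih 0]
      simp
    | (i+1) =>
      have hdecomp : {b : List Bool | b.length = m+1 ∧ b.count true = i+1}
          = (false :: ·) '' {b : List Bool | b.length = m ∧ b.count true = i+1}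
          ∪ (true :: ·) '' {b : List Bool | b.length = m ∧ b.count true = i} := by
        ext b
        rcases b with _ | ⟨h, t⟩
        · simp
        · cases h <;> simp [List.count_cons]
      rw [hdecomp, Set.ncard_union_eq ?_ ?_ ?_]
      · rw [Set.ncard_image_of_injective _ (List.cons_injective),
          Set.ncard_image_of_injective _ (List.cons_injective), ih, ih]
        rw [Nat.choose_succ_succ']; ring
      · rw [Set.disjoint_left]
        rintro b ⟨t1, -, rfl⟩ ⟨t2, -, h⟩
        simp at h
      · exact ((finite_length_count m (i+1)).image _)
      · exact ((finite_length_count m i).image _)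

lemma ncard_prod {α β : Type*} (s : Set α) (t : Set β) :
    (s ×ˢ t).ncard = s.ncard * t.ncard := by
  rw [← Nat.card_coe_set_eq, ← Nat.card_coe_set_eq, ← Nat.card_coe_set_eq,
    Nat.card_congr (Equiv.Set.prod s t), Nat.card_prod]

lemma ncard_biUnion_range {α : Type*} (n : ℕ) (f : ℕ → Set α)
    (hfin : ∀ i, i < n → (f i).Finite)
    (hdisj : ∀ i j, i < n → j < n → i ≠ j → Disjoint (f i) (f j)) :
    (⋃ i ∈ Finset.range n, f i).ncard = ∑ i ∈ Finset.range n, (f i).ncard := by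
  induction n with
  | zero => simp
  | succ n ih =>
    rw [Finset.sum_range_succ, ← ih (fun i hi => hfin i (by omega))
      (fun i j hi hj => hdisj i j (by omega) (by omega))]
    rw [show (⋃ i ∈ Finset.range (n+1), f i) = (⋃ i ∈ Finset.range n, f i) ∪ f n by
      simp [Finset.range_add_one, Set.biUnion_insert, Set.union_comm]]
    rw [Set.ncard_union_eq ?_ ?_ ?_]
    · rw [Set.disjoint_right]
      intro a ha hmem
      simp only [Set.mem_iUnion, Finset.mem_range] at hmem
      obtain ⟨i, hi, hai⟩ := hmem
      exact Set.disjoint_left.1 (hdisj i n (by omega) (by omega) (by omega)) hai ha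
    · exact Set.Finite.biUnion (Finset.range n).finite_toSet
        (fun i hi => hfin i (by simp at hi; omega))
    · exact hfin n (by omega)

/-- The set of avoiders of a pattern, of given size. -/
def AvoidSet (i : ℕ) (τ : List ℕ) : Set (List ℕ) :=
  {π : List ℕ | π.length = i ∧ IsCanonicalSeq π ∧ AvoidsPat π τ}

lemma pAvoid_eq (i : ℕ) (τ : List ℕ) : pAvoid i τ = (AvoidSet i τ).ncard := rfl

lemma avoidSet_finite (i : ℕ) (τ : List ℕ) : (AvoidSet i τ).Finite := by
  apply (finite_bounded i i).subset
  rintro ρ ⟨h1, h2, -⟩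
  refine ⟨h1, fun a ha => ?_⟩
  have := canon_bound ((isCanonicalSeq_iff ρ).1 h2) a ha
  omega

/-- For a canonical sequence τ and σ = 1(τ+1),
p(n;σ) = Σ_{i=0}^{n-1} C(n-1,i) p(i;τ) for every n ≥ 1. -/
theorem statement2 (τ : List ℕ) (hτ : IsCanonicalSeq τ) (n : ℕ) (hn : 1 ≤ n) :
    pAvoid n (1 :: τ.map (· + 1)) =
      ∑ i ∈ Finset.range n, Nat.choose (n - 1) i * pAvoid i τ := by
  obtain ⟨m, rfl⟩ : ∃ m, n = m + 1 := ⟨n - 1, by omega⟩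
  have hτpos : ∀ a ∈ τ, 1 ≤ a := canon_pos ((isCanonicalSeq_iff τ).1 hτ)
  set σ : List ℕ := 1 :: τ.map (· + 1) with hσ
  -- the set X of tails
  set X : Set (List ℕ) := {x : List ℕ | x.length = m ∧ (∀ a ∈ x, 1 ≤ a) ∧
    Canon 0 (core x) ∧ AvoidsPat (core x) τ} with hX
  -- Step 1: the avoiders of σ of size m+1 are exactly 1 :: X
  have step1 : AvoidSet (m+1) σ = (1 :: ·) '' X := by
    ext π
    constructor
    · rintro ⟨h1, h2, h3⟩
      rcases π with _ | ⟨hd, x⟩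
      · simp at h1
      have hc := (isCanonicalSeq_iff _).1 h2
      obtain ⟨hc1, hc2, hc3⟩ := hc
      have hhd : hd = 1 := by omega
      subst hhd
      rw [show max 0 1 = 0 + 1 by rfl, canon_succ_iff] at hc3
      refine ⟨x, ⟨by simpa using h1, hc3.1, hc3.2, ?_⟩, rfl⟩
      intro hcon
      exact h3 ((contains_transfer x τ hτpos hc3.1).2 hcon)
    · rintro ⟨x, ⟨h1, h2, h3, h4⟩, rfl⟩
      refine ⟨by simpa using h1, ?_, ?_⟩
      · rw [isCanonicalSeq_iff]
        refine ⟨le_refl 1, by omega, ?_⟩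
        rw [show max 0 1 = 0 + 1 by rfl, canon_succ_iff]
        exact ⟨h2, h3⟩
      · intro hcon
        exact h4 ((contains_transfer x τ hτpos h2).1 hcon)
  -- Step 3: X is mapped bijectively onto Y
  set Y : Set (List Bool × List ℕ) := ⋃ i ∈ Finset.range (m+1),
    ({b : List Bool | b.length = m ∧ b.count true = i} ×ˢ AvoidSet i τ) with hY
  have step3 : (fun x => (maskOf x, core x)) '' X = Y := by
    ext p
    constructor
    · rintro ⟨x, ⟨h1, h2, h3, h4⟩, rfl⟩
      have hcl : (core x).length ≤ m := by
        have : (x.filter (fun a => 1 < a)).length ≤ x.length := List.length_filter_le _ _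
        simp only [core, List.length_map]
        omega
      refine Set.mem_biUnion (show (core x).length ∈ Finset.range (m+1) by simp; omega) ?_
      refine ⟨⟨by simpa [maskOf_length] using h1, count_true_maskOf x⟩,
        rfl, (isCanonicalSeq_iff _).2 h3, h4⟩
    · intro hp
      simp only [hY, Set.mem_iUnion, Finset.mem_range] at hp
      obtain ⟨i, hi, hp⟩ := hp
      obtain ⟨⟨hb1, hb2⟩, hρ1, hρ2, hρ3⟩ := hp
      obtain ⟨b, ρ⟩ := p
      have hρpos : ∀ r ∈ ρ, 1 ≤ r := canon_pos ((isCanonicalSeq_iff ρ).1 hρ2)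
      have hlen : b.count true = ρ.length := by
        simp only at hb2 hρ1
        omega
      refine ⟨build b ρ, ⟨?_, build_mem_pos, ?_, ?_⟩, ?_⟩
      · rw [build_length]; exact hb1
      · rw [core_build hlen hρpos]; exact (isCanonicalSeq_iff ρ).1 hρ2
      · rw [core_build hlen hρpos]; exact hρ3
      · show (maskOf (build b ρ), core (build b ρ)) = (b, ρ)
        rw [maskOf_build hlen hρpos, core_build hlen hρpos]
  have injX : Set.InjOn (fun x => (maskOf x, core x)) X := by
    rintro x ⟨-, hx, -⟩ y ⟨-, hy, -⟩ hxy
    have h1 : maskOf x = maskOf y := congrArg Prod.fst hxy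
    have h2 : core x = core y := congrArg Prod.snd hxy
    rw [← build_maskOf_core hx, ← build_maskOf_core hy, h1, h2]
  -- now compute
  rw [pAvoid_eq, step1, Set.ncard_image_of_injective _ (List.cons_injective),
    ← Set.ncard_image_of_injOn injX, step3, hY]
  rw [ncard_biUnion_range (m+1) _ ?_ ?_]
  · apply Finset.sum_congr rfl
    intro i hi
    rw [ncard_prod, mask_count, pAvoid_eq]
    simp
  · intro i hi
    exact ((finite_length_count m i).prod (avoidSet_finite i τ))
  · intro i j hi hj hij
    rw [Set.disjoint_left]
    rintro ⟨b, ρ⟩ ⟨⟨-, hbi⟩, -⟩ ⟨⟨-, hbj⟩, -⟩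
    exact hij (hbi ▸ hbj ▸ rfl)
end

section
/- Let τ and τ′ be canonical sequences of partitions. Then τ ∼ τ′ if and only if 1(τ+1) ∼ 1(τ′+1). Moreover, if τ ∼ τ′, then for every k ≥ 1 the pattern 12⋯k(τ+k) is equivalent to the pattern 12⋯k(τ′+k). -/
namespace S3

def merge : List Bool → List ℕ → List ℕ
  | [], _ => []
  | false :: c, ρ => 1 :: merge c ρ
  | true :: _, [] => []
  | true :: c, r :: ρ => (r + 1) :: merge c ρ

def mask (π : List ℕ) : List Bool := π.map (fun x => decide (1 < x))

def strip (π : List ℕ) : List ℕ := (π.filter (fun x => decide (1 < x))).map (· - 1)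

lemma length_merge : ∀ (c : List Bool) (ρ : List ℕ), c.count true = ρ.length →
    (merge c ρ).length = c.length
  | [], ρ, _ => rfl
  | false :: c, ρ, h => by
    simp only [merge, List.length_cons]
    rw [length_merge c ρ (by simpa [List.count_cons] using h)]
  | true :: c, [], h => by simp [List.count_cons] at h
  | true :: c, r :: ρ, h => by
    simp only [merge, List.length_cons]
    rw [length_merge c ρ (by simpa [List.count_cons] using h)]

lemma merge_mask_strip : ∀ (π : List ℕ), (∀ x ∈ π, 1 ≤ x) → merge (mask π) (strip π) = π
  | [], _ => rfl
  | x :: l, h => by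
    by_cases hx : 1 < x
    · have h1 : mask (x :: l) = true :: mask l := by simp [mask, hx]
      have h2 : strip (x :: l) = (x - 1) :: strip l := by simp [strip, hx]
      rw [h1, h2]
      simp only [merge]
      rw [merge_mask_strip l (fun y hy => h y (List.mem_cons_of_mem _ hy))]
      congr 1
      omega
    · have hx1 : x = 1 := by have := h x (List.mem_cons_self); omega
      have h1 : mask (x :: l) = false :: mask l := by simp [mask, hx]
      have h2 : strip (x :: l) = strip l := by simp [strip, hx]
      rw [h1, h2]
      simp only [merge]
      rw [merge_mask_strip l (fun y hy => h y (List.mem_cons_of_mem _ hy)), hx1]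

lemma count_mask : ∀ (π : List ℕ), (mask π).count true = (strip π).length
  | [] => rfl
  | x :: l => by
    have ih := count_mask l
    simp only [mask, strip] at ih ⊢
    by_cases hx : 1 < x
    · simp [hx, List.count_cons, ih]
    · simp [hx, List.count_cons, ih]

lemma mask_merge : ∀ (c : List Bool) (ρ : List ℕ), c.count true = ρ.length →
    (∀ r ∈ ρ, 1 ≤ r) → mask (merge c ρ) = c
  | [], ρ, _, _ => rfl
  | false :: c, ρ, h, hρ => by
    have ih := mask_merge c ρ (by simpa [List.count_cons] using h) hρ
    simp only [merge, mask, List.map_cons] at ih ⊢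
    rw [ih]
    simp
  | true :: c, [], h, _ => by simp [List.count_cons] at h
  | true :: c, r :: ρ, h, hρ => by
    have ih := mask_merge c ρ (by simpa [List.count_cons] using h)
      (fun y hy => hρ y (List.mem_cons_of_mem _ hy))
    have hr : 1 ≤ r := hρ r (List.mem_cons_self)
    have h1 : 1 < r + 1 := by omega
    simp only [merge, mask, List.map_cons] at ih ⊢
    rw [ih]
    simp [h1]

lemma strip_merge : ∀ (c : List Bool) (ρ : List ℕ), c.count true = ρ.length →
    (∀ r ∈ ρ, 1 ≤ r) → strip (merge c ρ) = ρ
  | [], ρ, h, _ => by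
    simp [List.count_cons] at h
    simp [strip, merge, h.symm]
    exact List.length_eq_zero_iff.mp h.symm
  | false :: c, ρ, h, hρ => by
    have ih := strip_merge c ρ (by simpa [List.count_cons] using h) hρ
    simp only [merge, strip] at ih ⊢
    simpa using ih
  | true :: c, [], h, _ => by simp [List.count_cons] at h
  | true :: c, r :: ρ, h, hρ => by
    have ih := strip_merge c ρ (by simpa [List.count_cons] using h)
      (fun y hy => hρ y (List.mem_cons_of_mem _ hy))
    have hr : 1 ≤ r := hρ r (List.mem_cons_self)
    have h1 : 1 < r + 1 := by omega
    simp only [merge, strip] at ih ⊢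
    simp [h1, ih]

lemma filter_merge : ∀ (c : List Bool) (ρ : List ℕ), c.count true = ρ.length →
    (∀ r ∈ ρ, 1 ≤ r) → (merge c ρ).filter (fun x => decide (1 < x)) = ρ.map (· + 1)
  | [], ρ, h, _ => by
    simp [List.count_cons] at h
    simp [merge, List.length_eq_zero_iff.mp h.symm]
  | false :: c, ρ, h, hρ => by
    have ih := filter_merge c ρ (by simpa [List.count_cons] using h) hρ
    simp only [merge]
    rw [List.filter_cons]
    simpa using ih
  | true :: c, [], h, _ => by simp [List.count_cons] at h
  | true :: c, r :: ρ, h, hρ => by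
    have ih := filter_merge c ρ (by simpa [List.count_cons] using h)
      (fun y hy => hρ y (List.mem_cons_of_mem _ hy))
    have h1 : 1 < r + 1 := by have := hρ r (List.mem_cons_self); omega
    simp only [merge]
    rw [List.filter_cons]
    simp [h1, ih]

lemma map_succ_sublist : ∀ (c : List Bool) (ρ : List ℕ), c.count true = ρ.length →
    (ρ.map (· + 1)).Sublist (merge c ρ)
  | [], ρ, h => by
    simp [List.count_cons] at h
    simp [merge, List.length_eq_zero_iff.mp h.symm]
  | false :: c, ρ, h => by
    exact (map_succ_sublist c ρ (by simpa [List.count_cons] using h)).cons 1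
  | true :: c, [], h => by simp [List.count_cons] at h
  | true :: c, r :: ρ, h => by
    exact (map_succ_sublist c ρ (by simpa [List.count_cons] using h)).cons₂ (r + 1)

lemma mem_merge_one_le : ∀ (c : List Bool) (ρ : List ℕ), (∀ r ∈ ρ, 1 ≤ r) →
    ∀ x ∈ merge c ρ, 1 ≤ x
  | [], ρ, _ => by simp [merge]
  | false :: c, ρ, hρ => by
    intro x hx
    rcases List.mem_cons.mp hx with h | h
    · omega
    · exact mem_merge_one_le c ρ hρ x h
  | true :: c, [], _ => by simp [merge]
  | true :: c, r :: ρ, hρ => by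
    intro x hx
    rcases List.mem_cons.mp hx with h | h
    · omega
    · exact mem_merge_one_le c ρ (fun y hy => hρ y (List.mem_cons_of_mem _ hy)) x h

def CanonAux : ℕ → List ℕ → Prop
  | _, [] => True
  | M, x :: l => 1 ≤ x ∧ x ≤ M + 1 ∧ CanonAux (max M x) l

lemma canonAux_iff : ∀ (π : List ℕ) (M : ℕ), CanonAux M π ↔
    ∀ i (h : i < π.length), 1 ≤ π.get ⟨i, h⟩ ∧
      π.get ⟨i, h⟩ ≤ max M ((π.take i).foldr max 0) + 1
  | [], M => by simp [CanonAux]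
  | x :: l, M => by
    constructor
    · rintro ⟨h1, h2, h3⟩ i hi
      match i with
      | 0 => simpa using ⟨h1, by simpa using h2⟩
      | (j+1) =>
        have := (canonAux_iff l (max M x)).mp h3 j (by simpa using hi)
        simp only [List.get_cons_succ, List.take_succ_cons, List.foldr_cons] at this ⊢
        refine ⟨this.1, ?_⟩
        calc l.get ⟨j, _⟩ ≤ max (max M x) ((l.take j).foldr max 0) + 1 := this.2
        _ = max M (max x ((l.take j).foldr max 0)) + 1 := by rw [max_assoc]
    · intro h
      refine ⟨(h 0 (by simp)).1, by simpa using (h 0 (by simp)).2, ?_⟩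
      rw [canonAux_iff l (max M x)]
      intro j hj
      have := h (j+1) (by simpa using hj)
      simp only [List.get_cons_succ, List.take_succ_cons, List.foldr_cons] at this
      refine ⟨this.1, ?_⟩
      calc l.get ⟨j, _⟩ ≤ max M (max x ((l.take j).foldr max 0)) + 1 := this.2
      _ = max (max M x) ((l.take j).foldr max 0) + 1 := by rw [max_assoc]

lemma isCanonicalSeq_iff_canonAux (π : List ℕ) : IsCanonicalSeq π ↔ CanonAux 0 π := by
  rw [canonAux_iff]
  unfold IsCanonicalSeq
  simp

lemma canonAux_merge : ∀ (c : List Bool) (ρ : List ℕ) (M : ℕ), c.count true = ρ.length →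
    (∀ r ∈ ρ, 1 ≤ r) → (CanonAux (M + 1) (merge c ρ) ↔ CanonAux M ρ)
  | [], ρ, M, h, _ => by
    simp [List.count_cons] at h
    simp [merge, List.length_eq_zero_iff.mp h.symm, CanonAux]
  | false :: c, ρ, M, h, hρ => by
    have ih := canonAux_merge c ρ M (by simpa [List.count_cons] using h) hρ
    simp only [merge, CanonAux]
    rw [show max (M+1) 1 = M + 1 by omega]
    simpa using ih
  | true :: c, [], M, h, _ => by simp [List.count_cons] at h
  | true :: c, r :: ρ, M, h, hρ => by
    have hr : 1 ≤ r := hρ r (List.mem_cons_self)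
    have ih := canonAux_merge c ρ (max M r) (by simpa [List.count_cons] using h)
      (fun y hy => hρ y (List.mem_cons_of_mem _ hy))
    simp only [merge, CanonAux]
    rw [show max (M+1) (r+1) = max M r + 1 by omega]
    rw [ih]
    constructor
    · rintro ⟨-, h2, h3⟩; exact ⟨hr, by omega, h3⟩
    · rintro ⟨-, h2, h3⟩; exact ⟨by omega, by omega, h3⟩

lemma canonical_one_le {π : List ℕ} (h : IsCanonicalSeq π) : ∀ x ∈ π, 1 ≤ x := by
  intro x hx
  obtain ⟨i, hi, rfl⟩ := List.mem_iff_get.mp hx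
  exact (h i.1 i.2).1

lemma canonAux_bound : ∀ (π : List ℕ) (M : ℕ), CanonAux M π → ∀ x ∈ π, x ≤ M + π.length
  | [], M, _ => by simp
  | x :: l, M, ⟨h1, h2, h3⟩ => by
    intro y hy
    rcases List.mem_cons.mp hy with h | h
    · simp only [List.length_cons]; omega
    · have := canonAux_bound l (max M x) h3 y h
      simp only [List.length_cons]
      omega

lemma canonical_le_length {π : List ℕ} (h : IsCanonicalSeq π) : ∀ x ∈ π, x ≤ π.length := by
  have := canonAux_bound π 0 ((isCanonicalSeq_iff_canonAux π).mp h)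
  simpa using this

lemma canonical_merge_iff (c : List Bool) (ρ : List ℕ) (h : c.count true = ρ.length)
    (hρ : ∀ r ∈ ρ, 1 ≤ r) :
    IsCanonicalSeq (merge (false :: c) ρ) ↔ IsCanonicalSeq ρ := by
  rw [isCanonicalSeq_iff_canonAux, isCanonicalSeq_iff_canonAux]
  show CanonAux 0 (1 :: merge c ρ) ↔ _
  simp only [CanonAux]
  rw [show max 0 1 = 0 + 1 from rfl, canonAux_merge c ρ 0 (by simpa [List.count_cons] using h) hρ]
  simp

lemma strip_one_le (π : List ℕ) : ∀ x ∈ strip π, 1 ≤ x := by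
  intro x hx
  simp only [strip, List.mem_map, List.mem_filter] at hx
  obtain ⟨y, ⟨-, hy⟩, rfl⟩ := hx
  have : 1 < y := of_decide_eq_true hy
  omega

end S3

namespace S3

def Iso (l σ : List ℕ) : Prop :=
  l.length = σ.length ∧ ∀ i j, i < l.length → j < l.length →
    (σ.getD i 0 < σ.getD j 0 ↔ l.getD i 0 < l.getD j 0)

lemma containsPat_iff (π σ : List ℕ) :
    ContainsPat π σ ↔ ∃ l, l.Sublist π ∧ Iso l σ := by
  constructor
  · rintro ⟨f, hm, hiso⟩
    refine ⟨(List.finRange σ.length).map (fun i => π.get (f i)), ?_, ?_, ?_⟩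
    · rw [List.sublist_iff_exists_fin_orderEmbedding_get_eq]
      have hlen : ((List.finRange σ.length).map (fun i => π.get (f i))).length = σ.length := by
        simp
      refine ⟨(Fin.castOrderIso hlen).toOrderEmbedding.trans
        (OrderEmbedding.ofStrictMono f hm), ?_⟩
      intro ix
      simp only [List.get_eq_getElem, List.getElem_map, List.getElem_finRange]
      rfl
    · simp
    · intro i j hi hj
      simp only [List.length_map, List.length_finRange] at hi hj
      rw [List.getD_eq_getElem _ _ (by simpa using hi), List.getD_eq_getElem _ _ (by simpa using hj),
        List.getD_eq_getElem _ _ (by simpa using hi), List.getD_eq_getElem _ _ (by simpa using hj)]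
      have := hiso ⟨i, hi⟩ ⟨j, hj⟩
      simpa [List.get_eq_getElem, List.getElem_map] using this
  · rintro ⟨l, hsub, hlen, hiso⟩
    rw [List.sublist_iff_exists_fin_orderEmbedding_get_eq] at hsub
    obtain ⟨f, hf⟩ := hsub
    refine ⟨fun i => f (Fin.cast hlen.symm i), ?_, ?_⟩
    · intro i j hij
      exact f.strictMono (show (⟨i.1, _⟩ : Fin l.length) < ⟨j.1, _⟩ from hij)
    · intro i j
      rw [← hf, ← hf]
      have := hiso i.1 j.1 (by omega) (by omega)
      rw [List.getD_eq_getElem _ _ (by omega : (i:ℕ) < σ.length),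
        List.getD_eq_getElem _ _ (by omega : (j:ℕ) < σ.length),
        List.getD_eq_getElem _ _ (by omega : (i:ℕ) < l.length),
        List.getD_eq_getElem _ _ (by omega : (j:ℕ) < l.length)] at this
      simpa [List.get_eq_getElem] using this

lemma getD_map_succ (l : List ℕ) (i : ℕ) (h : i < l.length) :
    (l.map (· + 1)).getD i 0 = l.getD i 0 + 1 := by
  rw [List.getD_eq_getElem _ _ (by simpa using h), List.getD_eq_getElem _ _ h, List.getElem_map]

lemma contains_merge_iff (c : List Bool) (ρ τ : List ℕ)
    (hcnt : c.count true = ρ.length) (hρ : ∀ r ∈ ρ, 1 ≤ r) (hτ : ∀ t ∈ τ, 1 ≤ t) :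
    ContainsPat (merge (false :: c) ρ) (1 :: τ.map (· + 1)) ↔ ContainsPat ρ τ := by
  have hcnt' : (false :: c).count true = ρ.length := by simpa [List.count_cons] using hcnt
  rw [containsPat_iff, containsPat_iff]
  constructor
  · rintro ⟨l, hsub, hlen, hiso⟩
    rcases l with _ | ⟨a, l''⟩
    · simp at hlen
    · have hlen'' : l''.length = τ.length := by simpa using hlen
      have ha : 1 ≤ a :=
        mem_merge_one_le (false :: c) ρ hρ a (hsub.subset (List.mem_cons_self))
      have hgt : ∀ j, j < l''.length → 1 < l''.getD j 0 := by
        intro j hj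
        have h2 := hiso 0 (j + 1) (by simp) (by simp; omega)
        rw [List.getD_cons_zero, List.getD_cons_zero, List.getD_cons_succ,
          List.getD_cons_succ] at h2
        have hτj : 1 < (τ.map (· + 1)).getD j 0 := by
          have h6 : 1 ≤ τ.getD j 0 := by
            rw [List.getD_eq_getElem _ _ (show j < τ.length by omega)]
            exact hτ _ (List.getElem_mem _)
          rw [getD_map_succ τ j (by omega)]
          omega
        have := h2.mp hτj
        omega
      have hl2 : ∀ x ∈ l'', decide (1 < x) = true := by
        intro x hx
        obtain ⟨j, hj, rfl⟩ := List.mem_iff_getElem.mp hx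
        have := hgt j hj
        rw [List.getD_eq_getElem _ _ hj] at this
        exact decide_eq_true this
      have hsub'' : l''.Sublist (merge (false :: c) ρ) :=
        (List.sublist_cons_self a l'').trans hsub
      have hsubf : l''.Sublist (ρ.map (· + 1)) := by
        have h3 := hsub''.filter (fun x => decide (1 < x))
        rwa [List.filter_eq_self.mpr hl2, filter_merge (false :: c) ρ hcnt' hρ] at h3
      obtain ⟨l₀, hl₀, rfl⟩ := List.sublist_map_iff.mp hsubf
      have hlen₀ : l₀.length = τ.length := by simpa using hlen''
      refine ⟨l₀, hl₀, hlen₀, ?_⟩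
      intro i j hi hj
      have h4 := hiso (i + 1) (j + 1) (by simp; omega) (by simp; omega)
      rw [List.getD_cons_succ, List.getD_cons_succ, List.getD_cons_succ,
        List.getD_cons_succ, getD_map_succ τ i (by omega), getD_map_succ τ j (by omega),
        getD_map_succ l₀ i hi, getD_map_succ l₀ j hj] at h4
      constructor
      · intro h5; have := h4.mp (by omega); omega
      · intro h5; have := h4.mpr (by omega); omega
  · rintro ⟨l, hsub, hlen, hiso⟩
    refine ⟨1 :: l.map (· + 1), ?_, ?_, ?_⟩
    · exact ((hsub.map (· + 1)).trans (map_succ_sublist c ρ hcnt)).cons₂ 1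
    · simp [hlen]
    · have hentl : ∀ idx, idx < l.length → 1 ≤ l.getD idx 0 := by
        intro idx hidx
        rw [List.getD_eq_getElem _ _ hidx]
        exact hρ _ (hsub.subset (List.getElem_mem _))
      have hentτ : ∀ idx, idx < τ.length → 1 ≤ τ.getD idx 0 := by
        intro idx hidx
        rw [List.getD_eq_getElem _ _ hidx]
        exact hτ _ (List.getElem_mem _)
      intro i j hi hj
      simp only [List.length_cons, List.length_map] at hi hj
      match i, j with
      | 0, 0 => simp
      | 0, (j+1) =>
        rw [List.getD_cons_zero, List.getD_cons_zero, List.getD_cons_succ, List.getD_cons_succ,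
          getD_map_succ τ j (by omega), getD_map_succ l j (by omega)]
        have := hentτ j (by omega)
        have := hentl j (by omega)
        constructor <;> (intro; omega)
      | (i+1), 0 =>
        rw [List.getD_cons_zero, List.getD_cons_zero, List.getD_cons_succ, List.getD_cons_succ,
          getD_map_succ τ i (by omega), getD_map_succ l i (by omega)]
        constructor <;> (intro; omega)
      | (i+1), (j+1) =>
        rw [List.getD_cons_succ, List.getD_cons_succ, List.getD_cons_succ, List.getD_cons_succ,
          getD_map_succ τ i (by omega), getD_map_succ τ j (by omega),
          getD_map_succ l i (by omega), getD_map_succ l j (by omega)]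
        have h4 := hiso i j (by omega) (by omega)
        constructor
        · intro h5; have := h4.mp (by omega); omega
        · intro h5; have := h4.mpr (by omega); omega

lemma avoids_merge_iff (c : List Bool) (ρ τ : List ℕ)
    (hcnt : c.count true = ρ.length) (hρ : ∀ r ∈ ρ, 1 ≤ r) (hτ : ∀ t ∈ τ, 1 ≤ t) :
    AvoidsPat (merge (false :: c) ρ) (1 :: τ.map (· + 1)) ↔ AvoidsPat ρ τ :=
  not_congr (contains_merge_iff c ρ τ hcnt hρ hτ)

end S3

namespace S3

def Bset (m : ℕ) (σ : List ℕ) : Set (List ℕ) :=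
  {π | π.length = m ∧ IsCanonicalSeq π ∧ AvoidsPat π σ}

lemma pAvoid_eq (n : ℕ) (σ : List ℕ) : pAvoid n σ = (Bset n σ).ncard := rfl

lemma finite_B (m : ℕ) (σ : List ℕ) : (Bset m σ).Finite := by
  apply Set.Finite.subset
    (Set.finite_range (fun v : List.Vector (Fin (m + 1)) m => v.toList.map Fin.val))
  rintro π ⟨hlen, hcan, -⟩
  refine ⟨⟨π.map (fun x => (⟨min x m, by omega⟩ : Fin (m + 1))), by simp [hlen]⟩, ?_⟩
  show (π.map _).map _ = π
  rw [List.map_map]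
  have : ∀ x ∈ π, (Fin.val ∘ fun x => (⟨min x m, by omega⟩ : Fin (m + 1))) x = id x := by
    intro x hx
    have := canonical_le_length hcan x hx
    simp only [Function.comp_apply, id_eq]
    rw [hlen] at this
    omega
  rw [List.map_congr_left this, List.map_id]

lemma B_decomp (m : ℕ) (τ : List ℕ) (hτ : ∀ t ∈ τ, 1 ≤ t) :
    Bset (m + 1) (1 :: τ.map (· + 1)) =
      ⋃ v : List.Vector Bool m,
        (fun ρ => merge (false :: v.toList) ρ) '' Bset (v.toList.count true) τ := by
  ext π
  simp only [Set.mem_iUnion, Set.mem_image]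
  constructor
  · rintro ⟨hlen, hcan, hav⟩
    have hone : ∀ x ∈ π, 1 ≤ x := canonical_one_le hcan
    have hmerge : merge (mask π) (strip π) = π := merge_mask_strip π hone
    rcases π with _ | ⟨x, rest⟩
    · simp at hlen
    · have hx : x = 1 := by
        have h0 : 1 ≤ x ∧ x ≤ 1 := hcan 0 (by simp)
        omega
      have hmask : mask (x :: rest) = false :: mask rest := by simp [mask, hx]
      have hrlen : (mask rest).length = m := by
        simp only [mask, List.length_map]
        have := hlen
        simp only [List.length_cons] at this
        omega
      refine ⟨⟨mask rest, hrlen⟩, strip (x :: rest), ?_, ?_⟩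
      · have hcnt : (mask rest).count true = (strip (x :: rest)).length := by
          have := count_mask (x :: rest)
          rwa [hmask, List.count_cons, if_neg (by simp)] at this
        have hsone := strip_one_le (x :: rest)
        rw [hmask] at hmerge
        refine ⟨hcnt.symm, ?_, ?_⟩
        · rw [← canonical_merge_iff (mask rest) _ hcnt hsone, hmerge]; exact hcan
        · rw [← avoids_merge_iff (mask rest) _ τ hcnt hsone hτ, hmerge]; exact hav
      · show merge (false :: mask rest) _ = _
        rw [← hmask]; exact hmerge
  · rintro ⟨v, ρ, ⟨hρlen, hρcan, hρav⟩, rfl⟩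
    have hcnt : v.toList.count true = ρ.length := hρlen.symm
    have hcnt' : (false :: v.toList).count true = ρ.length := by
      simpa [List.count_cons] using hcnt
    have hone : ∀ r ∈ ρ, 1 ≤ r := canonical_one_le hρcan
    refine ⟨?_, ?_, ?_⟩
    · rw [length_merge _ _ hcnt']
      simp [v.2]
    · exact (canonical_merge_iff v.toList ρ hcnt hone).mpr hρcan
    · exact (avoids_merge_iff v.toList ρ τ hcnt hone hτ).mpr hρav

lemma pAvoid_succ (m : ℕ) (τ : List ℕ) (hτ : ∀ t ∈ τ, 1 ≤ t) :
    pAvoid (m + 1) (1 :: τ.map (· + 1)) =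
      ∑ v : List.Vector Bool m, pAvoid (v.toList.count true) τ := by
  classical
  have hmaskdet : ∀ (v : List.Vector Bool m) π, π ∈
      (fun ρ => merge (false :: v.toList) ρ) '' Bset (v.toList.count true) τ →
      mask π = false :: v.toList := by
    rintro v π ⟨ρ, ⟨hρlen, hρcan, -⟩, rfl⟩
    exact mask_merge _ _ (by simpa [List.count_cons] using hρlen.symm) (canonical_one_le hρcan)
  set F : List.Vector Bool m → Finset (List ℕ) := fun v =>
    ((finite_B (v.toList.count true) τ).image (fun ρ => merge (false :: v.toList) ρ)).toFinset
    with hF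
  have hFmem : ∀ v π, π ∈ F v ↔ π ∈
      (fun ρ => merge (false :: v.toList) ρ) '' Bset (v.toList.count true) τ := by
    intro v π
    simp [hF, Set.Finite.mem_toFinset]
  rw [pAvoid_eq, B_decomp m τ hτ]
  have hset : (⋃ v : List.Vector Bool m,
      (fun ρ => merge (false :: v.toList) ρ) '' Bset (v.toList.count true) τ) =
      ↑(Finset.univ.biUnion F) := by
    ext π
    simp only [Set.mem_iUnion, Finset.coe_biUnion, Finset.mem_coe, Finset.mem_biUnion,
      Finset.mem_univ, true_and, Set.mem_iUnion]
    constructor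
    · rintro ⟨v, hv⟩; exact ⟨v, trivial, (hFmem v π).mpr hv⟩
    · rintro ⟨v, -, hv⟩; exact ⟨v, (hFmem v π).mp hv⟩
  rw [hset, Set.ncard_coe_finset]
  rw [Finset.card_biUnion]
  · apply Finset.sum_congr rfl
    intro v _
    have : (F v).card = ((fun ρ => merge (false :: v.toList) ρ) ''
        Bset (v.toList.count true) τ).ncard := by
      rw [Set.ncard_eq_toFinset_card _ ((finite_B (v.toList.count true) τ).image _)]
    rw [this, Set.ncard_image_of_injOn, pAvoid_eq]
    intro ρ₁ h₁ ρ₂ h₂ heq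
    have e₁ : strip (merge (false :: v.toList) ρ₁) = ρ₁ :=
      strip_merge _ _ (by simpa [List.count_cons] using h₁.1.symm) (canonical_one_le h₁.2.1)
    have e₂ : strip (merge (false :: v.toList) ρ₂) = ρ₂ :=
      strip_merge _ _ (by simpa [List.count_cons] using h₂.1.symm) (canonical_one_le h₂.2.1)
    have heq' : merge (false :: v.toList) ρ₁ = merge (false :: v.toList) ρ₂ := heq
    rw [← e₁, ← e₂, heq']
  · intro v _ w _ hvw
    show Disjoint (F v) (F w)
    rw [Finset.disjoint_left]
    intro π hπv hπw
    apply hvw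
    have h1 := hmaskdet v π ((hFmem v π).mp hπv)
    have h2 := hmaskdet w π ((hFmem w π).mp hπw)
    apply List.Vector.toList_injective
    rw [h1] at h2
    exact (List.cons.injEq _ _ _ _ ▸ h2).2

lemma pAvoid_zero_cons (a : ℕ) (σ : List ℕ) : pAvoid 0 (a :: σ) = 1 := by
  have : {π : List ℕ | π.length = 0 ∧ IsCanonicalSeq π ∧ AvoidsPat π (a :: σ)} = {[]} := by
    ext π
    constructor
    · rintro ⟨hlen, -, -⟩; exact List.length_eq_zero_iff.mp hlen
    · rintro rfl
      refine ⟨rfl, ?_, ?_⟩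
      · intro i h; simp at h
      · rintro ⟨f, -, -⟩
        exact absurd (f ⟨0, by simp⟩).2 (by simp)
  rw [pAvoid, this, Set.ncard_singleton]

lemma forward (τ τ' : List ℕ) (hτ : ∀ t ∈ τ, 1 ≤ t) (hτ' : ∀ t ∈ τ', 1 ≤ t)
    (h : PatEquiv τ τ') : PatEquiv (1 :: τ.map (· + 1)) (1 :: τ'.map (· + 1)) := by
  intro n
  cases n with
  | zero => rw [pAvoid_zero_cons, pAvoid_zero_cons]
  | succ m =>
    rw [pAvoid_succ m τ hτ, pAvoid_succ m τ' hτ']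
    exact Finset.sum_congr rfl (fun v _ => h _)

lemma backward (τ τ' : List ℕ) (hτ : ∀ t ∈ τ, 1 ≤ t) (hτ' : ∀ t ∈ τ', 1 ≤ t)
    (h : PatEquiv (1 :: τ.map (· + 1)) (1 :: τ'.map (· + 1))) : PatEquiv τ τ' := by
  intro m
  induction m using Nat.strong_induction_on with
  | _ m ih =>
    classical
    have H := h (m + 1)
    rw [pAvoid_succ m τ hτ, pAvoid_succ m τ' hτ'] at H
    set allT : List.Vector Bool m := ⟨List.replicate m true, by simp⟩ with hallT
    have hcntall : allT.toList.count true = m := by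
      show (List.replicate m true).count true = m
      simp [List.count_replicate]
    have hlt : ∀ v : List.Vector Bool m, v ≠ allT → v.toList.count true < m := by
      intro v hv
      have h1 : v.toList.count true ≤ m := by
        have : v.toList.count true ≤ v.toList.length := List.count_le_length
        rwa [List.Vector.toList_length] at this
      rcases lt_or_eq_of_le h1 with h2 | h2
      · exact h2
      · exfalso
        apply hv
        apply List.Vector.toList_injective
        show v.toList = List.replicate m true
        rw [List.eq_replicate_iff]
        refine ⟨List.Vector.toList_length v, ?_⟩
        have := List.count_eq_length.mp (by rw [h2, List.Vector.toList_length])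
        intro b hb
        exact (this b hb).symm
    rw [← Finset.add_sum_erase _ _ (Finset.mem_univ allT),
      ← Finset.add_sum_erase _ _ (Finset.mem_univ allT)] at H
    have hrest : ∑ v ∈ Finset.univ.erase allT, pAvoid (v.toList.count true) τ =
        ∑ v ∈ Finset.univ.erase allT, pAvoid (v.toList.count true) τ' :=
      Finset.sum_congr rfl (fun v hv => ih _ (hlt v (Finset.ne_of_mem_erase hv)))
    rw [hcntall, hrest] at H
    omega

lemma iota_succ_eq (k : ℕ) (τ : List ℕ) :
    iota (k + 1) ++ τ.map (· + (k + 1)) = 1 :: (iota k ++ τ.map (· + k)).map (· + 1) := by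
  have h1 : iota (k + 1) = 1 :: (iota k).map (· + 1) := by
    unfold iota
    rw [List.range_succ_eq_map]
    simp only [List.map_cons, List.map_map]
  have h2 : τ.map (· + (k + 1)) = (τ.map (· + k)).map (· + 1) := by
    rw [List.map_map]
    apply List.map_congr_left
    intro x _
    simp only [Function.comp_apply]
    omega
  rw [h1, h2, List.map_append]
  rfl

lemma iota_append_one_le (k : ℕ) (hk : 1 ≤ k) (τ : List ℕ) :
    ∀ t ∈ iota k ++ τ.map (· + k), 1 ≤ t := by
  intro t ht
  rcases List.mem_append.mp ht with h | h
  · obtain ⟨i, -, rfl⟩ := List.mem_map.mp h; omega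
  · obtain ⟨x, -, rfl⟩ := List.mem_map.mp h; omega

end S3

/-- For canonical sequences τ, τ': τ ∼ τ' iff
1(τ+1) ∼ 1(τ'+1); moreover if τ ∼ τ' then for every k ≥ 1 the patterns
1…k(τ+k) and 1…k(τ'+k) are equivalent. -/
theorem statement3 (τ τ' : List ℕ) (hτ : IsCanonicalSeq τ) (hτ' : IsCanonicalSeq τ') :
    (PatEquiv τ τ' ↔ PatEquiv (1 :: τ.map (· + 1)) (1 :: τ'.map (· + 1))) ∧
    (PatEquiv τ τ' → ∀ k : ℕ, 1 ≤ k →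
      PatEquiv (iota k ++ τ.map (· + k)) (iota k ++ τ'.map (· + k))) := by
  have hτ1 : ∀ t ∈ τ, 1 ≤ t := S3.canonical_one_le hτ
  have hτ'1 : ∀ t ∈ τ', 1 ≤ t := S3.canonical_one_le hτ'
  constructor
  · exact ⟨S3.forward τ τ' hτ1 hτ'1, S3.backward τ τ' hτ1 hτ'1⟩
  · intro h k hk
    induction k, hk using Nat.le_induction with
    | base =>
      have e1 : iota 1 ++ τ.map (· + 1) = 1 :: τ.map (· + 1) := rfl
      have e2 : iota 1 ++ τ'.map (· + 1) = 1 :: τ'.map (· + 1) := rfl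
      rw [e1, e2]
      exact S3.forward τ τ' hτ1 hτ'1 h
    | succ k hk ihk =>
      rw [S3.iota_succ_eq k τ, S3.iota_succ_eq k τ']
      exact S3.forward _ _ (S3.iota_append_one_le k hk τ) (S3.iota_append_one_le k hk τ') ihk
end

section
/- Let k ≥ 2, let S be a (possibly empty) sequence over the alphabet {1,…,k−1}, and let τ be the canonical sequence of a partition. Then the pattern 12⋯k(τ+k)S is equivalent to the pattern 12⋯k(τ+k)(S+1), and the pattern 12⋯kS(τ+k) is equivalent to the pattern 12⋯k(S+1)(τ+k). -/
namespace S4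
attribute [local instance] Classical.propDecidable


/-- value of a list at an index, default 0 -/
abbrev gd (l : List ℕ) (i : ℕ) : ℕ := l.getD i 0

/-- maximum of the first `i` entries -/
def pmax (π : List ℕ) (i : ℕ) : ℕ := (π.take i).foldr max 0

/-- maximum entry -/
def maxv (π : List ℕ) : ℕ := π.foldr max 0

/-- canonical sequence, `gd` form -/
def Canon (π : List ℕ) : Prop :=
  ∀ i, i < π.length → 1 ≤ gd π i ∧ gd π i ≤ pmax π i + 1

lemma gd_eq_get (l : List ℕ) (i : ℕ) (h : i < l.length) : gd l i = l.get ⟨i, h⟩ := by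
  simp [gd, List.getD_eq_getElem?_getD, List.getElem?_eq_getElem h]

lemma foldr_max_eq (l : List ℕ) (c : ℕ) : l.foldr max c = max (l.foldr max 0) c := by
  induction l with
  | nil => simp
  | cons a t ih => simp [List.foldr_cons, ih, max_assoc]

lemma le_foldr_max {a : ℕ} : ∀ {l : List ℕ}, a ∈ l → a ≤ l.foldr max 0 := by
  intro l
  induction l with
  | nil => intro h; simp at h
  | cons b t ih =>
    intro h
    rcases List.mem_cons.mp h with h | h
    · subst h; simp
    · exact le_trans (ih h) (by simp)

lemma pmax_succ (π : List ℕ) (i : ℕ) (h : i < π.length) :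
    pmax π (i + 1) = max (gd π i) (pmax π i) := by
  unfold pmax
  rw [List.take_succ, List.getElem?_eq_getElem h]
  rw [List.foldr_append]
  show (π.take i).foldr max (max (π.get ⟨i,h⟩) 0) = _
  rw [foldr_max_eq, gd_eq_get π i h, Nat.max_comm]
  simp

lemma pmax_succ_ge (π : List ℕ) (i : ℕ) : π.length ≤ i → pmax π (i+1) = pmax π i := by
  intro h; unfold pmax
  rw [List.take_succ, List.getElem?_eq_none (by simpa using h)]
  simp

lemma pmax_mono (π : List ℕ) : Monotone (pmax π) := by
  have h : ∀ i, pmax π i ≤ pmax π (i+1) := by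
    intro i
    by_cases h : i < π.length
    · rw [pmax_succ π i h]; exact le_max_right _ _
    · rw [pmax_succ_ge π i (le_of_not_gt h)]
  exact monotone_nat_of_le_succ h

lemma gd_le_pmax {π : List ℕ} {p q : ℕ} (h : p < q) (hp : p < π.length) :
    gd π p ≤ pmax π q := by
  have : gd π p ≤ pmax π (p+1) := by rw [pmax_succ π p hp]; exact le_max_left _ _
  exact le_trans this (pmax_mono π h)

lemma maxv_eq_pmax_len (π : List ℕ) : maxv π = pmax π π.length := by
  simp [maxv, pmax]

lemma gd_le_maxv {π : List ℕ} {p : ℕ} (hp : p < π.length) : gd π p ≤ maxv π := by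
  rw [maxv_eq_pmax_len]
  rcases Nat.lt_or_ge (p+1) π.length with h | h
  · exact le_trans (gd_le_pmax (Nat.lt_succ_self p) hp) (pmax_mono π (le_of_lt h))
  · have := gd_le_pmax (Nat.lt_succ_self p) hp
    calc gd π p ≤ pmax π (p+1) := this
    _ ≤ pmax π π.length := pmax_mono π (by omega)

lemma canon_iff (π : List ℕ) : IsCanonicalSeq π ↔ Canon π := by
  constructor
  · intro h i hi
    have := h i hi
    rw [gd_eq_get π i hi]
    exact this
  · intro h i hi
    have := h i hi
    rw [gd_eq_get π i hi] at this
    exact this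

/-- every value `1 ≤ v ≤ pmax π i` occurs before `i` -/
lemma occurs_before {π : List ℕ} (hπ : Canon π) :
    ∀ i, i ≤ π.length → ∀ v, 1 ≤ v → v ≤ pmax π i → ∃ p, p < i ∧ p < π.length ∧ gd π p = v := by
  intro i
  induction i with
  | zero => intro _ v hv1 hv2; simp [pmax] at hv2; omega
  | succ i ih =>
    intro hi v hv1 hv2
    have hilen : i < π.length := by omega
    rw [pmax_succ π i hilen] at hv2
    rcases Nat.lt_or_ge (pmax π i) v with hlt | hge
    · -- v must involve gd π i
      have h1 : v ≤ gd π i := by omega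
      have h2 : gd π i ≤ pmax π i + 1 := (hπ i hilen).2
      have h3 : v = gd π i ∨ v ≤ pmax π i := by omega
      rcases h3 with h3 | h3
      · exact ⟨i, Nat.lt_succ_self i, hilen, h3.symm⟩
      · omega
    · obtain ⟨p, hp1, hp2, hp3⟩ := ih (by omega) v hv1 hge
      exact ⟨p, by omega, hp2, hp3⟩

lemma occurs {π : List ℕ} (hπ : Canon π) {v : ℕ} (hv1 : 1 ≤ v) (hv2 : v ≤ maxv π) :
    ∃ p, p < π.length ∧ gd π p = v := by
  rw [maxv_eq_pmax_len] at hv2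
  obtain ⟨p, _, hp2, hp3⟩ := occurs_before hπ π.length le_rfl v hv1 hv2
  exact ⟨p, hp2, hp3⟩

/-- first occurrence -/
noncomputable def fo (π : List ℕ) (v : ℕ) : ℕ :=
  if h : ∃ p, p < π.length ∧ gd π p = v then Nat.find h else 0

lemma fo_spec {π : List ℕ} {v : ℕ} (h : ∃ p, p < π.length ∧ gd π p = v) :
    fo π v < π.length ∧ gd π (fo π v) = v := by
  rw [fo, dif_pos h]; exact Nat.find_spec h

lemma fo_min {π : List ℕ} {v : ℕ} (h : ∃ p, p < π.length ∧ gd π p = v) :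
    ∀ p, p < fo π v → gd π p ≠ v ∨ ¬ p < π.length := by
  intro p hp
  rw [fo, dif_pos h] at hp
  have := Nat.find_min h hp
  tauto

/-- at the first occurrence of `v`, the prefix max is exactly `v - 1` -/
lemma pmax_fo {π : List ℕ} (hπ : Canon π) {v : ℕ} (hv1 : 1 ≤ v) (hv2 : v ≤ maxv π) :
    pmax π (fo π v) + 1 = v := by
  have hocc := occurs hπ hv1 hv2
  obtain ⟨hlt, hval⟩ := fo_spec hocc
  have h2 : gd π (fo π v) ≤ pmax π (fo π v) + 1 := (hπ _ hlt).2
  have h3 : ¬ (v ≤ pmax π (fo π v)) := by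
    intro hle
    obtain ⟨p, hp1, hp2, hp3⟩ := occurs_before hπ (fo π v) (le_of_lt hlt) v hv1 hle
    rcases fo_min hocc p hp1 with h | h
    · exact h hp3
    · exact h hp2
  omega

/-- first occurrences are strictly increasing in the value -/
lemma fo_mono {π : List ℕ} (hπ : Canon π) {u v : ℕ} (hu : 1 ≤ u) (huv : u < v)
    (hv : v ≤ maxv π) : fo π u < fo π v := by
  have hocc := occurs hπ (by omega) hv
  have h1 : u ≤ pmax π (fo π v) := by have := pmax_fo hπ (by omega : 1 ≤ v) hv; omega
  obtain ⟨p, hp1, hp2, hp3⟩ := occurs_before hπ (fo π v) (le_of_lt (fo_spec hocc).1) u hu h1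
  have hu_occ : ∃ q, q < π.length ∧ gd π q = u := ⟨p, hp2, hp3⟩
  have : fo π u ≤ p := by
    by_contra hcon
    rcases fo_min hu_occ p (by omega) with h | h
    · exact h hp3
    · exact h hp2
  omega

/-- any occurrence of a value `> v` is after `fo π v` -/
lemma fo_lt_of_val_gt {π : List ℕ} (hπ : Canon π) {v q : ℕ} (hv : 1 ≤ v)
    (hq : q < π.length) (hval : v < gd π q) : fo π v < q := by
  have hw : gd π q ≤ maxv π := gd_le_maxv hq
  have hwocc : ∃ p, p < π.length ∧ gd π p = gd π q := ⟨q, hq, rfl⟩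
  have h1 : fo π v < fo π (gd π q) := fo_mono hπ hv hval hw
  have h2 : fo π (gd π q) ≤ q := by
    by_contra hcon
    rcases fo_min hwocc q (by omega) with h | h
    · exact h rfl
    · exact h hq
  omega

/-- `v ≤ pmax π q` gives an occurrence of v before q, hence `fo π v < q` -/
lemma fo_lt_of_le_pmax {π : List ℕ} (hπ : Canon π) {v q : ℕ} (hv : 1 ≤ v)
    (hq : q ≤ π.length) (hple : v ≤ pmax π q) : fo π v < q := by
  obtain ⟨p, hp1, hp2, hp3⟩ := occurs_before hπ q hq v hv hple
  have : fo π v ≤ p := by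
    by_contra hcon
    rcases fo_min ⟨p, hp2, hp3⟩ p (by omega) with h | h
    · exact h hp3
    · exact h hp2
  omega

lemma pmax_le_maxv (π : List ℕ) (i : ℕ) : pmax π i ≤ maxv π := by
  rcases le_or_gt i π.length with h | h
  · rw [maxv_eq_pmax_len]; exact pmax_mono π h
  · rw [maxv_eq_pmax_len]
    have : pmax π i = pmax π π.length := by
      unfold pmax; rw [List.take_of_length_le (le_of_lt h), List.take_length]
    omega





/-- containment with ℕ-valued index functions -/
def Cont (π σ : List ℕ) : Prop :=
  ∃ e : ℕ → ℕ, (∀ i j, i < j → j < σ.length → e i < e j) ∧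
    (∀ i, i < σ.length → e i < π.length) ∧
    (∀ i j, i < σ.length → j < σ.length → (gd σ i < gd σ j ↔ gd π (e i) < gd π (e j)))

lemma cont_iff (π σ : List ℕ) : ContainsPat π σ ↔ Cont π σ := by
  constructor
  · rintro ⟨f, hf1, hf2⟩
    refine ⟨fun i => if h : i < σ.length then (f ⟨i, h⟩ : ℕ) else 0, ?_, ?_, ?_⟩
    · intro i j hij hj
      dsimp only
      rw [dif_pos (hij.trans hj), dif_pos hj]
      exact hf1 (by exact hij)
    · intro i hi
      dsimp only
      rw [dif_pos hi]
      exact (f ⟨i, hi⟩).isLt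
    · intro i j hi hj
      dsimp only
      rw [dif_pos hi, dif_pos hj, gd_eq_get σ i hi, gd_eq_get σ j hj,
        gd_eq_get π _ (f ⟨i, hi⟩).isLt, gd_eq_get π _ (f ⟨j, hj⟩).isLt]
      simpa using hf2 ⟨i, hi⟩ ⟨j, hj⟩
  · rintro ⟨e, he1, he2, he3⟩
    refine ⟨fun i => ⟨e i, he2 i i.isLt⟩, ?_, ?_⟩
    · intro i j hij
      exact he1 i j (by exact hij) j.isLt
    · intro i j
      have := he3 i j i.isLt j.isLt
      rw [gd_eq_get σ i i.isLt, gd_eq_get σ j j.isLt,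
        gd_eq_get π _ (he2 i i.isLt), gd_eq_get π _ (he2 j j.isLt)] at this
      simpa using this

/-- embedding of `τ` into `π` with all values `> v` and indices satisfying `P` -/
def TEmb (τ π : List ℕ) (v : ℕ) (P : ℕ → Prop) : Prop :=
  ∃ g : ℕ → ℕ, (∀ x y, x < y → y < τ.length → g x < g y) ∧
    (∀ x, x < τ.length → g x < π.length ∧ P (g x) ∧ v < gd π (g x)) ∧
    (∀ x y, x < τ.length → y < τ.length → (gd τ x < gd τ y ↔ gd π (g x) < gd π (g y)))

lemma TEmb_mono {τ π : List ℕ} {v v' : ℕ} {P P' : ℕ → Prop}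
    (hv : v' ≤ v) (hP : ∀ x, P x → P' x) : TEmb τ π v P → TEmb τ π v' P' := by
  rintro ⟨g, h1, h2, h3⟩
  exact ⟨g, h1, fun x hx => ⟨(h2 x hx).1, hP _ (h2 x hx).2.1, lt_of_le_of_lt hv (h2 x hx).2.2⟩, h3⟩

variable (τ : List ℕ)

/-- τ embeds with values > v, indices < p -/
def A1 (π : List ℕ) (v p : ℕ) : Prop := TEmb τ π v (· < p)
/-- τ embeds with values > v, indices > p -/
def A2 (π : List ℕ) (v p : ℕ) : Prop := TEmb τ π v (p < ·)

lemma A1_mono_v {π : List ℕ} {v v' p : ℕ} (h : v' ≤ v) : A1 τ π v p → A1 τ π v' p :=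
  TEmb_mono h (fun _ hx => hx)

lemma A2_mono_v {π : List ℕ} {v v' p : ℕ} (h : v' ≤ v) : A2 τ π v p → A2 τ π v' p :=
  TEmb_mono h (fun _ hx => hx)

lemma A1_mono_p {π : List ℕ} {v p p' : ℕ} (h : p ≤ p') : A1 τ π v p → A1 τ π v p' :=
  TEmb_mono le_rfl (fun _ hx => lt_of_lt_of_le hx h)

lemma A2_mono_p {π : List ℕ} {v p p' : ℕ} (h : p' ≤ p) : A2 τ π v p → A2 τ π v p' :=
  TEmb_mono le_rfl (fun _ hx => lt_of_le_of_lt h hx)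

/-- threshold function: two = false gives A1-based, two = true gives A2-based -/
noncomputable def Vth (two : Bool) (π : List ℕ) (p : ℕ) : ℕ :=
  Nat.findGreatest (fun v => if two then A2 τ π v p else A1 τ π v p) (pmax π p)

lemma Vth_le (two : Bool) (π : List ℕ) (p : ℕ) : Vth τ two π p ≤ pmax π p :=
  Nat.findGreatest_le _

lemma le_Vth {two : Bool} {π : List ℕ} {v p : ℕ} (hv : v ≤ pmax π p)
    (hA : if two then A2 τ π v p else A1 τ π v p) : v ≤ Vth τ two π p :=
  Nat.le_findGreatest hv hA

lemma Vth_spec {two : Bool} {π : List ℕ} {p : ℕ} (h : 0 < Vth τ two π p) :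
    if two then A2 τ π (Vth τ two π p) p else A1 τ π (Vth τ two π p) p :=
  Nat.findGreatest_of_ne_zero rfl (Nat.pos_iff_ne_zero.mp h)

/-- if `1 ≤ v ≤ Vth` then the embedding property holds at `v` -/
lemma A_of_le_Vth {two : Bool} {π : List ℕ} {v p : ℕ} (h1 : 1 ≤ v)
    (h2 : v ≤ Vth τ two π p) : if two then A2 τ π v p else A1 τ π v p := by
  have hs := Vth_spec τ (two := two) (π := π) (p := p) (by omega)
  cases two with
  | false => simpa using A1_mono_v τ h2 (by simpa using hs)
  | true => simpa using A2_mono_v τ h2 (by simpa using hs)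

lemma Vth_congr {two : Bool} {π π' : List ℕ} {p : ℕ}
    (hpm : pmax π p = pmax π' p)
    (hA : ∀ v, 1 ≤ v → ((if two then A2 τ π v p else A1 τ π v p) ↔ (if two then A2 τ π' v p else A1 τ π' v p))) :
    Vth τ two π p = Vth τ two π' p := by
  apply le_antisymm
  · rcases Nat.eq_zero_or_pos (Vth τ two π p) with h0 | h0
    · omega
    · exact le_Vth τ (by rw [← hpm]; exact Vth_le τ two π p) ((hA _ h0).mp (Vth_spec τ h0))
  · rcases Nat.eq_zero_or_pos (Vth τ two π' p) with h0 | h0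
    · omega
    · exact le_Vth τ (by rw [hpm]; exact Vth_le τ two π' p) ((hA _ h0).mpr (Vth_spec τ h0))

lemma TEmb_of_nil {τ π : List ℕ} {v : ℕ} {P : ℕ → Prop} (h : τ.length = 0) :
    TEmb τ π v P :=
  ⟨fun _ => 0, by omega, by omega, by omega⟩

lemma list_ext_gd {l l' : List ℕ} (hlen : l.length = l'.length)
    (h : ∀ i, i < l.length → gd l i = gd l' i) : l = l' := by
  apply List.ext_get hlen
  intro i h1 h2
  rw [← gd_eq_get l i h1, ← gd_eq_get l' i h2]
  exact h i h1

/-- the bijection (upward direction) -/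
noncomputable def themap (two : Bool) (π : List ℕ) : List ℕ :=
  π.mapIdx (fun p x => if pmax π p < x then x
    else if x < Vth τ two π p then x+1
    else if x = Vth τ two π p then 1 else x)

/-- the bijection (downward direction) -/
noncomputable def theinv (two : Bool) (π : List ℕ) : List ℕ :=
  π.mapIdx (fun p x => if pmax π p < x then x
    else if 2 ≤ x ∧ x ≤ Vth τ two π p then x - 1
    else if x = 1 ∧ 1 ≤ Vth τ two π p then Vth τ two π p else x)

lemma length_themap (two : Bool) (π : List ℕ) : (themap τ two π).length = π.length :=
  List.length_mapIdx

lemma length_theinv (two : Bool) (π : List ℕ) : (theinv τ two π).length = π.length :=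
  List.length_mapIdx

lemma gd_themap (two : Bool) (π : List ℕ) {p : ℕ} (hp : p < π.length) :
    gd (themap τ two π) p = (if pmax π p < gd π p then gd π p
      else if gd π p < Vth τ two π p then gd π p + 1
      else if gd π p = Vth τ two π p then 1 else gd π p) := by
  have h' : p < (themap τ two π).length := by rw [length_themap]; exact hp
  rw [gd_eq_get _ p h']
  simp only [themap]
  rw [List.get_eq_getElem, List.getElem_mapIdx, show π[p] = π.get ⟨p, hp⟩ from rfl, ← gd_eq_get π p hp]

lemma gd_theinv (two : Bool) (π : List ℕ) {p : ℕ} (hp : p < π.length) :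
    gd (theinv τ two π) p = (if pmax π p < gd π p then gd π p
      else if 2 ≤ gd π p ∧ gd π p ≤ Vth τ two π p then gd π p - 1
      else if gd π p = 1 ∧ 1 ≤ Vth τ two π p then Vth τ two π p else gd π p) := by
  have h' : p < (theinv τ two π).length := by rw [length_theinv]; exact hp
  rw [gd_eq_get _ p h']
  simp only [theinv]
  rw [List.get_eq_getElem, List.getElem_mapIdx, show π[p] = π.get ⟨p, hp⟩ from rfl, ← gd_eq_get π p hp]

/-- values of the image stay in `[1, max (gd π p) (pmax π p)]`;
    together with equality in the new-max case this gives pmax preservation -/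
lemma pmax_themap {π : List ℕ} (hπ : Canon π) (two : Bool) :
    ∀ i, pmax (themap τ two π) i = pmax π i := by
  intro i
  induction i with
  | zero => simp [pmax]
  | succ i ih =>
    rcases Nat.lt_or_ge i π.length with hi | hi
    · have hi' : i < (themap τ two π).length := by rw [length_themap]; exact hi
      rw [pmax_succ _ i hi', pmax_succ _ i hi, ih, gd_themap τ two π hi]
      have hx1 : 1 ≤ gd π i := (hπ i hi).1
      have hV : Vth τ two π i ≤ pmax π i := Vth_le τ two π i
      by_cases h1 : pmax π i < gd π i
      · rw [if_pos h1]
      · rw [if_neg h1]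
        push_neg at h1
        by_cases h2 : gd π i < Vth τ two π i
        · rw [if_pos h2]; omega
        · rw [if_neg h2]
          by_cases h3 : gd π i = Vth τ two π i
          · rw [if_pos h3]; omega
          · rw [if_neg h3]
    · have hi' : (themap τ two π).length ≤ i := by rw [length_themap]; omega
      rw [pmax_succ_ge _ i hi', pmax_succ_ge _ i hi, ih]

lemma pmax_theinv {π : List ℕ} (hπ : Canon π) (two : Bool) :
    ∀ i, pmax (theinv τ two π) i = pmax π i := by
  intro i
  induction i with
  | zero => simp [pmax]
  | succ i ih =>
    rcases Nat.lt_or_ge i π.length with hi | hi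
    · have hi' : i < (theinv τ two π).length := by rw [length_theinv]; exact hi
      rw [pmax_succ _ i hi', pmax_succ _ i hi, ih, gd_theinv τ two π hi]
      have hx1 : 1 ≤ gd π i := (hπ i hi).1
      have hV : Vth τ two π i ≤ pmax π i := Vth_le τ two π i
      by_cases h1 : pmax π i < gd π i
      · rw [if_pos h1]
      · rw [if_neg h1]
        push_neg at h1
        by_cases h2 : 2 ≤ gd π i ∧ gd π i ≤ Vth τ two π i
        · rw [if_pos h2]; omega
        · rw [if_neg h2]
          by_cases h3 : gd π i = 1 ∧ 1 ≤ Vth τ two π i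
          · rw [if_pos h3]; omega
          · rw [if_neg h3]
    · have hi' : (theinv τ two π).length ≤ i := by rw [length_theinv]; omega
      rw [pmax_succ_ge _ i hi', pmax_succ_ge _ i hi, ih]

lemma canon_themap {π : List ℕ} (hπ : Canon π) (two : Bool) : Canon (themap τ two π) := by
  intro i hi
  have hi' : i < π.length := by rw [length_themap] at hi; exact hi
  rw [gd_themap τ two π hi', pmax_themap τ hπ two]
  have h1 := (hπ i hi').1
  have h2 := (hπ i hi').2
  have hV : Vth τ two π i ≤ pmax π i := Vth_le τ two π i
  by_cases hb : pmax π i < gd π i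
  · rw [if_pos hb]; omega
  · rw [if_neg hb]
    push_neg at hb
    by_cases hb2 : gd π i < Vth τ two π i
    · rw [if_pos hb2]; omega
    · rw [if_neg hb2]
      by_cases hb3 : gd π i = Vth τ two π i
      · rw [if_pos hb3]; omega
      · rw [if_neg hb3]; omega

lemma canon_theinv {π : List ℕ} (hπ : Canon π) (two : Bool) : Canon (theinv τ two π) := by
  intro i hi
  have hi' : i < π.length := by rw [length_theinv] at hi; exact hi
  rw [gd_theinv τ two π hi', pmax_theinv τ hπ two]
  have h1 := (hπ i hi').1
  have h2 := (hπ i hi').2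
  have hV : Vth τ two π i ≤ pmax π i := Vth_le τ two π i
  by_cases hb : pmax π i < gd π i
  · rw [if_pos hb]; omega
  · rw [if_neg hb]
    push_neg at hb
    by_cases hb2 : 2 ≤ gd π i ∧ gd π i ≤ Vth τ two π i
    · rw [if_pos hb2]; omega
    · rw [if_neg hb2]
      by_cases hb3 : gd π i = 1 ∧ 1 ≤ Vth τ two π i
      · rw [if_pos hb3]; omega
      · rw [if_neg hb3]; omega

/-- H-property: values strictly above the threshold are preserved -/
lemma H_themap {π : List ℕ} (hπ : Canon π) (two : Bool) {p : ℕ} (hp : p < π.length) :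
    (Vth τ two π p < gd π p → gd (themap τ two π) p = gd π p) ∧
    (Vth τ two π p < gd (themap τ two π) p → gd (themap τ two π) p = gd π p) := by
  rw [gd_themap τ two π hp]
  have h1 := (hπ p hp).1
  constructor
  · intro h
    by_cases hb : pmax π p < gd π p
    · rw [if_pos hb]
    · rw [if_neg hb, if_neg (by omega), if_neg (by omega)]
  · intro h
    by_cases hb : pmax π p < gd π p
    · rw [if_pos hb]
    · rw [if_neg hb] at h ⊢
      by_cases hb2 : gd π p < Vth τ two π p
      · rw [if_pos hb2] at h; omega
      · rw [if_neg hb2] at h ⊢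
        by_cases hb3 : gd π p = Vth τ two π p
        · rw [if_pos hb3] at h; omega
        · rw [if_neg hb3] at h ⊢

lemma H_theinv {π : List ℕ} (hπ : Canon π) (two : Bool) {p : ℕ} (hp : p < π.length) :
    (Vth τ two π p < gd π p → gd (theinv τ two π) p = gd π p) ∧
    (Vth τ two π p < gd (theinv τ two π) p → gd (theinv τ two π) p = gd π p) := by
  rw [gd_theinv τ two π hp]
  have h1 := (hπ p hp).1
  constructor
  · intro h
    by_cases hb : pmax π p < gd π p
    · rw [if_pos hb]
    · rw [if_neg hb, if_neg (by omega), if_neg (by omega)]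
  · intro h
    by_cases hb : pmax π p < gd π p
    · rw [if_pos hb]
    · rw [if_neg hb] at h ⊢
      by_cases hb2 : 2 ≤ gd π p ∧ gd π p ≤ Vth τ two π p
      · rw [if_pos hb2] at h; omega
      · rw [if_neg hb2] at h ⊢
        by_cases hb3 : gd π p = 1 ∧ 1 ≤ Vth τ two π p
        · rw [if_pos hb3] at h; omega
        · rw [if_neg hb3] at h ⊢

/-- Generic preservation: if values strictly above the `Vth` threshold are preserved,
then the embedding predicates `A1`/`A2` are preserved. -/
lemma A1_pres {π πh : List ℕ} (hlen : πh.length = π.length)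
    (H1 : ∀ p, p < π.length → Vth τ false π p < gd π p → gd πh p = gd π p)
    (H2 : ∀ p, p < π.length → Vth τ false π p < gd πh p → gd πh p = gd π p)
    {v p : ℕ} (hv : 1 ≤ v) : A1 τ π v p ↔ A1 τ πh v p := by
  rcases Nat.eq_zero_or_pos τ.length with hτ0 | hτ0
  · constructor <;> intro _ <;> exact TEmb_of_nil hτ0
  constructor
  · intro hA
    have hex : ∃ r, A1 τ π v r := ⟨p, hA⟩
    set lam := Nat.find hex with hlam
    have hAlam : A1 τ π v lam := Nat.find_spec hex
    have hlamle : lam ≤ p := Nat.find_min' hex hA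
    obtain ⟨g, hg1, hg2, hg3⟩ := hAlam
    have hkey : ∀ x, x < τ.length → gd πh (g x) = gd π (g x) := by
      intro x hx
      obtain ⟨hq1, hq2, hq3⟩ := hg2 x hx
      have hnA : ¬ A1 τ π v (g x) := Nat.find_min hex (by omega)
      have hVlt : Vth τ false π (g x) < v := by
        by_contra hcon
        push_neg at hcon
        exact hnA (by simpa using A_of_le_Vth τ (two := false) hv hcon)
      exact H1 _ hq1 (by omega)
    have : A1 τ πh v lam := by
      refine ⟨g, hg1, fun x hx => ?_, fun x y hx hy => ?_⟩
      · obtain ⟨hq1, hq2, hq3⟩ := hg2 x hx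
        rw [hkey x hx]
        exact ⟨by omega, hq2, hq3⟩
      · rw [hkey x hx, hkey y hy]; exact hg3 x y hx hy
    exact A1_mono_p τ hlamle this
  · intro hA
    by_contra hno
    obtain ⟨g, hg1, hg2, hg3⟩ := hA
    have hkey : ∀ x, x < τ.length → gd πh (g x) = gd π (g x) := by
      intro x hx
      obtain ⟨hq1', hq2, hq3⟩ := hg2 x hx
      have hq1 : g x < π.length := by omega
      have hnA : ¬ A1 τ π v (g x) := fun h => hno (A1_mono_p τ (by omega) h)
      have hVlt : Vth τ false π (g x) < v := by
        by_contra hcon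
        push_neg at hcon
        exact hnA (by simpa using A_of_le_Vth τ (two := false) hv hcon)
      exact H2 _ hq1 (by omega)
    apply hno
    refine ⟨g, hg1, fun x hx => ?_, fun x y hx hy => ?_⟩
    · obtain ⟨hq1, hq2, hq3⟩ := hg2 x hx
      rw [← hkey x hx]
      exact ⟨by omega, hq2, hq3⟩
    · rw [← hkey x hx, ← hkey y hy]; exact hg3 x y hx hy

lemma A2_pres {π πh : List ℕ} (hlen : πh.length = π.length)
    (H1 : ∀ p, p < π.length → Vth τ true π p < gd π p → gd πh p = gd π p)
    (H2 : ∀ p, p < π.length → Vth τ true π p < gd πh p → gd πh p = gd π p)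
    {v p : ℕ} (hv : 1 ≤ v) : A2 τ π v p ↔ A2 τ πh v p := by
  rcases Nat.eq_zero_or_pos τ.length with hτ0 | hτ0
  · constructor <;> intro _ <;> exact TEmb_of_nil hτ0
  constructor
  · intro hA
    have hple : p ≤ π.length := by
      obtain ⟨g, hg1, hg2, hg3⟩ := hA
      have := hg2 0 hτ0
      omega
    set rho := Nat.findGreatest (fun r => A2 τ π v r) π.length with hrho
    have hprho : p ≤ rho := Nat.le_findGreatest hple hA
    have hArho : A2 τ π v rho := Nat.findGreatest_spec hple hA
    obtain ⟨g, hg1, hg2, hg3⟩ := hArho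
    have hkey : ∀ x, x < τ.length → gd πh (g x) = gd π (g x) := by
      intro x hx
      obtain ⟨hq1, hq2, hq3⟩ := hg2 x hx
      have hnA : ¬ A2 τ π v (g x) :=
        Nat.findGreatest_is_greatest hq2 (le_of_lt hq1)
      have hVlt : Vth τ true π (g x) < v := by
        by_contra hcon
        push_neg at hcon
        exact hnA (by simpa using A_of_le_Vth τ (two := true) hv hcon)
      exact H1 _ hq1 (by omega)
    apply A2_mono_p τ hprho
    refine ⟨g, hg1, fun x hx => ?_, fun x y hx hy => ?_⟩
    · obtain ⟨hq1, hq2, hq3⟩ := hg2 x hx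
      rw [hkey x hx]
      exact ⟨by omega, hq2, hq3⟩
    · rw [hkey x hx, hkey y hy]; exact hg3 x y hx hy
  · intro hA
    by_contra hno
    obtain ⟨g, hg1, hg2, hg3⟩ := hA
    have hkey : ∀ x, x < τ.length → gd πh (g x) = gd π (g x) := by
      intro x hx
      obtain ⟨hq1', hq2, hq3⟩ := hg2 x hx
      have hq1 : g x < π.length := by omega
      have hnA : ¬ A2 τ π v (g x) := fun h => hno (A2_mono_p τ (by omega) h)
      have hVlt : Vth τ true π (g x) < v := by
        by_contra hcon
        push_neg at hcon
        exact hnA (by simpa using A_of_le_Vth τ (two := true) hv hcon)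
      exact H2 _ hq1 (by omega)
    apply hno
    refine ⟨g, hg1, fun x hx => ?_, fun x y hx hy => ?_⟩
    · obtain ⟨hq1, hq2, hq3⟩ := hg2 x hx
      rw [← hkey x hx]
      exact ⟨by omega, hq2, hq3⟩
    · rw [← hkey x hx, ← hkey y hy]; exact hg3 x y hx hy

lemma A_pres_themap {π : List ℕ} (hπ : Canon π) (two : Bool) {v p : ℕ} (hv : 1 ≤ v) :
    (if two then A2 τ π v p else A1 τ π v p) ↔
      (if two then A2 τ (themap τ two π) v p else A1 τ (themap τ two π) v p) := by
  cases two with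
  | false =>
    simp only [Bool.false_eq_true, if_false]
    exact A1_pres τ (length_themap τ false π)
      (fun p hp h => (H_themap τ hπ false hp).1 h)
      (fun p hp h => (H_themap τ hπ false hp).2 h) hv
  | true =>
    simp only [if_true]
    exact A2_pres τ (length_themap τ true π)
      (fun p hp h => (H_themap τ hπ true hp).1 h)
      (fun p hp h => (H_themap τ hπ true hp).2 h) hv

lemma A_pres_theinv {π : List ℕ} (hπ : Canon π) (two : Bool) {v p : ℕ} (hv : 1 ≤ v) :
    (if two then A2 τ π v p else A1 τ π v p) ↔
      (if two then A2 τ (theinv τ two π) v p else A1 τ (theinv τ two π) v p) := by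
  cases two with
  | false =>
    simp only [Bool.false_eq_true, if_false]
    exact A1_pres τ (length_theinv τ false π)
      (fun p hp h => (H_theinv τ hπ false hp).1 h)
      (fun p hp h => (H_theinv τ hπ false hp).2 h) hv
  | true =>
    simp only [if_true]
    exact A2_pres τ (length_theinv τ true π)
      (fun p hp h => (H_theinv τ hπ true hp).1 h)
      (fun p hp h => (H_theinv τ hπ true hp).2 h) hv

lemma Vth_themap {π : List ℕ} (hπ : Canon π) (two : Bool) (p : ℕ) :
    Vth τ two (themap τ two π) p = Vth τ two π p := by
  symm
  apply Vth_congr τ (pmax_themap τ hπ two p).symm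
  intro v hv
  exact A_pres_themap τ hπ two hv

lemma Vth_theinv {π : List ℕ} (hπ : Canon π) (two : Bool) (p : ℕ) :
    Vth τ two (theinv τ two π) p = Vth τ two π p := by
  symm
  apply Vth_congr τ (pmax_theinv τ hπ two p).symm
  intro v hv
  exact A_pres_theinv τ hπ two hv

lemma theinv_themap {π : List ℕ} (hπ : Canon π) (two : Bool) :
    theinv τ two (themap τ two π) = π := by
  apply list_ext_gd (by rw [length_theinv, length_themap])
  intro p hp
  have hp2 : p < (themap τ two π).length := by rwa [length_theinv] at hp
  have hp3 : p < π.length := by rwa [length_themap] at hp2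
  rw [gd_theinv τ two _ hp2, pmax_themap τ hπ two p, Vth_themap τ hπ two p,
    gd_themap τ two π hp3]
  have h1 := (hπ p hp3).1
  have h2 := (hπ p hp3).2
  have hV : Vth τ two π p ≤ pmax π p := Vth_le τ two π p
  by_cases hb : pmax π p < gd π p
  · rw [if_pos hb, if_pos hb]
  · rw [if_neg hb]
    push_neg at hb
    by_cases hb2 : gd π p < Vth τ two π p
    · rw [if_pos hb2, if_neg (by omega), if_pos (by omega)]
      omega
    · rw [if_neg hb2]
      by_cases hb3 : gd π p = Vth τ two π p
      · rw [if_pos hb3, if_neg (by omega), if_neg (by omega), if_pos (by omega)]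
        omega
      · rw [if_neg hb3, if_neg (by omega), if_neg (by omega), if_neg (by omega)]

lemma themap_theinv {π : List ℕ} (hπ : Canon π) (two : Bool) :
    themap τ two (theinv τ two π) = π := by
  apply list_ext_gd (by rw [length_themap, length_theinv])
  intro p hp
  have hp2 : p < (theinv τ two π).length := by rwa [length_themap] at hp
  have hp3 : p < π.length := by rwa [length_theinv] at hp2
  rw [gd_themap τ two _ hp2, pmax_theinv τ hπ two p, Vth_theinv τ hπ two p,
    gd_theinv τ two π hp3]
  have h1 := (hπ p hp3).1
  have h2 := (hπ p hp3).2
  have hV : Vth τ two π p ≤ pmax π p := Vth_le τ two π p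
  by_cases hb : pmax π p < gd π p
  · rw [if_pos hb, if_pos hb]
  · rw [if_neg hb]
    push_neg at hb
    by_cases hb2 : 2 ≤ gd π p ∧ gd π p ≤ Vth τ two π p
    · rw [if_pos hb2, if_neg (by omega), if_pos (by omega)]
      omega
    · rw [if_neg hb2]
      by_cases hb3 : gd π p = 1 ∧ 1 ≤ Vth τ two π p
      · rw [if_pos hb3, if_neg (by omega), if_neg (by omega), if_pos (by omega)]
        omega
      · rw [if_neg hb3, if_neg (by omega)]
        push_neg at hb2
        by_cases hc : gd π p = 1
        · have : ¬ 1 ≤ Vth τ two π p := by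
            intro hcon; exact hb3 ⟨hc, hcon⟩
          rw [if_neg (by omega), if_neg (by omega)]
        · rw [if_neg (by omega), if_neg (by omega)]

lemma gd_append_left {A B : List ℕ} {i : ℕ} (h : i < A.length) : gd (A ++ B) i = gd A i := by
  unfold gd
  rw [List.getD_eq_getElem?_getD, List.getD_eq_getElem?_getD, List.getElem?_append_left h]

lemma gd_append_right {A B : List ℕ} {i : ℕ} (h : A.length ≤ i) :
    gd (A ++ B) i = gd B (i - A.length) := by
  unfold gd
  rw [List.getD_eq_getElem?_getD, List.getD_eq_getElem?_getD, List.getElem?_append_right h]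

lemma length_iota (k : ℕ) : (iota k).length = k := by simp [iota]

lemma gd_iota {k i : ℕ} (h : i < k) : gd (iota k) i = i + 1 := by
  unfold gd iota
  rw [List.getD_eq_getElem?_getD, List.getElem?_map]
  simp [List.getElem?_range h]

lemma gd_map_add {τ : List ℕ} {c x : ℕ} (h : x < τ.length) :
    gd (τ.map (· + c)) x = gd τ x + c := by
  unfold gd
  rw [List.getD_eq_getElem?_getD, List.getD_eq_getElem?_getD, List.getElem?_map,
    List.getElem?_eq_getElem h]
  rfl

lemma smono_iff {k : ℕ} {a : ℕ → ℕ} (ha : ∀ i j, i < j → j < k → a i < a j)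
    {i j : ℕ} (hi : i < k) (hj : j < k) : a i < a j ↔ i < j := by
  constructor
  · intro h
    by_contra hc
    push_neg at hc
    rcases Nat.lt_or_ge j i with h2 | h2
    · exact absurd (ha j i h2 hi) (by omega)
    · have : i = j := by omega
      subst this; omega
  · intro h; exact ha i j h hj

/-- structured characterization of containment of the pattern
`iota k ++ (τ+k) ++ W` (two = false) or `iota k ++ W ++ (τ+k)` (two = true) -/
def Ch (two : Bool) (k : ℕ) (W π : List ℕ) : Prop :=
  ∃ a : ℕ → ℕ,
    (∀ i j, i < j → j < k → a i < a j) ∧ 1 ≤ a 0 ∧ a (k-1) ≤ maxv π ∧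
    ∃ r : ℕ → ℕ, ∃ qb : ℕ,
      (∀ i j, i < j → j < W.length → r i < r j) ∧
      (∀ j, j < W.length → r j < π.length ∧ a (k-1) ≤ pmax π (r j) ∧
         gd π (r j) = a (gd W j - 1)) ∧
      (if two then ((∀ j, j < W.length → r j ≤ qb) ∧ A2 τ π (a (k-1)) qb)
       else (A1 τ π (a (k-1)) qb ∧ ∀ j, j < W.length → qb ≤ r j))

lemma a_mono_le {k : ℕ} {a : ℕ → ℕ} (ha : ∀ i j, i < j → j < k → a i < a j)
    {i : ℕ} (hi : i < k) : a i ≤ a (k-1) := by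
  rcases Nat.lt_or_ge i (k-1) with h | h
  · exact le_of_lt (ha i (k-1) h (by omega))
  · have : i = k - 1 := by omega
    subst this; exact le_rfl

lemma a_one_le {k : ℕ} {a : ℕ → ℕ} (ha : ∀ i j, i < j → j < k → a i < a j)
    (h0 : 1 ≤ a 0) {i : ℕ} (hi : i < k) : 1 ≤ a i := by
  rcases Nat.eq_zero_or_pos i with h | h
  · subst h; exact h0
  · exact le_trans h0 (le_of_lt (ha 0 i h hi))

lemma cont_iff_ch_one {k : ℕ} (hk : 1 ≤ k) {W π : List ℕ}
    (hτ1 : ∀ x, x < τ.length → 1 ≤ gd τ x)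
    (hW : ∀ j, j < W.length → 1 ≤ gd W j ∧ gd W j ≤ k) (hπ : Canon π) :
    Cont π (iota k ++ τ.map (· + k) ++ W) ↔ Ch τ false k W π := by
  set t := τ.length with ht
  set l := W.length with hl
  set σ := iota k ++ τ.map (· + k) ++ W with hσ
  have hσlen : σ.length = k + t + l := by simp [hσ, length_iota]; omega
  have hσI : ∀ i, i < k → gd σ i = i + 1 := by
    intro i hi
    rw [hσ, gd_append_left (by simp only [List.length_append, length_iota, List.length_map]; omega), gd_append_left (by rw [length_iota]; omega),
      gd_iota hi]
  have hστ : ∀ x, x < t → gd σ (k + x) = gd τ x + k := by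
    intro x hx
    rw [hσ, gd_append_left (by simp only [List.length_append, length_iota, List.length_map]; omega),
      gd_append_right (by rw [length_iota]; omega)]
    rw [length_iota]
    have : k + x - k = x := by omega
    rw [this, gd_map_add hx]
  have hσW : ∀ j, j < l → gd σ (k + t + j) = gd W j := by
    intro j hj
    rw [hσ, gd_append_right (by simp only [List.length_append, length_iota, List.length_map]; omega)]
    have : k + t + j - (iota k ++ τ.map (· + k)).length = j := by
      simp [length_iota]; omega
    rw [this]
  constructor
  · rintro ⟨e, he1, he2, he3⟩
    refine ⟨fun i => gd π (e i), ?_, ?_, ?_, fun j => e (k + t + j),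
      if t = 0 then 0 else e (k + t - 1) + 1, ?_, ?_, ?_⟩
    · intro i j hij hj
      have := (he3 i j (by omega) (by omega)).mp
      rw [hσI i (by omega), hσI j hj] at this
      exact this (by omega)
    · exact (hπ _ (he2 0 (by omega))).1
    · exact gd_le_maxv (he2 _ (by omega))
    · intro i j hij hj
      exact he1 _ _ (by omega) (by omega)
    · intro j hj
      refine ⟨he2 _ (by omega), ?_, ?_⟩
      · have hlt : e (k-1) < e (k + t + j) := he1 _ _ (by omega) (by omega)
        exact gd_le_pmax hlt (he2 _ (by omega))
      · have hw := hW j hj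
        have h1 : gd σ (k + t + j) = gd W j := hσW j hj
        have h2 : gd σ (gd W j - 1) = gd W j := by
          rw [hσI _ (by omega)]; omega
        have hij1 := (he3 (gd W j - 1) (k + t + j) (by omega) (by omega))
        have hij2 := (he3 (k + t + j) (gd W j - 1) (by omega) (by omega))
        rw [h1, h2] at hij1 hij2
        have hlt1 : ¬ gd π (e (gd W j - 1)) < gd π (e (k + t + j)) :=
          fun hh => lt_irrefl _ (hij1.mpr hh)
        have hlt2 : ¬ gd π (e (k + t + j)) < gd π (e (gd W j - 1)) :=
          fun hh => lt_irrefl _ (hij2.mpr hh)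
        show gd π (e (k + t + j)) = gd π (e (gd W j - 1))
        omega
    · simp only [Bool.false_eq_true, if_false]
      constructor
      · rcases Nat.eq_zero_or_pos t with ht0 | ht0
        · exact TEmb_of_nil (by omega)
        · rw [if_neg (by omega)]
          refine ⟨fun x => e (k + x), ?_, ?_, ?_⟩
          · intro x y hxy hy
            dsimp only
            exact he1 _ _ (by omega) (by omega)
          · intro x hx
            dsimp only
            refine ⟨he2 _ (by omega), ?_, ?_⟩
            · rcases Nat.lt_or_ge x (t-1) with h | h
              · have := he1 (k+x) (k+t-1) (by omega) (by omega)
                omega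
              · have : x = t - 1 := by omega
                subst this
                have : k + (t-1) = k + t - 1 := by omega
                rw [this]
                omega
            · have := (he3 (k-1) (k+x) (by omega) (by omega)).mp
              rw [hσI _ (by omega), hστ x hx] at this
              have hτx := hτ1 x hx
              apply this
              omega
          · intro x y hx hy
            dsimp only
            have := he3 (k+x) (k+y) (by omega) (by omega)
            rw [hστ x hx, hστ y hy] at this
            constructor
            · intro h; exact this.mp (by omega)
            · intro h; have := this.mpr h; omega
      · intro j hj
        rcases Nat.eq_zero_or_pos t with ht0 | ht0
        · rw [if_pos ht0]; omega
        · rw [if_neg (by omega)]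
          have := he1 (k+t-1) (k+t+j) (by omega) (by omega)
          omega
  · rintro ⟨a, ha, ha0, haM, r, qb, hr, hrs, hA⟩
    simp only [Bool.false_eq_true, if_false] at hA
    obtain ⟨hA1, hqbr⟩ := hA
    obtain ⟨g, hg1, hg2, hg3⟩ := hA1
    have hocc : ∀ i, i < k → ∃ p, p < π.length ∧ gd π p = a i := fun i hi =>
      occurs hπ (a_one_le ha ha0 hi) (le_trans (a_mono_le ha hi) haM)
    have hfoval : ∀ i, i < k → gd π (fo π (a i)) = a i ∧ fo π (a i) < π.length := by
      intro i hi
      have := fo_spec (hocc i hi)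
      exact ⟨this.2, this.1⟩
    have hfomono : ∀ i j, i < j → j < k → fo π (a i) < fo π (a j) := by
      intro i j hij hj
      exact fo_mono hπ (a_one_le ha ha0 (by omega)) (ha i j hij hj)
        (le_trans (a_mono_le ha hj) haM)
    -- the full embedding
    set e : ℕ → ℕ := fun i => if i < k then fo π (a i)
      else if i < k + t then g (i - k) else r (i - k - t) with he
    have he_eval : ∀ i0 : ℕ, e i0 = if i0 < k then fo π (a i0)
        else if i0 < k + t then g (i0 - k) else r (i0 - k - t) := fun _ => rfl
    have hσval : ∀ i0, i0 < k + t + l → gd σ i0 =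
        (if i0 < k then i0 + 1 else if i0 < k + t then gd τ (i0 - k) + k
         else gd W (i0 - k - t)) := by
      intro i0 hi0
      by_cases h1 : i0 < k
      · rw [if_pos h1]; exact hσI i0 h1
      · rw [if_neg h1]
        by_cases h2 : i0 < k + t
        · rw [if_pos h2]
          have h0 : i0 = k + (i0 - k) := by omega
          conv_lhs => rw [h0]
          exact hστ (i0 - k) (by omega)
        · rw [if_neg h2]
          have h0 : i0 = k + t + (i0 - k - t) := by omega
          conv_lhs => rw [h0]
          exact hσW (i0 - k - t) (by omega)
    -- cross position bounds
    have hIτ : ∀ i x, i < k → x < t → fo π (a i) < g x := by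
      intro i x hi hx
      have hgx := hg2 x hx
      apply fo_lt_of_val_gt hπ (a_one_le ha ha0 hi) hgx.1
      calc a i ≤ a (k-1) := a_mono_le ha hi
      _ < gd π (g x) := hgx.2.2
    have hIW : ∀ i j, i < k → j < l → fo π (a i) < r j := by
      intro i j hi hj
      have h1 : fo π (a i) ≤ fo π (a (k-1)) := by
        rcases Nat.lt_or_ge i (k-1) with h | h
        · exact le_of_lt (hfomono i (k-1) h (by omega))
        · have : i = k - 1 := by omega
          subst this; exact le_rfl
      have h2 : fo π (a (k-1)) < r j :=
        fo_lt_of_le_pmax hπ (a_one_le ha ha0 (by omega)) (le_of_lt (hrs j hj).1)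
          (hrs j hj).2.1
      omega
    have hτW : ∀ x j, x < t → j < l → g x < r j := by
      intro x j hx hj
      have h1 := (hg2 x hx).2.1
      have h2 := hqbr j hj
      simp only at h1
      omega
    -- value determination
    have hval : ∀ i, i < k + t + l → gd π (e i) =
        (if i < k then a i else if i < k + t then gd π (g (i - k))
         else a (gd W (i - k - t) - 1)) := by
      intro i hi
      rw [he_eval i]
      by_cases h1 : i < k
      · rw [if_pos h1, if_pos h1]; exact (hfoval i h1).1
      · rw [if_neg h1, if_neg h1]
        by_cases h2 : i < k + t
        · rw [if_pos h2, if_pos h2]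
        · rw [if_neg h2, if_neg h2]
          exact (hrs (i - k - t) (by omega)).2.2
    refine ⟨e, ?_, ?_, ?_⟩
    · -- strict monotonicity
      intro i j hij hj
      rw [hσlen] at hj
      rw [he_eval i, he_eval j]
      by_cases hik : i < k
      · rw [if_pos hik]
        by_cases hjk : j < k
        · rw [if_pos hjk]; exact hfomono i j hij hjk
        · rw [if_neg hjk]
          by_cases hjt : j < k + t
          · rw [if_pos hjt]; exact hIτ i (j-k) hik (by omega)
          · rw [if_neg hjt]; exact hIW i (j-k-t) hik (by omega)
      · rw [if_neg hik]
        by_cases hit : i < k + t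
        · rw [if_pos hit]
          have hjk : ¬ j < k := by omega
          rw [if_neg hjk]
          by_cases hjt : j < k + t
          · rw [if_pos hjt]; exact hg1 _ _ (by omega) (by omega)
          · rw [if_neg hjt]; exact hτW (i-k) (j-k-t) (by omega) (by omega)
        · rw [if_neg hit]
          have hjk : ¬ j < k := by omega
          have hjt : ¬ j < k + t := by omega
          rw [if_neg hjk, if_neg hjt]
          exact hr _ _ (by omega) (by omega)
    · -- bounds
      intro i hi
      rw [hσlen] at hi
      rw [he_eval i]
      by_cases h1 : i < k
      · rw [if_pos h1]; exact (hfoval i h1).2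
      · rw [if_neg h1]
        by_cases h2 : i < k + t
        · rw [if_pos h2]; exact (hg2 (i - k) (by omega)).1
        · rw [if_neg h2]; exact (hrs (i - k - t) (by omega)).1
    · -- order isomorphism
      intro i j hi hj
      have hi' := hi; have hj' := hj
      rw [hσlen] at hi' hj'
      rw [hσval i hi', hσval j hj', hval i hi', hval j hj']
      by_cases h1 : i < k
      · rw [if_pos h1, if_pos h1]
        by_cases h2 : j < k
        · rw [if_pos h2, if_pos h2, smono_iff ha h1 h2]; omega
        · rw [if_neg h2, if_neg h2]
          by_cases h3 : j < k + t
          · rw [if_pos h3, if_pos h3]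
            have hτx := hτ1 (j - k) (by omega)
            have hva : a i ≤ a (k-1) := a_mono_le ha h1
            have hvg := (hg2 (j - k) (by omega)).2.2
            constructor
            · intro _; omega
            · intro _; omega
          · rw [if_neg h3, if_neg h3]
            have hw := hW (j - k - t) (by omega)
            rw [smono_iff ha h1 (by omega)]
            omega
      · rw [if_neg h1, if_neg h1]
        by_cases h2 : i < k + t
        · rw [if_pos h2, if_pos h2]
          by_cases h3 : j < k
          · rw [if_pos h3, if_pos h3]
            have hva : a j ≤ a (k-1) := a_mono_le ha h3
            have hvg := (hg2 (i - k) (by omega)).2.2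
            constructor
            · intro h; omega
            · intro h; omega
          · rw [if_neg h3, if_neg h3]
            by_cases h4 : j < k + t
            · rw [if_pos h4, if_pos h4]
              have := hg3 (i - k) (j - k) (by omega) (by omega)
              constructor
              · intro h; exact this.mp (by omega)
              · intro h; have := this.mpr h; omega
            · rw [if_neg h4, if_neg h4]
              have hw := hW (j - k - t) (by omega)
              have hva : a (gd W (j - k - t) - 1) ≤ a (k-1) := a_mono_le ha (by omega)
              have hvg := (hg2 (i - k) (by omega)).2.2
              have hτx := hτ1 (i - k) (by omega)
              constructor
              · intro h; omega
              · intro h; omega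
        · rw [if_neg h2, if_neg h2]
          have hwi := hW (i - k - t) (by omega)
          by_cases h3 : j < k
          · rw [if_pos h3, if_pos h3]
            rw [smono_iff ha (by omega) h3]
            omega
          · rw [if_neg h3, if_neg h3]
            by_cases h4 : j < k + t
            · rw [if_pos h4, if_pos h4]
              have hva : a (gd W (i - k - t) - 1) ≤ a (k-1) := a_mono_le ha (by omega)
              have hvg := (hg2 (j - k) (by omega)).2.2
              have hτx := hτ1 (j - k) (by omega)
              constructor
              · intro h; omega
              · intro h; omega
            · rw [if_neg h4, if_neg h4]
              have hwj := hW (j - k - t) (by omega)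
              rw [smono_iff ha (by omega) (by omega)]
              omega

lemma cont_iff_ch_two {k : ℕ} (hk : 1 ≤ k) {W π : List ℕ}
    (hτ1 : ∀ x, x < τ.length → 1 ≤ gd τ x)
    (hW : ∀ j, j < W.length → 1 ≤ gd W j ∧ gd W j ≤ k) (hπ : Canon π) :
    Cont π (iota k ++ W ++ τ.map (· + k)) ↔ Ch τ true k W π := by
  set t := τ.length with ht
  set l := W.length with hl
  set σ := iota k ++ W ++ τ.map (· + k) with hσ
  have hσlen : σ.length = k + l + t := by simp [hσ, length_iota]; omega
  have hσI : ∀ i, i < k → gd σ i = i + 1 := by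
    intro i hi
    rw [hσ, gd_append_left (by simp only [List.length_append, length_iota]; omega),
      gd_append_left (by rw [length_iota]; omega), gd_iota hi]
  have hσW : ∀ j, j < l → gd σ (k + j) = gd W j := by
    intro j hj
    rw [hσ, gd_append_left (by simp only [List.length_append, length_iota]; omega),
      gd_append_right (by rw [length_iota]; omega)]
    rw [length_iota]
    have h0 : k + j - k = j := by omega
    rw [h0]
  have hστ : ∀ x, x < t → gd σ (k + l + x) = gd τ x + k := by
    intro x hx
    rw [hσ, gd_append_right (by simp only [List.length_append, length_iota]; omega)]
    have h0 : k + l + x - (iota k ++ W).length = x := by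
      simp only [List.length_append, length_iota]; omega
    rw [h0, gd_map_add hx]
  constructor
  · rintro ⟨e, he1, he2, he3⟩
    refine ⟨fun i => gd π (e i), ?_, ?_, ?_, fun j => e (k + j),
      if l = 0 then 0 else e (k + l - 1), ?_, ?_, ?_⟩
    · intro i j hij hj
      have := (he3 i j (by omega) (by omega)).mp
      rw [hσI i (by omega), hσI j hj] at this
      exact this (by omega)
    · exact (hπ _ (he2 0 (by omega))).1
    · exact gd_le_maxv (he2 _ (by omega))
    · intro i j hij hj
      dsimp only
      exact he1 _ _ (by omega) (by omega)
    · intro j hj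
      dsimp only
      refine ⟨he2 _ (by omega), ?_, ?_⟩
      · have hlt : e (k-1) < e (k + j) := he1 _ _ (by omega) (by omega)
        exact gd_le_pmax hlt (he2 _ (by omega))
      · have hw := hW j hj
        have h1 : gd σ (k + j) = gd W j := hσW j hj
        have h2 : gd σ (gd W j - 1) = gd W j := by
          rw [hσI _ (by omega)]; omega
        have hij1 := (he3 (gd W j - 1) (k + j) (by omega) (by omega))
        have hij2 := (he3 (k + j) (gd W j - 1) (by omega) (by omega))
        rw [h1, h2] at hij1 hij2
        have hlt1 : ¬ gd π (e (gd W j - 1)) < gd π (e (k + j)) :=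
          fun hh => lt_irrefl _ (hij1.mpr hh)
        have hlt2 : ¬ gd π (e (k + j)) < gd π (e (gd W j - 1)) :=
          fun hh => lt_irrefl _ (hij2.mpr hh)
        show gd π (e (k + j)) = gd π (e (gd W j - 1))
        omega
    · simp only [if_true]
      constructor
      · intro j hj
        show e (k + j) ≤ if l = 0 then 0 else e (k + l - 1)
        rcases Nat.eq_zero_or_pos l with hl0 | hl0
        · omega
        · rw [if_neg (by omega)]
          rcases Nat.lt_or_ge j (l-1) with h | h
          · exact le_of_lt (he1 _ _ (by omega) (by omega))
          · have h0 : j = l - 1 := by omega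
            subst h0
            have h1 : k + (l - 1) = k + l - 1 := by omega
            rw [h1]
      · refine ⟨fun x => e (k + l + x), ?_, ?_, ?_⟩
        · intro x y hxy hy
          dsimp only
          exact he1 _ _ (by omega) (by omega)
        · intro x hx
          dsimp only
          refine ⟨he2 _ (by omega), ?_, ?_⟩
          · show (if l = 0 then 0 else e (k + l - 1)) < e (k + l + x)
            rcases Nat.eq_zero_or_pos l with hl0 | hl0
            · rw [if_pos hl0]
              have h1 : e 0 < e (k + l + x) := he1 _ _ (by omega) (by omega)
              omega
            · rw [if_neg (by omega)]
              exact he1 _ _ (by omega) (by omega)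
          · have := (he3 (k-1) (k+l+x) (by omega) (by omega)).mp
            rw [hσI _ (by omega), hστ x hx] at this
            have hτx := hτ1 x hx
            apply this
            omega
        · intro x y hx hy
          dsimp only
          have := he3 (k+l+x) (k+l+y) (by omega) (by omega)
          rw [hστ x hx, hστ y hy] at this
          constructor
          · intro h; exact this.mp (by omega)
          · intro h; have := this.mpr h; omega
  · rintro ⟨a, ha, ha0, haM, r, qb, hr, hrs, hA⟩
    simp only [if_true] at hA
    obtain ⟨hqbr, hA2⟩ := hA
    obtain ⟨g, hg1, hg2, hg3⟩ := hA2
    have hocc : ∀ i, i < k → ∃ p, p < π.length ∧ gd π p = a i := fun i hi =>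
      occurs hπ (a_one_le ha ha0 hi) (le_trans (a_mono_le ha hi) haM)
    have hfoval : ∀ i, i < k → gd π (fo π (a i)) = a i ∧ fo π (a i) < π.length := by
      intro i hi
      have := fo_spec (hocc i hi)
      exact ⟨this.2, this.1⟩
    have hfomono : ∀ i j, i < j → j < k → fo π (a i) < fo π (a j) := by
      intro i j hij hj
      exact fo_mono hπ (a_one_le ha ha0 (by omega)) (ha i j hij hj)
        (le_trans (a_mono_le ha hj) haM)
    set e : ℕ → ℕ := fun i => if i < k then fo π (a i)
      else if i < k + l then r (i - k) else g (i - k - l) with he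
    have he_eval : ∀ i0 : ℕ, e i0 = if i0 < k then fo π (a i0)
        else if i0 < k + l then r (i0 - k) else g (i0 - k - l) := fun _ => rfl
    have hσval : ∀ i0, i0 < k + l + t → gd σ i0 =
        (if i0 < k then i0 + 1 else if i0 < k + l then gd W (i0 - k)
         else gd τ (i0 - k - l) + k) := by
      intro i0 hi0
      by_cases h1 : i0 < k
      · rw [if_pos h1]; exact hσI i0 h1
      · rw [if_neg h1]
        by_cases h2 : i0 < k + l
        · rw [if_pos h2]
          have h0 : i0 = k + (i0 - k) := by omega
          conv_lhs => rw [h0]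
          exact hσW (i0 - k) (by omega)
        · rw [if_neg h2]
          have h0 : i0 = k + l + (i0 - k - l) := by omega
          conv_lhs => rw [h0]
          exact hστ (i0 - k - l) (by omega)
    have hIτ : ∀ i x, i < k → x < t → fo π (a i) < g x := by
      intro i x hi hx
      have hgx := hg2 x hx
      apply fo_lt_of_val_gt hπ (a_one_le ha ha0 hi) hgx.1
      calc a i ≤ a (k-1) := a_mono_le ha hi
      _ < gd π (g x) := hgx.2.2
    have hIW : ∀ i j, i < k → j < l → fo π (a i) < r j := by
      intro i j hi hj
      have h1 : fo π (a i) ≤ fo π (a (k-1)) := by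
        rcases Nat.lt_or_ge i (k-1) with h | h
        · exact le_of_lt (hfomono i (k-1) h (by omega))
        · have : i = k - 1 := by omega
          subst this; exact le_rfl
      have h2 : fo π (a (k-1)) < r j :=
        fo_lt_of_le_pmax hπ (a_one_le ha ha0 (by omega)) (le_of_lt (hrs j hj).1)
          (hrs j hj).2.1
      omega
    have hWτ : ∀ j x, j < l → x < t → r j < g x := by
      intro j x hj hx
      have h1 := (hg2 x hx).2.1
      have h2 := hqbr j hj
      simp only at h1
      omega
    have hval : ∀ i, i < k + l + t → gd π (e i) =
        (if i < k then a i else if i < k + l then a (gd W (i - k) - 1)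
         else gd π (g (i - k - l))) := by
      intro i hi
      rw [he_eval i]
      by_cases h1 : i < k
      · rw [if_pos h1, if_pos h1]; exact (hfoval i h1).1
      · rw [if_neg h1, if_neg h1]
        by_cases h2 : i < k + l
        · rw [if_pos h2, if_pos h2]
          exact (hrs (i - k) (by omega)).2.2
        · rw [if_neg h2, if_neg h2]
    refine ⟨e, ?_, ?_, ?_⟩
    · intro i j hij hj
      rw [hσlen] at hj
      rw [he_eval i, he_eval j]
      by_cases hik : i < k
      · rw [if_pos hik]
        by_cases hjk : j < k
        · rw [if_pos hjk]; exact hfomono i j hij hjk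
        · rw [if_neg hjk]
          by_cases hjt : j < k + l
          · rw [if_pos hjt]; exact hIW i (j-k) hik (by omega)
          · rw [if_neg hjt]; exact hIτ i (j-k-l) hik (by omega)
      · rw [if_neg hik]
        by_cases hit : i < k + l
        · rw [if_pos hit]
          have hjk : ¬ j < k := by omega
          rw [if_neg hjk]
          by_cases hjt : j < k + l
          · rw [if_pos hjt]; exact hr _ _ (by omega) (by omega)
          · rw [if_neg hjt]; exact hWτ (i-k) (j-k-l) (by omega) (by omega)
        · rw [if_neg hit]
          have hjk : ¬ j < k := by omega
          have hjt : ¬ j < k + l := by omega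
          rw [if_neg hjk, if_neg hjt]
          exact hg1 _ _ (by omega) (by omega)
    · intro i hi
      rw [hσlen] at hi
      rw [he_eval i]
      by_cases h1 : i < k
      · rw [if_pos h1]; exact (hfoval i h1).2
      · rw [if_neg h1]
        by_cases h2 : i < k + l
        · rw [if_pos h2]; exact (hrs (i - k) (by omega)).1
        · rw [if_neg h2]; exact (hg2 (i - k - l) (by omega)).1
    · intro i j hi hj
      have hi' := hi; have hj' := hj
      rw [hσlen] at hi' hj'
      rw [hσval i hi', hσval j hj', hval i hi', hval j hj']
      by_cases h1 : i < k
      · rw [if_pos h1, if_pos h1]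
        by_cases h2 : j < k
        · rw [if_pos h2, if_pos h2, smono_iff ha h1 h2]; omega
        · rw [if_neg h2, if_neg h2]
          by_cases h3 : j < k + l
          · rw [if_pos h3, if_pos h3]
            have hw := hW (j - k) (by omega)
            rw [smono_iff ha h1 (by omega)]
            omega
          · rw [if_neg h3, if_neg h3]
            have hτx := hτ1 (j - k - l) (by omega)
            have hva : a i ≤ a (k-1) := a_mono_le ha h1
            have hvg := (hg2 (j - k - l) (by omega)).2.2
            constructor
            · intro _; omega
            · intro _; omega
      · rw [if_neg h1, if_neg h1]
        by_cases h2 : i < k + l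
        · rw [if_pos h2, if_pos h2]
          have hwi := hW (i - k) (by omega)
          by_cases h3 : j < k
          · rw [if_pos h3, if_pos h3]
            rw [smono_iff ha (by omega) h3]
            omega
          · rw [if_neg h3, if_neg h3]
            by_cases h4 : j < k + l
            · rw [if_pos h4, if_pos h4]
              have hwj := hW (j - k) (by omega)
              rw [smono_iff ha (by omega) (by omega)]
              omega
            · rw [if_neg h4, if_neg h4]
              have hva : a (gd W (i - k) - 1) ≤ a (k-1) := a_mono_le ha (by omega)
              have hvg := (hg2 (j - k - l) (by omega)).2.2
              have hτx := hτ1 (j - k - l) (by omega)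
              constructor
              · intro h; omega
              · intro h; omega
        · rw [if_neg h2, if_neg h2]
          by_cases h3 : j < k
          · rw [if_pos h3, if_pos h3]
            have hva : a j ≤ a (k-1) := a_mono_le ha h3
            have hvg := (hg2 (i - k - l) (by omega)).2.2
            constructor
            · intro h; omega
            · intro h; omega
          · rw [if_neg h3, if_neg h3]
            by_cases h4 : j < k + l
            · rw [if_pos h4, if_pos h4]
              have hwj := hW (j - k) (by omega)
              have hva : a (gd W (j - k) - 1) ≤ a (k-1) := a_mono_le ha (by omega)
              have hvg := (hg2 (i - k - l) (by omega)).2.2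
              have hτx := hτ1 (i - k - l) (by omega)
              constructor
              · intro h; omega
              · intro h; omega
            · rw [if_neg h4, if_neg h4]
              have := hg3 (i - k - l) (j - k - l) (by omega) (by omega)
              constructor
              · intro h; exact this.mp (by omega)
              · intro h; have := this.mpr h; omega

lemma maxv_themap {π : List ℕ} (hπ : Canon π) (two : Bool) :
    maxv (themap τ two π) = maxv π := by
  rw [maxv_eq_pmax_len, maxv_eq_pmax_len, length_themap, pmax_themap τ hπ two]

lemma gd_map_succ {S : List ℕ} {j : ℕ} (h : j < S.length) :
    gd (S.map (· + 1)) j = gd S j + 1 := gd_map_add h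

lemma hA_to_r {two : Bool} {π : List ℕ} {v qb L : ℕ} {r : ℕ → ℕ}
    (hA : if two then ((∀ j, j < L → r j ≤ qb) ∧ A2 τ π v qb)
      else (A1 τ π v qb ∧ ∀ j, j < L → qb ≤ r j)) {j : ℕ} (hj : j < L) :
    if two then A2 τ π v (r j) else A1 τ π v (r j) := by
  cases two with
  | true =>
    simp only [if_true] at hA ⊢
    exact A2_mono_p τ (hA.1 j hj) hA.2
  | false =>
    simp only [Bool.false_eq_true, if_false] at hA ⊢
    exact A1_mono_p τ (hA.2 j hj) hA.1

lemma hA_mono_v {two : Bool} {π : List ℕ} {v v' p : ℕ} (hvv : v' ≤ v) :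
    (if two then A2 τ π v p else A1 τ π v p) →
    (if two then A2 τ π v' p else A1 τ π v' p) := by
  cases two with
  | true => simp only [if_true]; exact A2_mono_v τ hvv
  | false => simp only [Bool.false_eq_true, if_false]; exact A1_mono_v τ hvv

/-- small values strictly below an active threshold get shifted up by one -/
lemma gd_themap_small {π : List ℕ} (two : Bool) {p c v : ℕ} (hp : p < π.length)
    (hval : gd π p = c) (hcv : c < v) (hvpm : v ≤ pmax π p)
    (hA : if two then A2 τ π v p else A1 τ π v p) :
    gd (themap τ two π) p = c + 1 := by
  have hVth : v ≤ Vth τ two π p := le_Vth τ hvpm hA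
  rw [gd_themap τ two π hp, hval, if_neg (by omega), if_pos (by omega)]

lemma gd_themap_small_rev {π : List ℕ} (two : Bool) {p d v : ℕ} (hp : p < π.length)
    (hval : gd (themap τ two π) p = d) (h2d : 2 ≤ d) (hdv : d ≤ v)
    (hvpm : v ≤ pmax π p)
    (hA : if two then A2 τ π v p else A1 τ π v p) :
    gd π p = d - 1 := by
  have hVth : v ≤ Vth τ two π p := le_Vth τ hvpm hA
  rw [gd_themap τ two π hp] at hval
  by_cases hb : pmax π p < gd π p
  · rw [if_pos hb] at hval; omega
  · rw [if_neg hb] at hval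
    by_cases hb2 : gd π p < Vth τ two π p
    · rw [if_pos hb2] at hval; omega
    · rw [if_neg hb2] at hval
      by_cases hb3 : gd π p = Vth τ two π p
      · rw [if_pos hb3] at hval; omega
      · rw [if_neg hb3] at hval; omega

/-- the key transfer lemma -/
lemma ch_transfer (two : Bool) {k : ℕ} (hk : 2 ≤ k) {S π : List ℕ}
    (hS : ∀ j, j < S.length → 1 ≤ gd S j ∧ gd S j ≤ k - 1) (hπ : Canon π) :
    Ch τ two k S π ↔ Ch τ two k (S.map (· + 1)) (themap τ two π) := by
  have hlen' : (S.map (· + 1)).length = S.length := by simp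
  have hmaxv := maxv_themap τ hπ two
  have hlenmap := length_themap τ two π
  constructor
  · rintro ⟨a, ha, ha0, haM, r, qb, hr, hrs, hA⟩
    set v := a (k-1) with hv
    have hv1 : 1 ≤ v := a_one_le ha ha0 (by omega)
    refine ⟨fun i => if i = 0 then 1 else a (i-1) + 1, ?_, by simp, ?_, r, qb, ?_, ?_, ?_⟩
    · intro i j hij hj
      dsimp only
      by_cases hi0 : i = 0
      · subst hi0
        rw [if_pos rfl, if_neg (by omega)]
        have := a_one_le ha ha0 (i := j - 1) (by omega)
        omega
      · rw [if_neg hi0, if_neg (by omega)]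
        have := ha (i-1) (j-1) (by omega) (by omega)
        omega
    · dsimp only
      rw [if_neg (by omega), hmaxv]
      have : a (k-2) < a (k-1) := ha (k-2) (k-1) (by omega) (by omega)
      have h2 : k - 1 - 1 = k - 2 := by omega
      rw [h2]
      omega
    · intro i j hij hj
      rw [hlen'] at hj
      exact hr i j hij hj
    · intro j hj
      dsimp only
      rw [hlen'] at hj
      obtain ⟨hj1, hj2, hj3⟩ := hrs j hj
      have hSj := hS j hj
      refine ⟨by omega, ?_, ?_⟩
      · rw [pmax_themap τ hπ two, if_neg (by omega)]
        have h2 : k - 1 - 1 = k - 2 := by omega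
        rw [h2]
        have : a (k-2) < a (k-1) := ha (k-2) (k-1) (by omega) (by omega)
        omega
      · rw [gd_map_succ hj]
        have hidx : gd S j + 1 - 1 = gd S j := by omega
        rw [hidx, if_neg (by omega)]
        have hcv : a (gd S j - 1) < v := ha (gd S j - 1) (k-1) (by omega) (by omega)
        exact gd_themap_small τ two hj1 hj3 hcv hj2 (hA_to_r τ hA hj)
    · have hApres : (if two then A2 τ (themap τ two π) v qb
          else A1 τ (themap τ two π) v qb) := by
        cases two with
        | true =>
          simp only [if_true] at hA ⊢
          have h := A_pres_themap τ hπ true (v := v) (p := qb) hv1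
          simp only [if_true] at h
          exact h.mp hA.2
        | false =>
          simp only [Bool.false_eq_true, if_false] at hA ⊢
          have h := A_pres_themap τ hπ false (v := v) (p := qb) hv1
          simp only [Bool.false_eq_true, if_false] at h
          exact h.mp hA.1
      have hvv' : (if (k:ℕ) - 1 = 0 then 1 else a (k-1-1) + 1) ≤ v := by
        rw [if_neg (by omega)]
        have : a (k-1-1) < a (k-1) := ha (k-1-1) (k-1) (by omega) (by omega)
        omega
      have hA2 := hA_mono_v τ hvv' hApres
      dsimp only
      cases two with
      | true =>
        simp only [if_true] at hA ⊢
        refine ⟨?_, by simpa using hA2⟩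
        intro j hj
        rw [hlen'] at hj
        exact hA.1 j hj
      | false =>
        simp only [Bool.false_eq_true, if_false] at hA ⊢
        refine ⟨by simpa using hA2, ?_⟩
        intro j hj
        rw [hlen'] at hj
        exact hA.2 j hj
  · rintro ⟨a', ha', ha0', haM', r, qb, hr, hrs, hA⟩
    set v := a' (k-1) with hv
    have hv1 : 1 ≤ v := a_one_le ha' ha0' (by omega)
    -- transfer A back to π
    have hAπ : ∀ p, (if two then A2 τ (themap τ two π) v p else A1 τ (themap τ two π) v p) →
        (if two then A2 τ π v p else A1 τ π v p) := by
      intro p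
      cases two with
      | true =>
        simp only [if_true]
        have h := A_pres_themap τ hπ true (v := v) (p := p) hv1
        simp only [if_true] at h
        exact h.mpr
      | false =>
        simp only [Bool.false_eq_true, if_false]
        have h := A_pres_themap τ hπ false (v := v) (p := p) hv1
        simp only [Bool.false_eq_true, if_false] at h
        exact h.mpr
    refine ⟨fun i => if i = k-1 then v else a' (i+1) - 1, ?_, ?_, ?_, r, qb, ?_, ?_, ?_⟩
    · intro i j hij hj
      dsimp only
      have hmono : ∀ x y, x < y → y ≤ k-1 → a' x < a' y := by
        intro x y hxy hy
        exact ha' x y hxy (by omega)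
      by_cases hjk : j = k-1
      · subst hjk
        rw [if_pos rfl, if_neg (by omega)]
        have h1 : a' (i+1) ≤ a' (k-1) := by
          rcases Nat.lt_or_ge (i+1) (k-1) with h | h
          · exact le_of_lt (hmono _ _ h (by omega))
          · have : i + 1 = k - 1 := by omega
            rw [this]
        have h2 : 1 ≤ a' (i+1) := a_one_le ha' ha0' (by omega)
        omega
      · rw [if_neg (by omega), if_neg hjk]
        have h1 : a' (i+1) < a' (j+1) := ha' _ _ (by omega) (by omega)
        have h2 : 1 ≤ a' (i+1) := a_one_le ha' ha0' (by omega)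
        omega
    · dsimp only
      by_cases h0 : 0 = k-1
      · rw [if_pos h0]; omega
      · rw [if_neg h0]
        have h1 : a' 0 < a' 1 := ha' 0 1 (by omega) (by omega)
        have h2 : (0:ℕ) + 1 = 1 := rfl
        rw [h2]
        omega
    · dsimp only
      rw [if_pos rfl, ← hmaxv]; exact haM'
    · intro i j hij hj
      exact hr i j hij (by omega)
    · intro j hj
      dsimp only
      have hj' : j < (S.map (· + 1)).length := by omega
      obtain ⟨hj1, hj2, hj3⟩ := hrs j hj'
      have hSj := hS j hj
      rw [gd_map_succ hj] at hj3
      have hidx : gd S j + 1 - 1 = gd S j := by omega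
      rw [hidx] at hj3
      have hd2 : 2 ≤ a' (gd S j) := by
        have h1 : a' 0 < a' (gd S j) := ha' 0 (gd S j) (by omega) (by omega)
        omega
      have hdv : a' (gd S j) ≤ v := by
        rcases Nat.lt_or_ge (gd S j) (k-1) with h | h
        · exact le_of_lt (ha' _ _ h (by omega))
        · have : gd S j = k - 1 := by omega
          rw [this]
      have hj1' : r j < π.length := by omega
      have hj2' : v ≤ pmax π (r j) := by rwa [pmax_themap τ hπ two] at hj2
      have hAr : if two then A2 τ π v (r j) else A1 τ π v (r j) :=
        hAπ _ (hA_to_r τ hA (by omega))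
      have hback := gd_themap_small_rev τ two hj1' hj3 hd2 hdv hj2' hAr
      refine ⟨hj1', ?_, ?_⟩
      · rw [if_pos rfl]
        exact hj2'
      · rw [if_neg (by omega)]
        have : gd S j - 1 + 1 = gd S j := by omega
        rw [this]
        exact hback
    · have hself : (if (k:ℕ) - 1 = k - 1 then v else a' (k-1+1) - 1) = v := if_pos rfl
      dsimp only
      cases two with
      | true =>
        simp only [if_true] at hA ⊢
        refine ⟨fun j hj => hA.1 j (by omega), ?_⟩
        have h := hAπ qb
        simp only [if_true] at h
        exact h hA.2
      | false =>
        simp only [Bool.false_eq_true, if_false] at hA ⊢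
        refine ⟨?_, fun j hj => hA.2 j (by omega)⟩
        have h := hAπ qb
        simp only [Bool.false_eq_true, if_false] at h
        exact h hA.1

/-- full containment equivalence, shape one -/
lemma contains_shape_one {k : ℕ} (hk : 2 ≤ k) {S π : List ℕ}
    (hτ1 : ∀ x, x < τ.length → 1 ≤ gd τ x)
    (hS : ∀ j, j < S.length → 1 ≤ gd S j ∧ gd S j ≤ k - 1) (hπ : Canon π) :
    ContainsPat π (iota k ++ τ.map (· + k) ++ S) ↔
      ContainsPat (themap τ false π) (iota k ++ τ.map (· + k) ++ S.map (· + 1)) := by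
  have hW : ∀ j, j < S.length → 1 ≤ gd S j ∧ gd S j ≤ k := by
    intro j hj; have := hS j hj; omega
  have hW' : ∀ j, j < (S.map (· + 1)).length → 1 ≤ gd (S.map (· + 1)) j ∧
      gd (S.map (· + 1)) j ≤ k := by
    intro j hj
    rw [List.length_map] at hj
    rw [gd_map_succ hj]
    have := hS j hj; omega
  rw [cont_iff, cont_iff, cont_iff_ch_one τ (by omega) hτ1 hW hπ,
    cont_iff_ch_one τ (by omega) hτ1 hW' (canon_themap τ hπ false)]
  exact ch_transfer τ false hk hS hπ

/-- full containment equivalence, shape two -/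
lemma contains_shape_two {k : ℕ} (hk : 2 ≤ k) {S π : List ℕ}
    (hτ1 : ∀ x, x < τ.length → 1 ≤ gd τ x)
    (hS : ∀ j, j < S.length → 1 ≤ gd S j ∧ gd S j ≤ k - 1) (hπ : Canon π) :
    ContainsPat π (iota k ++ S ++ τ.map (· + k)) ↔
      ContainsPat (themap τ true π) (iota k ++ S.map (· + 1) ++ τ.map (· + k)) := by
  have hW : ∀ j, j < S.length → 1 ≤ gd S j ∧ gd S j ≤ k := by
    intro j hj; have := hS j hj; omega
  have hW' : ∀ j, j < (S.map (· + 1)).length → 1 ≤ gd (S.map (· + 1)) j ∧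
      gd (S.map (· + 1)) j ≤ k := by
    intro j hj
    rw [List.length_map] at hj
    rw [gd_map_succ hj]
    have := hS j hj; omega
  rw [cont_iff, cont_iff, cont_iff_ch_two τ (by omega) hτ1 hW hπ,
    cont_iff_ch_two τ (by omega) hτ1 hW' (canon_themap τ hπ true)]
  exact ch_transfer τ true hk hS hπ

/-- generic counting lemma via the bijection `themap`/`theinv` -/
lemma pAvoid_eq_of_contains_iff (two : Bool) {σ σ' : List ℕ}
    (hcont : ∀ π, Canon π → (ContainsPat π σ ↔ ContainsPat (themap τ two π) σ'))
    (n : ℕ) : pAvoid n σ = pAvoid n σ' := by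
  unfold pAvoid
  set A := {π : List ℕ | π.length = n ∧ IsCanonicalSeq π ∧ AvoidsPat π σ} with hA
  set B := {π : List ℕ | π.length = n ∧ IsCanonicalSeq π ∧ AvoidsPat π σ'} with hB
  have himg : themap τ two '' A = B := by
    ext ρ
    constructor
    · rintro ⟨π, ⟨hlen, hcanon, havoid⟩, rfl⟩
      have hc : Canon π := (canon_iff π).mp hcanon
      refine ⟨by rw [length_themap]; exact hlen, ?_, ?_⟩
      · exact (canon_iff _).mpr (canon_themap τ hc two)
      · intro hcontains
        exact havoid ((hcont π hc).mpr hcontains)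
    · rintro ⟨hlen, hcanon, havoid⟩
      have hc : Canon ρ := (canon_iff ρ).mp hcanon
      refine ⟨theinv τ two ρ, ⟨by rw [length_theinv]; exact hlen, ?_, ?_⟩, ?_⟩
      · exact (canon_iff _).mpr (canon_theinv τ hc two)
      · intro hcontains
        apply havoid
        have h1 := hcont (theinv τ two ρ) (canon_theinv τ hc two)
        rw [themap_theinv τ hc two] at h1
        exact h1.mp hcontains
      · exact themap_theinv τ hc two
  have hinj : Set.InjOn (themap τ two) A := by
    intro π1 h1 π2 h2 heq
    have hc1 : Canon π1 := (canon_iff π1).mp h1.2.1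
    have hc2 : Canon π2 := (canon_iff π2).mp h2.2.1
    calc π1 = theinv τ two (themap τ two π1) := (theinv_themap τ hc1 two).symm
    _ = theinv τ two (themap τ two π2) := by rw [heq]
    _ = π2 := theinv_themap τ hc2 two
  rw [← himg, Set.ncard_image_of_injOn hinj]

end S4

/-- For k ≥ 2, a sequence S over {1,…,k−1} and a canonical
sequence τ: 1…k(τ+k)S ∼ 1…k(τ+k)(S+1) and 1…kS(τ+k) ∼ 1…k(S+1)(τ+k). -/
theorem statement4 (k : ℕ) (hk : 2 ≤ k) (S : List ℕ)
    (hS : ∀ x ∈ S, 1 ≤ x ∧ x ≤ k - 1) (τ : List ℕ) (hτ : IsCanonicalSeq τ) :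
    PatEquiv (iota k ++ τ.map (· + k) ++ S)
             (iota k ++ τ.map (· + k) ++ S.map (· + 1)) ∧
    PatEquiv (iota k ++ S ++ τ.map (· + k))
             (iota k ++ S.map (· + 1) ++ τ.map (· + k)) := by
  have hτ1 : ∀ x, x < τ.length → 1 ≤ S4.gd τ x := by
    intro x hx
    exact ((S4.canon_iff τ).mp hτ x hx).1
  have hS' : ∀ j, j < S.length → 1 ≤ S4.gd S j ∧ S4.gd S j ≤ k - 1 := by
    intro j hj
    rw [S4.gd_eq_get S j hj]
    exact hS _ (S.get_mem ⟨j, hj⟩)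
  constructor
  · intro n
    exact S4.pAvoid_eq_of_contains_iff τ false
      (fun π hπ => S4.contains_shape_one τ hk hτ1 hS' hπ) n
  · intro n
    exact S4.pAvoid_eq_of_contains_iff τ true
      (fun π hπ => S4.contains_shape_two τ hk hτ1 hS' hπ) n
end

section
/- For all integers m ≥ 1 and all j, k with 1 ≤ j, k ≤ m, the pattern 1ʲ21^{m−j} is equivalent to the pattern 1ᵏ21^{m−k}. In fact, for every n and every k with 1 ≤ k ≤ m, there is a bijection from P(n; 1ᵏ21^{m−k}) to P(n; 1^m 2) that preserves the number of blocks and the size of each block of the partition. -/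
namespace S7

/-- record, for each element ≠ c of the list, the number of c's preceding it,
starting from accumulator `acc`. -/
def gapsAux (c : ℕ) : ℕ → List ℕ → List ℕ
  | _, [] => []
  | acc, x :: xs => if x = c then gapsAux c (acc + 1) xs else acc :: gapsAux c acc xs

/-- reassemble: interleave `t` copies of `c` with the elements of `w` placed at gaps `gs`;
`cur` is the number of c's already emitted. -/
def asmAux (c : ℕ) : ℕ → ℕ → List ℕ → List ℕ → List ℕ
  | cur, t, x :: w, g :: gs => List.replicate (g - cur) c ++ x :: asmAux c g t w gs
  | cur, t, _, _ => List.replicate (t - cur) c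

/-- the gap relabelling map. -/
def phiGap (m k k' t g : ℕ) : ℕ :=
  if t < m then g
  else if g < k then (if g < k' then g else g + (t + 1 - m))
  else (if g - (t + 1 - m) < k' then g - (t + 1 - m) else g)

/-- canonical-above-`c` with running maximum `M`. -/
def Ok (c : ℕ) : ℕ → List ℕ → Prop
  | _, [] => True
  | M, x :: l => c < x ∧ x ≤ M + 1 ∧ Ok c (max M x) l

def Phi (m k k' : ℕ) : List ℕ → List ℕ
  | [] => []
  | x :: xs =>
    asmAux x 0 (xs.count x + 1) (Phi m k k' (xs.filter (· ≠ x)))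
      ((gapsAux x 1 xs).map (phiGap m k k' (xs.count x + 1)))
  termination_by l => l.length
  decreasing_by simpa using List.length_filter_le _ xs.attach

lemma phi_nil (m k k' : ℕ) : Phi m k k' [] = [] := by simp [Phi]

lemma phi_cons (m k k' x : ℕ) (xs : List ℕ) :
    Phi m k k' (x :: xs) = asmAux x 0 (xs.count x + 1) (Phi m k k' (xs.filter (· ≠ x)))
      ((gapsAux x 1 xs).map (phiGap m k k' (xs.count x + 1))) := by
  rw [Phi]

/-! basic gapsAux lemmas -/

lemma gapsAux_le (c : ℕ) : ∀ (l : List ℕ) (acc : ℕ), ∀ g ∈ gapsAux c acc l, acc ≤ g ∧ g ≤ acc + l.count c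
  | [], acc => by simp [gapsAux]
  | x :: xs, acc => by
    intro g hg
    by_cases h : x = c
    · simp only [gapsAux, if_pos h] at hg
      have := gapsAux_le c xs (acc + 1) g hg
      subst h
      simp [List.count_cons]
      omega
    · simp only [gapsAux, if_neg h, List.mem_cons] at hg
      rcases hg with hg | hg
      · subst hg; simp
      · have := gapsAux_le c xs acc g hg
        simp [List.count_cons, h]
        omega

lemma gapsAux_length (c : ℕ) : ∀ (l : List ℕ) (acc : ℕ),
    (gapsAux c acc l).length = (l.filter (· ≠ c)).length
  | [], acc => by simp [gapsAux]
  | x :: xs, acc => by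
    by_cases h : x = c <;> simp [gapsAux, h, gapsAux_length c xs]

lemma gapsAux_sorted (c : ℕ) : ∀ (l : List ℕ) (acc : ℕ), (gapsAux c acc l).Pairwise (· ≤ ·)
  | [], acc => by simp [gapsAux]
  | x :: xs, acc => by
    by_cases h : x = c
    · simpa [gapsAux, h] using gapsAux_sorted c xs (acc + 1)
    · simp only [gapsAux, if_neg h, List.pairwise_cons]
      exact ⟨fun g hg => (gapsAux_le c xs acc g hg).1, gapsAux_sorted c xs acc⟩

lemma asm_shift (c : ℕ) : ∀ (w gs : List ℕ) (a t : ℕ), (∀ g ∈ gs, a + 1 ≤ g) → a + 1 ≤ t →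
    asmAux c a t w gs = c :: asmAux c (a + 1) t w gs := by
  intro w gs a t hg ht
  match w, gs with
  | x :: w, g :: gs =>
    have h1 : a + 1 ≤ g := hg g (by simp)
    show List.replicate (g - a) c ++ _ = c :: (List.replicate (g - (a+1)) c ++ _)
    have : g - a = (g - (a+1)) + 1 := by omega
    rw [this, List.replicate_succ]
    simp
  | [], gs =>
    show List.replicate (t - a) c = c :: List.replicate (t - (a+1)) c
    have : t - a = (t - (a+1)) + 1 := by omega
    rw [this, List.replicate_succ]
  | x :: w, [] =>
    show List.replicate (t - a) c = c :: List.replicate (t - (a+1)) c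
    have : t - a = (t - (a+1)) + 1 := by omega
    rw [this, List.replicate_succ]

lemma gapsAux_replicate_append (c : ℕ) (n : ℕ) : ∀ (acc : ℕ) (l : List ℕ),
    gapsAux c acc (List.replicate n c ++ l) = gapsAux c (acc + n) l := by
  induction n with
  | zero => simp
  | succ n ih =>
    intro acc l
    rw [List.replicate_succ, List.cons_append, gapsAux, if_pos rfl, ih]
    congr 1
    omega

/-- A1: reassembling a list from its own data gives it back. -/
lemma asm_gaps (c : ℕ) : ∀ (xs : List ℕ) (acc : ℕ),
    asmAux c acc (acc + xs.count c) (xs.filter (· ≠ c)) (gapsAux c acc xs) = xs := by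
  intro xs
  induction xs with
  | nil => intro acc; simp [gapsAux, asmAux]
  | cons x xs ih =>
    intro acc
    by_cases h : x = c
    · subst h
      rw [gapsAux, if_pos rfl]
      have hfil : (x :: xs).filter (· ≠ x) = xs.filter (· ≠ x) := by simp
      rw [List.count_cons_self, hfil]
      have hsh : asmAux x acc (acc + (xs.count x + 1)) (xs.filter (· ≠ x)) (gapsAux x (acc+1) xs)
          = x :: asmAux x (acc + 1) (acc + (xs.count x + 1)) (xs.filter (· ≠ x)) (gapsAux x (acc+1) xs) := by
        apply asm_shift
        · intro g hg; exact (gapsAux_le x xs (acc+1) g hg).1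
        · omega
      rw [hsh]
      have : acc + (xs.count x + 1) = (acc + 1) + xs.count x := by omega
      rw [this, ih]
    · rw [gapsAux, if_neg h]
      have hfil : (x :: xs).filter (· ≠ c) = x :: xs.filter (· ≠ c) := by simp [h]
      rw [List.count_cons_of_ne h, hfil]
      show List.replicate (acc - acc) c ++ x :: _ = x :: xs
      simp only [Nat.sub_self, List.replicate_zero, List.nil_append]
      rw [ih]


/-! properties of assembled lists -/

lemma asm_count_self (c : ℕ) : ∀ (w gs : List ℕ) (acc t : ℕ), (∀ y ∈ w, y ≠ c) →
    (∀ g ∈ gs, acc ≤ g ∧ g ≤ t) → gs.Pairwise (· ≤ ·) → acc ≤ t →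
    (asmAux c acc t w gs).count c = t - acc := by
  intro w
  induction w with
  | nil => intro gs acc t _ _ _ h; simp [asmAux]
  | cons x w ih =>
    intro gs acc t hw hg hs hat
    match gs with
    | [] => simp [asmAux]
    | g :: gs =>
      rw [List.pairwise_cons] at hs
      have hgb := hg g (by simp)
      show (List.replicate (g - acc) c ++ x :: asmAux c g t w gs).count c = t - acc
      rw [List.count_append, List.count_cons_of_ne (hw x (by simp))]
      rw [List.count_replicate_self,
        ih gs g t (fun y hy => hw y (by simp [hy]))
          (fun g' hg' => ⟨hs.1 g' hg', (hg g' (by simp [hg'])).2⟩) hs.2 hgb.2]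
      omega

lemma asm_count_other (c y : ℕ) (hyc : y ≠ c) : ∀ (w gs : List ℕ) (acc t : ℕ),
    gs.length = w.length →
    (asmAux c acc t w gs).count y = w.count y := by
  intro w
  induction w with
  | nil =>
    intro gs acc t hlen
    rw [List.length_nil, List.length_eq_zero_iff] at hlen
    subst hlen
    simp [asmAux, List.count_replicate, Ne.symm hyc]
  | cons x w ih =>
    intro gs acc t hlen
    match gs with
    | g :: gs =>
      show (List.replicate (g - acc) c ++ x :: asmAux c g t w gs).count y = _
      rw [List.count_append, List.count_replicate, List.count_cons, List.count_cons,
        ih gs g t (by simpa using hlen)]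
      simp [Ne.symm hyc]

lemma asm_filter (c : ℕ) : ∀ (w gs : List ℕ) (acc t : ℕ), (∀ y ∈ w, y ≠ c) →
    gs.length = w.length →
    (asmAux c acc t w gs).filter (· ≠ c) = w := by
  intro w
  induction w with
  | nil =>
    intro gs acc t _ hlen
    rw [List.length_nil, List.length_eq_zero_iff] at hlen
    subst hlen
    simp [asmAux, List.filter_replicate]
  | cons x w ih =>
    intro gs acc t hw hlen
    match gs with
    | g :: gs =>
      show (List.replicate (g - acc) c ++ x :: asmAux c g t w gs).filter (· ≠ c) = _
      have hx : x ≠ c := hw x (by simp)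
      have h1 : (List.replicate (g - acc) c).filter (· ≠ c) = [] := by simp
      rw [List.filter_append, h1, List.nil_append,
        List.filter_cons_of_pos (by simp [hx]),
        ih gs g t (fun y hy => hw y (by simp [hy])) (by simpa using hlen)]

lemma asm_gaps_inv (c : ℕ) : ∀ (w gs : List ℕ) (acc t : ℕ), (∀ y ∈ w, y ≠ c) →
    gs.length = w.length → gs.Pairwise (· ≤ ·) → (∀ g ∈ gs, acc ≤ g ∧ g ≤ t) →
    gapsAux c acc (asmAux c acc t w gs) = gs := by
  intro w
  induction w with
  | nil =>
    intro gs acc t _ hlen _ _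
    rw [List.length_nil, List.length_eq_zero_iff] at hlen
    subst hlen
    show gapsAux c acc (List.replicate (t-acc) c) = []
    rw [← List.append_nil (List.replicate (t-acc) c), gapsAux_replicate_append]
    rfl
  | cons x w ih =>
    intro gs acc t hw hlen hs hb
    match gs with
    | g :: gs =>
      show gapsAux c acc (List.replicate (g - acc) c ++ x :: asmAux c g t w gs) = _
      rw [gapsAux_replicate_append]
      have hacc : acc ≤ g := (hb g (by simp)).1
      have : acc + (g - acc) = g := by omega
      rw [this, gapsAux, if_neg (hw x (by simp))]
      congr 1
      rw [List.pairwise_cons] at hs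
      exact ih gs g t (fun y hy => hw y (by simp [hy])) (by simpa using hlen) hs.2
        (fun g' hg' => ⟨hs.1 g' hg', (hb g' (by simp [hg'])).2⟩)

lemma asm_length (c : ℕ) : ∀ (w gs : List ℕ) (acc t : ℕ),
    (∀ g ∈ gs, acc ≤ g ∧ g ≤ t) → gs.Pairwise (· ≤ ·) → acc ≤ t → gs.length = w.length →
    (asmAux c acc t w gs).length = (t - acc) + w.length := by
  intro w
  induction w with
  | nil =>
    intro gs acc t _ _ _ hlen
    rw [List.length_nil, List.length_eq_zero_iff] at hlen
    subst hlen
    simp [asmAux]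
  | cons x w ih =>
    intro gs acc t hb hs hat hlen
    match gs with
    | g :: gs =>
      rw [List.pairwise_cons] at hs
      have hgb := hb g (by simp)
      show (List.replicate (g - acc) c ++ x :: asmAux c g t w gs).length = _
      rw [List.length_append, List.length_replicate, List.length_cons,
        ih gs g t (fun g' hg' => ⟨hs.1 g' hg', (hb g' (by simp [hg'])).2⟩) hs.2 hgb.2
          (by simpa using hlen)]
      simp only [List.length_cons]
      omega


/-! Ok lemmas -/

lemma ok_nil (c M : ℕ) : Ok c M [] := trivial

lemma ok_cons (c M x : ℕ) (l : List ℕ) :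
    Ok c M (x :: l) ↔ c < x ∧ x ≤ M + 1 ∧ Ok c (max M x) l := Iff.rfl

lemma ok_mem (c : ℕ) : ∀ (l : List ℕ) (M : ℕ), Ok c M l → ∀ x ∈ l, c < x
  | [], M => by simp
  | x :: xs, M => by
    intro h y hy
    rw [ok_cons] at h
    rcases List.mem_cons.1 hy with rfl | hy
    · exact h.1
    · exact ok_mem c xs (max M x) h.2.2 y hy

lemma ok_replicate_append (c M : ℕ) (hM : c + 1 ≤ M) :
    ∀ (n : ℕ) (L : List ℕ), Ok c M L → Ok c M (List.replicate n (c+1) ++ L)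
  | 0, L => by simpa
  | n + 1, L => by
    intro h
    rw [List.replicate_succ, List.cons_append, ok_cons]
    refine ⟨by omega, by omega, ?_⟩
    have : max M (c+1) = M := by omega
    rw [this]
    exact ok_replicate_append c M hM n L h

lemma ok_filter (c : ℕ) : ∀ (l : List ℕ) (M : ℕ), Ok c M l → c + 1 ≤ M →
    Ok (c+1) M (l.filter (· ≠ (c+1)))
  | [], M => by simp [ok_nil]
  | x :: xs, M => by
    intro h hM
    rw [ok_cons] at h
    by_cases hx : x = c + 1
    · subst hx
      rw [List.filter_cons_of_neg (by simp)]
      have : max M (c+1) = M := by omega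
      rw [this] at h
      exact ok_filter c xs M h.2.2 hM
    · rw [List.filter_cons_of_pos (by simp [hx])]
      rw [ok_cons]
      refine ⟨by omega, h.2.1, ?_⟩
      exact ok_filter c xs (max M x) h.2.2 (by omega)

lemma ok_asm (c : ℕ) : ∀ (w : List ℕ) (gs : List ℕ) (M cur t : ℕ),
    Ok (c+1) M w → c + 1 ≤ M → Ok c M (asmAux (c+1) cur t w gs)
  | [], gs, M, cur, t => by
    intro _ hM
    show Ok c M (List.replicate (t-cur) (c+1))
    simpa using ok_replicate_append c M hM (t-cur) [] (ok_nil c M)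
  | x :: w, [], M, cur, t => by
    intro _ hM
    show Ok c M (List.replicate (t-cur) (c+1))
    simpa using ok_replicate_append c M hM (t-cur) [] (ok_nil c M)
  | x :: w, g :: gs, M, cur, t => by
    intro h hM
    rw [ok_cons] at h
    show Ok c M (List.replicate (g-cur) (c+1) ++ x :: asmAux (c+1) g t w gs)
    apply ok_replicate_append c M hM
    rw [ok_cons]
    exact ⟨by omega, by omega, ok_asm c w gs (max M x) g t h.2.2 (by omega)⟩

/-! canonical sequences vs Ok -/

lemma foldr_max_base : ∀ (L : List ℕ) (a b : ℕ),
    L.foldr max (max a b) = max a (L.foldr max b)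
  | [], a, b => rfl
  | x :: L, a, b => by
    simp only [List.foldr_cons, foldr_max_base L a b]
    omega

lemma canonG_iff_ok : ∀ (l : List ℕ) (c M : ℕ),
    (∀ i (h : i < l.length), c < l.get ⟨i, h⟩ ∧ l.get ⟨i, h⟩ ≤ (l.take i).foldr max M + 1)
      ↔ Ok c M l
  | [], c, M => by simp [ok_nil]
  | x :: xs, c, M => by
    rw [ok_cons, ← canonG_iff_ok xs c (max M x)]
    constructor
    · intro h
      have h0 := h 0 (by simp)
      simp only [List.get_eq_getElem, List.getElem_cons_zero, List.take_zero,
        List.foldr_nil] at h0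
      refine ⟨h0.1, h0.2, fun i hi => ?_⟩
      have hs := h (i+1) (by simpa using Nat.succ_lt_succ hi)
      simp only [List.get_eq_getElem, List.getElem_cons_succ, List.take_succ_cons,
        List.foldr_cons] at hs
      refine ⟨hs.1, le_trans hs.2 ?_⟩
      have : (xs.take i).foldr max (max M x) = max x ((xs.take i).foldr max M) := by
        rw [max_comm M x, foldr_max_base]
      omega
    · rintro ⟨h1, h2, h3⟩ i hi
      match i with
      | 0 => simpa using ⟨h1, h2⟩
      | i + 1 =>
        have hs := h3 i (by simpa using hi)
        simp only [List.get_eq_getElem, List.getElem_cons_succ, List.take_succ_cons,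
          List.foldr_cons]
        refine ⟨hs.1, le_trans hs.2 ?_⟩
        have : (xs.take i).foldr max (max M x) = max x ((xs.take i).foldr max M) := by
          rw [max_comm M x, foldr_max_base]
        omega

lemma isCanonical_iff_ok (l : List ℕ) : IsCanonicalSeq l ↔ Ok 0 0 l := by
  rw [← canonG_iff_ok]
  rfl


/-! pattern characterization -/

open List in
def patL (m k a b : ℕ) : List ℕ := List.replicate k a ++ b :: List.replicate (m - k) a

open List in
def HasOcc (m k : ℕ) (π : List ℕ) : Prop := ∃ a b, a < b ∧ patL m k a b <+ π

lemma patL_length (m k a b : ℕ) (hk : k ≤ m) : (patL m k a b).length = m + 1 := by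
  simp [patL]; omega

lemma patL_getElem (m k a b : ℕ) (i : ℕ) (h : i < (patL m k a b).length) :
    (patL m k a b)[i] = if i = k then b else a := by
  rcases lt_trichotomy i k with hik | rfl | hik
  · simp only [patL] at h ⊢
    rw [List.getElem_append_left (by simpa using hik), List.getElem_replicate,
      if_neg (by omega)]
  · simp only [patL] at h ⊢
    rw [List.getElem_append_right (by simp)]
    simp
  · simp only [patL] at h ⊢
    rw [List.getElem_append_right (by simp; omega), if_neg (by omega)]
    have h2 : i - (List.replicate k a).length = (i - k - 1) + 1 := by simp; omega
    simp only [h2, List.getElem_cons_succ, List.getElem_replicate]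

lemma hasOcc_nil (m k : ℕ) : ¬ HasOcc m k [] := by
  rintro ⟨a, b, -, hsub⟩
  have := List.sublist_nil.1 hsub
  simp [patL] at this

lemma hasOcc_containsPat (m k : ℕ) (π : List ℕ) (h : HasOcc m k π) :
    ContainsPat π (patL m k 1 2) := by
  obtain ⟨a, b, hab, hsub⟩ := h
  obtain ⟨f, hf⟩ := List.sublist_iff_exists_fin_orderEmbedding_get_eq.1 hsub
  have hlen : (patL m k 1 2).length = (patL m k a b).length := by simp [patL]
  refine ⟨fun i => f (Fin.cast hlen i), ?_, ?_⟩
  · intro i j hij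
    exact f.strictMono (by simpa using hij)
  · intro i j
    have gi := hf (Fin.cast hlen i)
    have gj := hf (Fin.cast hlen j)
    rw [← gi, ← gj]
    simp only [List.get_eq_getElem, patL_getElem, Fin.coe_cast]
    split_ifs <;> omega

lemma containsPat_hasOcc (m k : ℕ) (hk1 : 1 ≤ k) (hkm : k ≤ m) (π : List ℕ)
    (h : ContainsPat π (patL m k 1 2)) : HasOcc m k π := by
  obtain ⟨f, hmono, hiff⟩ := h
  have hlen : (patL m k 1 2).length = m + 1 := patL_length _ _ _ _ hkm
  have h0 : (0 : ℕ) < (patL m k 1 2).length := by omega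
  have hkI : k < (patL m k 1 2).length := by omega
  have hget : ∀ i : Fin (patL m k 1 2).length,
      (patL m k 1 2).get i = if (i : ℕ) = k then 2 else 1 := by
    intro i
    simpa using patL_getElem m k 1 2 i.1 i.2
  have hab : π.get (f ⟨0, h0⟩) < π.get (f ⟨k, hkI⟩) := by
    apply (hiff ⟨0, h0⟩ ⟨k, hkI⟩).1
    rw [hget, hget]
    show (if 0 = k then 2 else 1) < (if k = k then 2 else 1)
    rw [if_neg (by omega), if_pos rfl]
    omega
  have hother : ∀ i : Fin (patL m k 1 2).length, (i : ℕ) ≠ k →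
      π.get (f i) = π.get (f ⟨0, h0⟩) := by
    intro i hi
    have h1 := (hiff i ⟨0, h0⟩).2
    have h2 := (hiff ⟨0, h0⟩ i).2
    rw [hget, hget] at h1 h2
    have hsi : (if (i : ℕ) = k then 2 else 1) = 1 := if_neg hi
    have hs0 : (if ((⟨0, h0⟩ : Fin (patL m k 1 2).length) : ℕ) = k then 2 else 1) = 1 := by
      show (if 0 = k then 2 else 1) = 1
      exact if_neg (by omega)
    rw [hsi, hs0] at h1 h2
    have e1 : ¬ (π.get (f i) < π.get (f ⟨0, h0⟩)) := fun hc => by omega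
    have e2 : ¬ (π.get (f ⟨0, h0⟩) < π.get (f i)) := fun hc => by omega
    omega
  refine ⟨π.get (f ⟨0, h0⟩), π.get (f ⟨k, hkI⟩), hab, ?_⟩
  rw [List.sublist_iff_exists_fin_orderEmbedding_get_eq]
  have hlen2 : (patL m k (π.get (f ⟨0, h0⟩)) (π.get (f ⟨k, hkI⟩))).length
      = (patL m k 1 2).length := by simp [patL]
  refine ⟨OrderEmbedding.ofStrictMono (fun i => f (Fin.cast hlen2 i))
    (fun i j hij => hmono (by simpa using hij)), ?_⟩
  intro ix
  show (patL m k _ _).get ix = π.get (f (Fin.cast hlen2 ix))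
  by_cases hik : (ix : ℕ) = k
  · have hc : Fin.cast hlen2 ix = ⟨k, hkI⟩ := by
      simp [Fin.ext_iff, hik]
    rw [hc]
    simp only [List.get_eq_getElem, patL_getElem, if_pos hik]
  · rw [hother (Fin.cast hlen2 ix) (by simpa using hik)]
    simp only [List.get_eq_getElem, patL_getElem, if_neg hik]

lemma avoids_iff (m k : ℕ) (hk1 : 1 ≤ k) (hkm : k ≤ m) (π : List ℕ) :
    AvoidsPat π (patL m k 1 2) ↔ ¬ HasOcc m k π :=
  not_congr ⟨containsPat_hasOcc m k hk1 hkm π, hasOcc_containsPat m k π⟩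


/-! gap membership lemmas -/

lemma gaps_mem_split (c : ℕ) : ∀ (U : List ℕ) (acc : ℕ) (b : ℕ) (V : List ℕ), b ≠ c →
    (acc + U.count c) ∈ gapsAux c acc (U ++ b :: V)
  | [], acc, b, V => by
    intro hb
    simp only [List.nil_append, List.count_nil, Nat.add_zero, gapsAux, if_neg hb]
    simp
  | x :: U, acc, b, V => by
    intro hb
    by_cases hx : x = c
    · simp only [List.cons_append, gapsAux, if_pos hx, hx, List.count_cons_self]
      have := gaps_mem_split c U (acc + 1) b V hb
      have h3 : acc + (U.count c + 1) = acc + 1 + U.count c := by omega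
      rw [h3]
      exact this
    · simp only [List.cons_append, gapsAux, if_neg hx,
        List.count_cons_of_ne hx]
      exact List.mem_cons_of_mem _ (gaps_mem_split c U acc b V hb)

lemma gaps_mem_exists_split (c : ℕ) : ∀ (l : List ℕ) (acc g : ℕ), g ∈ gapsAux c acc l →
    ∃ U b V, l = U ++ b :: V ∧ b ≠ c ∧ acc + U.count c = g
  | [], acc, g => by simp [gapsAux]
  | x :: xs, acc, g => by
    intro hg
    by_cases hx : x = c
    · simp only [gapsAux, if_pos hx] at hg
      obtain ⟨U, b, V, h1, h2, h3⟩ := gaps_mem_exists_split c xs (acc + 1) g hg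
      refine ⟨x :: U, b, V, by rw [h1]; rfl, h2, ?_⟩
      rw [hx, List.count_cons_self]
      omega
    · simp only [gapsAux, if_neg hx, List.mem_cons] at hg
      rcases hg with rfl | hg
      · exact ⟨[], x, xs, rfl, hx, by simp⟩
      · obtain ⟨U, b, V, h1, h2, h3⟩ := gaps_mem_exists_split c xs acc g hg
        exact ⟨x :: U, b, V, by rw [h1]; rfl, h2, by
          rw [List.count_cons_of_ne hx]; omega⟩

/-! the key decomposition of pattern containment -/

open List in
lemma hasOcc_decomp (m k c : ℕ) (hk1 : 1 ≤ k) (π : List ℕ) (hmem : ∀ x ∈ π, c + 1 ≤ x) :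
    HasOcc m k π ↔ HasOcc m k (π.filter (· ≠ (c+1))) ∨
      ∃ g ∈ gapsAux (c+1) 0 π, k ≤ g ∧ m - k ≤ π.count (c+1) - g := by
  constructor
  · rintro ⟨a, b, hab, hsub⟩
    have ha_mem : a ∈ π := hsub.subset (by
      simp only [patL, List.mem_append]
      exact Or.inl (by simp; omega))
    have ha : c + 1 ≤ a := hmem a ha_mem
    by_cases hac : a = c + 1
    · subst hac
      right
      rw [patL] at hsub
      obtain ⟨u, v, rfl, hu, hv⟩ := List.append_sublist_iff.1 hsub
      obtain ⟨r₁, r₂, rfl, hbr, hr⟩ := List.cons_sublist_iff.1 hv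
      obtain ⟨p, q, rfl⟩ := List.append_of_mem hbr
      have hbc : b ≠ c + 1 := by omega
      refine ⟨(u ++ p).count (c+1), ?_, ?_, ?_⟩
      · have := gaps_mem_split (c+1) (u ++ p) 0 b (q ++ r₂) hbc
        simpa [List.append_assoc] using this
      · calc k ≤ u.count (c+1) := List.replicate_sublist_iff.1 hu
          _ ≤ (u ++ p).count (c+1) := by rw [List.count_append]; omega
      · have h1 : m - k ≤ r₂.count (c+1) := List.replicate_sublist_iff.1 hr
        simp only [List.count_append, List.count_cons_of_ne hbc]
        omega
    · left
      refine ⟨a, b, hab, ?_⟩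
      have hpat : (patL m k a b).filter (· ≠ (c+1)) = patL m k a b := by
        apply List.filter_eq_self.2
        intro y hy
        simp only [patL, List.mem_append, List.mem_cons, List.mem_replicate] at hy
        have hy' : y = a ∨ y = b := by tauto
        have hbge : c + 1 < b := by omega
        simp only [ne_eq, decide_eq_true_eq]
        rcases hy' with rfl | rfl <;> omega
      rw [← hpat]
      exact hsub.filter _
  · rintro (⟨a, b, hab, hsub⟩ | ⟨g, hg, hgk, hgm⟩)
    · exact ⟨a, b, hab, hsub.trans List.filter_sublist⟩
    · obtain ⟨U, b, V, rfl, hbc, hcount⟩ := gaps_mem_exists_split (c+1) _ 0 g hg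
      have hb : c + 1 < b := by
        have := hmem b (by simp)
        omega
      refine ⟨c + 1, b, hb, ?_⟩
      rw [patL]
      apply List.Sublist.append
      · exact List.replicate_sublist_iff.2 (by omega)
      · apply List.cons_sublist_cons.2
        apply List.replicate_sublist_iff.2
        have hcv : (U ++ b :: V).count (c+1) = U.count (c+1) + V.count (c+1) := by
          rw [List.count_append, List.count_cons_of_ne hbc]
        omega


/-! phiGap lemmas -/

def AllowedG (m k t g : ℕ) : Prop := 1 ≤ g ∧ g ≤ t ∧ ¬(k ≤ g ∧ m - k ≤ t - g)

lemma phiGap_allowed {m k k' t g : ℕ} (hk1 : 1 ≤ k) (hk : k ≤ m) (hk1' : 1 ≤ k') (hk' : k' ≤ m)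
    (h : AllowedG m k t g) : AllowedG m k' t (phiGap m k k' t g) := by
  obtain ⟨h1, h2, h3⟩ := h
  unfold phiGap AllowedG
  split_ifs <;> omega

lemma phiGap_mono {m k k' t g h : ℕ} (hk1 : 1 ≤ k) (hk : k ≤ m) (hk1' : 1 ≤ k') (hk' : k' ≤ m)
    (hg : AllowedG m k t g) (hh : AllowedG m k t h) (hgh : g ≤ h) :
    phiGap m k k' t g ≤ phiGap m k k' t h := by
  obtain ⟨a1, a2, a3⟩ := hg
  obtain ⟨b1, b2, b3⟩ := hh
  unfold phiGap
  split_ifs <;> omega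

lemma phiGap_inv {m k k' t g : ℕ} (hk1 : 1 ≤ k) (hk : k ≤ m) (hk1' : 1 ≤ k') (hk' : k' ≤ m)
    (h : AllowedG m k t g) : phiGap m k' k t (phiGap m k k' t g) = g := by
  obtain ⟨h1, h2, h3⟩ := h
  unfold phiGap
  split_ifs <;> omega

lemma sorted_map_phi (m k k' t : ℕ) (hk1 : 1 ≤ k) (hk : k ≤ m) (hk1' : 1 ≤ k') (hk' : k' ≤ m) :
    ∀ gs : List ℕ, gs.Pairwise (· ≤ ·) → (∀ g ∈ gs, AllowedG m k t g) →
      (gs.map (phiGap m k k' t)).Pairwise (· ≤ ·)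
  | [] => by simp
  | g :: gs => by
    intro hs hall
    rw [List.pairwise_cons] at hs
    rw [List.map_cons, List.pairwise_cons]
    constructor
    · intro y hy
      obtain ⟨h', hh', rfl⟩ := List.mem_map.1 hy
      exact phiGap_mono hk1 hk hk1' hk' (hall g (by simp)) (hall h' (by simp [hh'])) (hs.1 h' hh')
    · exact sorted_map_phi m k k' t hk1 hk hk1' hk' gs hs.2 (fun g' hg' => hall g' (by simp [hg']))

lemma length_count_filter (c : ℕ) : ∀ l : List ℕ, l.length = l.count c + (l.filter (· ≠ c)).length
  | [] => by simp
  | x :: xs => by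
    by_cases hx : x = c
    · subst hx
      rw [List.length_cons, List.count_cons_self, List.filter_cons_of_neg (by simp)]
      rw [length_count_filter x xs]
      omega
    · rw [List.length_cons, List.count_cons_of_ne hx,
        List.filter_cons_of_pos (by simp [hx]), List.length_cons]
      rw [length_count_filter c xs]
      omega


/-! the main induction -/

lemma main (m : ℕ) (hm : 1 ≤ m) : ∀ (n : ℕ) (π : List ℕ), π.length ≤ n → ∀ (c k k' : ℕ),
    1 ≤ k → k ≤ m → 1 ≤ k' → k' ≤ m → Ok c c π → ¬ HasOcc m k π →
    Ok c c (Phi m k k' π) ∧ ¬ HasOcc m k' (Phi m k k' π) ∧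
    (∀ x, (Phi m k k' π).count x = π.count x) ∧
    (Phi m k k' π).length = π.length ∧
    Phi m k' k (Phi m k k' π) = π := by
  intro n
  induction n with
  | zero =>
    intro π hlen
    rw [Nat.le_zero, List.length_eq_zero_iff] at hlen
    subst hlen
    intro c k k' _ _ _ _ _ _
    simp [phi_nil, ok_nil, hasOcc_nil]
  | succ n ih =>
    intro π hlen c k k' hk1 hk hk1' hk' hok havoid
    match π with
    | [] => simp [phi_nil, ok_nil, hasOcc_nil]
    | x :: xs =>
      rw [ok_cons] at hok
      have hx : x = c + 1 := by omega
      subst hx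
      set t := xs.count (c+1) + 1 with ht
      set w := xs.filter (· ≠ (c+1)) with hw
      set gs := gapsAux (c+1) 1 xs with hgs
      have ht1 : 1 ≤ t := by omega
      have hokxs : Ok c (c+1) xs := by
        have h2 := hok.2.2
        have hmx : max c (c+1) = c + 1 := by omega
        rwa [hmx] at h2
      have hokw : Ok (c+1) (c+1) w := ok_filter c xs (c+1) hokxs (le_refl _)
      have hfilter_pi : ((c+1) :: xs).filter (· ≠ (c+1)) = w := by
        rw [hw, List.filter_cons_of_neg (by simp)]
      have hgaps_pi : gapsAux (c+1) 0 ((c+1) :: xs) = gs := by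
        rw [hgs]
        show (if (c+1 : ℕ) = c + 1 then gapsAux (c+1) (0+1) xs else _) = _
        rw [if_pos rfl]
      have hcount_pi : ((c+1) :: xs).count (c+1) = t := by
        rw [ht, List.count_cons_self]
      have hmem_pi : ∀ y ∈ (c+1) :: xs, c + 1 ≤ y := by
        intro y hy
        rcases List.mem_cons.1 hy with rfl | hy'
        · omega
        · have := ok_mem c xs (c+1) hokxs y hy'
          omega
      have hdec := hasOcc_decomp m k c hk1 ((c+1) :: xs) hmem_pi
      rw [hfilter_pi, hgaps_pi, hcount_pi] at hdec
      have havw : ¬ HasOcc m k w := fun hcon => havoid (hdec.2 (Or.inl hcon))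
      have hgap : ∀ g ∈ gs, ¬(k ≤ g ∧ m - k ≤ t - g) := by
        intro g hg hcon
        exact havoid (hdec.2 (Or.inr ⟨g, hg, hcon.1, hcon.2⟩))
      have hgs_allowed : ∀ g ∈ gs, AllowedG m k t g := by
        intro g hg
        have hb := gapsAux_le (c+1) xs 1 g hg
        exact ⟨by omega, by omega, hgap g hg⟩
      have hgs_sorted : gs.Pairwise (· ≤ ·) := gapsAux_sorted (c+1) xs 1
      have hgs_len : gs.length = w.length := gapsAux_length (c+1) xs 1
      have hwlen : w.length ≤ n := by
        have h1 : w.length ≤ xs.length := by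
          rw [hw]; exact List.length_filter_le _ xs
        have h2 : xs.length + 1 ≤ n + 1 := by simpa using hlen
        omega
      obtain ⟨ihok, ihav, ihcnt, ihlen, ihinv⟩ :=
        ih w hwlen (c+1) k k' hk1 hk hk1' hk' hokw havw
      set w' := Phi m k k' w with hw'
      set gs' := gs.map (phiGap m k k' t) with hgs'
      have hw_nc : (c+1) ∉ w := by
        rw [hw]
        simp
      have hw'_nc : ∀ y ∈ w', y ≠ c + 1 := by
        intro y hy hyc
        subst hyc
        have h0 : w'.count (c+1) = 0 := by
          rw [ihcnt (c+1)]
          exact List.count_eq_zero.2 hw_nc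
        exact (List.count_eq_zero.1 h0) hy
      have hgs'_allowed : ∀ g ∈ gs', AllowedG m k' t g := by
        intro g hg
        obtain ⟨g0, hg0, rfl⟩ := List.mem_map.1 hg
        exact phiGap_allowed hk1 hk hk1' hk' (hgs_allowed g0 hg0)
      have hgs'_bounds : ∀ g ∈ gs', 1 ≤ g ∧ g ≤ t := by
        intro g hg
        have := hgs'_allowed g hg
        exact ⟨this.1, this.2.1⟩
      have hgs'_sorted : gs'.Pairwise (· ≤ ·) :=
        sorted_map_phi m k k' t hk1 hk hk1' hk' gs hgs_sorted hgs_allowed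
      have hgs'_len : gs'.length = w'.length := by
        rw [hgs', List.length_map, hgs_len, ← ihlen]
      -- the assembled list
      have hphi : Phi m k k' ((c+1) :: xs) = asmAux (c+1) 0 t w' gs' := by
        rw [phi_cons, ← ht, ← hw, ← hgs, ← hw', ← hgs']
      set A2 := asmAux (c+1) 1 t w' gs' with hA2
      have hcons : asmAux (c+1) 0 t w' gs' = (c+1) :: A2 := by
        rw [hA2]
        have h01 : (0 : ℕ) + 1 = 1 := rfl
        rw [← h01]
        exact asm_shift (c+1) w' gs' 0 t (fun g hg => by have := (hgs'_bounds g hg).1; omega) (by omega)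
      rw [hphi, hcons]
      -- component facts
      have hcntA2_self : A2.count (c+1) = t - 1 :=
        asm_count_self (c+1) w' gs' 1 t hw'_nc
          (fun g hg => hgs'_bounds g hg) hgs'_sorted ht1
      have hfilterA2 : A2.filter (· ≠ (c+1)) = w' :=
        asm_filter (c+1) w' gs' 1 t hw'_nc hgs'_len
      have hgapsA2 : gapsAux (c+1) 1 A2 = gs' :=
        asm_gaps_inv (c+1) w' gs' 1 t hw'_nc hgs'_len hgs'_sorted
          (fun g hg => hgs'_bounds g hg)
      have hlenA2 : A2.length = (t - 1) + w'.length :=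
        asm_length (c+1) w' gs' 1 t (fun g hg => hgs'_bounds g hg) hgs'_sorted ht1 hgs'_len
      have hokA : Ok c c ((c+1) :: A2) := by
        rw [ok_cons]
        refine ⟨by omega, by omega, ?_⟩
        have hmx : max c (c+1) = c + 1 := by omega
        rw [hmx]
        exact ok_asm c w' gs' (c+1) 1 t ihok (le_refl _)
      have hcnt : ∀ y, ((c+1) :: A2).count y = ((c+1) :: xs).count y := by
        intro y
        by_cases hy : y = c + 1
        · subst hy
          rw [List.count_cons_self, List.count_cons_self, hcntA2_self]
          omega
        · rw [List.count_cons_of_ne (Ne.symm hy), List.count_cons_of_ne (Ne.symm hy)]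
          rw [asm_count_other (c+1) y hy w' gs' 1 t hgs'_len, ihcnt y]
          rw [hw, List.count_filter (by simpa using hy)]
      refine ⟨hokA, ?_, hcnt, ?_, ?_⟩
      · -- avoidance of the image
        have hmemA : ∀ y ∈ (c+1) :: A2, c + 1 ≤ y := by
          intro y hy
          have := ok_mem c ((c+1) :: A2) c hokA y hy
          omega
        have hdecA := hasOcc_decomp m k' c hk1' ((c+1) :: A2) hmemA
        rintro hcon
        rcases hdecA.1 hcon with hl | ⟨g, hg, hg1, hg2⟩
        · apply ihav
          have hfA : ((c+1) :: A2).filter (· ≠ (c+1)) = w' := by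
            rw [List.filter_cons_of_neg (by simp), hfilterA2]
          rwa [hfA] at hl
        · have hgaps_A : gapsAux (c+1) 0 ((c+1) :: A2) = gs' := by
            show (if (c+1 : ℕ) = c + 1 then gapsAux (c+1) (0+1) A2 else _) = _
            rw [if_pos rfl]
            exact hgapsA2
          rw [hgaps_A] at hg
          have hcA : ((c+1) :: A2).count (c+1) = t := by
            rw [List.count_cons_self, hcntA2_self]
            omega
          rw [hcA] at hg2
          exact (hgs'_allowed g hg).2.2 ⟨hg1, hg2⟩
      · -- length
        rw [List.length_cons, List.length_cons, hlenA2, ihlen]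
        have := length_count_filter (c+1) xs
        rw [← hw] at this
        omega
      · -- round trip
        rw [phi_cons]
        have e1 : A2.count (c+1) + 1 = t := by omega
        have e2 : A2.filter (· ≠ (c+1)) = w' := hfilterA2
        rw [e1, e2, hgapsA2, ihinv]
        have e3 : gs'.map (phiGap m k' k t) = gs := by
          rw [hgs', List.map_map]
          have : gs.map (phiGap m k' k t ∘ phiGap m k k' t) = gs.map id := by
            apply List.map_congr_left
            intro g hg
            exact phiGap_inv hk1 hk hk1' hk' (hgs_allowed g hg)
          rw [this, List.map_id]
        rw [e3]
        have := asm_gaps (c+1) ((c+1) :: xs) 0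
        rw [hcount_pi, hfilter_pi, hgaps_pi] at this
        simpa using this


/-! final assembly -/

def theEquiv (m k n : ℕ) (hm : 1 ≤ m) (hk1 : 1 ≤ k) (hk : k ≤ m) :
    {π : List ℕ // π.length = n ∧ IsCanonicalSeq π ∧ AvoidsPat π (patL m k 1 2)} ≃
    {π : List ℕ // π.length = n ∧ IsCanonicalSeq π ∧ AvoidsPat π (patL m m 1 2)} where
  toFun p :=
    ⟨Phi m k m p.1, by
      obtain ⟨h1, h2, h3⟩ := p.2
      obtain ⟨m1, m2, m3, m4, m5⟩ := main m hm p.1.length p.1 le_rfl 0 k m hk1 hk hm le_rfl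
        ((isCanonical_iff_ok p.1).1 h2) ((avoids_iff m k hk1 hk p.1).1 h3)
      exact ⟨by rw [m4, h1], (isCanonical_iff_ok _).2 m1, (avoids_iff m m hm le_rfl _).2 m2⟩⟩
  invFun p :=
    ⟨Phi m m k p.1, by
      obtain ⟨h1, h2, h3⟩ := p.2
      obtain ⟨m1, m2, m3, m4, m5⟩ := main m hm p.1.length p.1 le_rfl 0 m k hm le_rfl hk1 hk
        ((isCanonical_iff_ok p.1).1 h2) ((avoids_iff m m hm le_rfl p.1).1 h3)
      exact ⟨by rw [m4, h1], (isCanonical_iff_ok _).2 m1, (avoids_iff m k hk1 hk _).2 m2⟩⟩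
  left_inv p := by
    obtain ⟨h1, h2, h3⟩ := p.2
    obtain ⟨m1, m2, m3, m4, m5⟩ := main m hm p.1.length p.1 le_rfl 0 k m hk1 hk hm le_rfl
      ((isCanonical_iff_ok p.1).1 h2) ((avoids_iff m k hk1 hk p.1).1 h3)
    exact Subtype.ext m5
  right_inv p := by
    obtain ⟨h1, h2, h3⟩ := p.2
    obtain ⟨m1, m2, m3, m4, m5⟩ := main m hm p.1.length p.1 le_rfl 0 m k hm le_rfl hk1 hk
      ((isCanonical_iff_ok p.1).1 h2) ((avoids_iff m m hm le_rfl p.1).1 h3)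
    exact Subtype.ext m5

lemma theEquiv_count (m k n : ℕ) (hm : 1 ≤ m) (hk1 : 1 ≤ k) (hk : k ≤ m)
    (p : {π : List ℕ // π.length = n ∧ IsCanonicalSeq π ∧ AvoidsPat π (patL m k 1 2)})
    (j : ℕ) : ((theEquiv m k n hm hk1 hk) p).val.count j = p.val.count j := by
  obtain ⟨h1, h2, h3⟩ := p.2
  obtain ⟨m1, m2, m3, m4, m5⟩ := main m hm p.1.length p.1 le_rfl 0 k m hk1 hk hm le_rfl
    ((isCanonical_iff_ok p.1).1 h2) ((avoids_iff m k hk1 hk p.1).1 h3)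
  exact m3 j

lemma pAvoid_eq (m k n : ℕ) (hm : 1 ≤ m) (hk1 : 1 ≤ k) (hk : k ≤ m) :
    pAvoid n (patL m k 1 2) = pAvoid n (patL m m 1 2) := by
  unfold pAvoid
  rw [← Nat.card_coe_set_eq, ← Nat.card_coe_set_eq]
  exact Nat.card_congr (theEquiv m k n hm hk1 hk)

end S7

/-- For m ≥ 1 and 1 ≤ j, k ≤ m, the patterns 1^j21^(m−j) and
1^k21^(m−k) are equivalent; moreover for every n and every 1 ≤ k ≤ m
there is a bijection between P(n; 1^k21^(m−k)) and P(n; 1^m 2) preserving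
the number of blocks and the size of each block (i.e. the count of every
symbol, which determines both). -/
theorem statement7 (m : ℕ) (hm : 1 ≤ m) :
    (∀ j k : ℕ, 1 ≤ j → j ≤ m → 1 ≤ k → k ≤ m →
      PatEquiv (List.replicate j 1 ++ 2 :: List.replicate (m - j) 1)
               (List.replicate k 1 ++ 2 :: List.replicate (m - k) 1)) ∧
    (∀ n k : ℕ, 1 ≤ k → k ≤ m →
      ∃ F : {π : List ℕ // π.length = n ∧ IsCanonicalSeq π ∧
               AvoidsPat π (List.replicate k 1 ++ 2 :: List.replicate (m - k) 1)} ≃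
            {π : List ℕ // π.length = n ∧ IsCanonicalSeq π ∧
               AvoidsPat π (List.replicate m 1 ++ [2])},
        ∀ π, ∀ j : ℕ, (F π).val.count j = π.val.count j) := by
  constructor
  · intro j k hj1 hjm hk1 hkm n
    show pAvoid n (S7.patL m j 1 2) = pAvoid n (S7.patL m k 1 2)
    rw [S7.pAvoid_eq m j n hm hj1 hjm, S7.pAvoid_eq m k n hm hk1 hkm]
  · intro n k hk1 hkm
    have hpat : (List.replicate m 1 ++ [2] : List ℕ) = S7.patL m m 1 2 := by
      simp [S7.patL]
    rw [hpat]
    exact ⟨S7.theEquiv m k n hm hk1 hkm, S7.theEquiv_count m k n hm hk1 hkm⟩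
end

section
/- Let π be the canonical sequence of a partition with exactly p occurrences of the symbol 1, written uniquely as π = 1P₁1P₂⋯1P_{p−1}1P_p where each chunk Pᵢ is a (possibly empty) maximal contiguous subsequence of π containing no symbol 1, and let π⁻ be the sequence obtained by concatenating P₁P₂⋯P_p and subtracting 1 from every symbol. Then for any integers r ≥ 1 and s ≥ 0, π avoids the pattern 1ʳ21ˢ if and only if both of the following hold: (i) π⁻ avoids 1ʳ21ˢ, and (ii) the chunk Pᵢ is empty for every i with r ≤ i ≤ p−s. -/
open scoped List


private lemma pat_getElem (r s a b : ℕ) (i : ℕ)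
    (h : i < (List.replicate r a ++ b :: List.replicate s a).length) :
    (List.replicate r a ++ b :: List.replicate s a)[i] = if i = r then b else a := by
  have hlen : (List.replicate r a).length = r := List.length_replicate ..
  rcases lt_trichotomy i r with hi | rfl | hi
  · rw [List.getElem_append_left (by omega), List.getElem_replicate, if_neg (by omega)]
  · rw [List.getElem_append_right (by omega), if_pos rfl]
    simp [hlen]
  · rw [List.getElem_append_right (by omega), if_neg (by omega)]
    simp only [hlen]
    obtain ⟨k, hk⟩ : ∃ k, i - r = k + 1 := ⟨i - r - 1, by omega⟩
    simp only [hk, List.getElem_cons_succ, List.getElem_replicate]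

private lemma containsPat_iff_s8 (π : List ℕ) (r s : ℕ) (hr : 1 ≤ r) :
    ContainsPat π (List.replicate r 1 ++ 2 :: List.replicate s 1) ↔
      ∃ a b, a < b ∧ (List.replicate r a ++ b :: List.replicate s a) <+ π := by
  constructor
  · rintro ⟨f, hmono, hiso⟩
    have hlen : (List.replicate r 1 ++ 2 :: List.replicate s 1).length = r + (s + 1) := by simp
    have h0 : 0 < (List.replicate r 1 ++ 2 :: List.replicate s 1).length := by omega
    have hrlt : r < (List.replicate r 1 ++ 2 :: List.replicate s 1).length := by omega
    have hgetτ : ∀ i : Fin (List.replicate r 1 ++ 2 :: List.replicate s 1).length,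
        (List.replicate r 1 ++ 2 :: List.replicate s 1).get i = if (i : ℕ) = r then 2 else 1 :=
      fun i => by simpa using pat_getElem r s 1 2 i i.2
    have hval : ∀ i : Fin (List.replicate r 1 ++ 2 :: List.replicate s 1).length,
        (i : ℕ) ≠ r → π.get (f i) = π.get (f ⟨0, h0⟩) := by
      intro i hi
      have h1 := hiso i ⟨0, h0⟩
      have h2 := hiso ⟨0, h0⟩ i
      rw [hgetτ, hgetτ, if_neg hi, if_neg (show ¬((0:ℕ) = r) by omega)] at h1
      rw [hgetτ, hgetτ, if_neg (show ¬((0:ℕ) = r) by omega), if_neg hi] at h2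
      omega
    have hab : π.get (f ⟨0, h0⟩) < π.get (f ⟨r, hrlt⟩) := by
      have h1 := hiso ⟨0, h0⟩ ⟨r, hrlt⟩
      rw [hgetτ, hgetτ, if_neg (show ¬((0:ℕ) = r) by omega),
        if_pos (show (r:ℕ) = r from rfl)] at h1
      exact h1.mp (by omega)
    refine ⟨π.get (f ⟨0, h0⟩), π.get (f ⟨r, hrlt⟩), hab, ?_⟩
    rw [List.sublist_iff_exists_fin_orderEmbedding_get_eq]
    have hlen' : (List.replicate r (π.get (f ⟨0, h0⟩)) ++
        π.get (f ⟨r, hrlt⟩) :: List.replicate s (π.get (f ⟨0, h0⟩))).length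
        = (List.replicate r 1 ++ 2 :: List.replicate s 1).length := by simp
    refine ⟨((Fin.castOrderIso hlen').toOrderEmbedding).trans
      (OrderEmbedding.ofStrictMono f hmono), fun ix => ?_⟩
    show _ = π.get (f (Fin.cast hlen' ix))
    have hgl : (List.replicate r (π.get (f ⟨0, h0⟩)) ++
        π.get (f ⟨r, hrlt⟩) :: List.replicate s (π.get (f ⟨0, h0⟩))).get ix
        = if (ix : ℕ) = r then π.get (f ⟨r, hrlt⟩) else π.get (f ⟨0, h0⟩) := by
      simpa using pat_getElem r s _ _ ix ix.2
    rw [hgl]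
    by_cases hc : (ix : ℕ) = r
    · rw [if_pos hc]
      have hcast : Fin.cast hlen' ix = ⟨r, hrlt⟩ := Fin.ext (by simpa using hc)
      rw [hcast]
    · rw [if_neg hc]
      exact (hval (Fin.cast hlen' ix) (by simpa using hc)).symm
  · rintro ⟨a, b, hab, hsub⟩
    rw [List.sublist_iff_exists_fin_orderEmbedding_get_eq] at hsub
    obtain ⟨g, hg⟩ := hsub
    have hlen' : (List.replicate r 1 ++ 2 :: List.replicate s 1).length
        = (List.replicate r a ++ b :: List.replicate s a).length := by simp
    refine ⟨fun i => g (Fin.cast hlen' i), fun i j hij => g.strictMono (by simpa using hij), ?_⟩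
    intro i j
    have h1 : ∀ i : Fin (List.replicate r 1 ++ 2 :: List.replicate s 1).length,
        (List.replicate r 1 ++ 2 :: List.replicate s 1).get i = if (i : ℕ) = r then 2 else 1 :=
      fun i => by simpa using pat_getElem r s 1 2 i i.2
    have h2 : ∀ i : Fin (List.replicate r 1 ++ 2 :: List.replicate s 1).length,
        π.get (g (Fin.cast hlen' i)) = if (i : ℕ) = r then b else a := by
      intro i
      rw [← hg (Fin.cast hlen' i)]
      simpa using pat_getElem r s a b (i : ℕ) (by simpa using i.2)
    rw [h1, h1, h2, h2]
    split_ifs <;> omega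

private lemma count_one_flatten (P : List (List ℕ)) (hP : ∀ Q ∈ P, (1 : ℕ) ∉ Q) :
    List.count 1 ((P.map (fun Q => 1 :: Q)).flatten) = P.length := by
  induction P with
  | nil => simp
  | cons Q P' ih =>
    simp only [List.map_cons, List.flatten_cons, List.count_append, List.length_cons,
      List.count_cons_self]
    rw [List.count_eq_zero.2 (hP Q (List.mem_cons_self)),
      ih (fun R hR => hP R (List.mem_cons_of_mem _ hR))]
    omega

private lemma flatten_sub (P : List (List ℕ)) :
    P.flatten <+ (P.map (fun Q => 1 :: Q)).flatten := by
  induction P with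
  | nil => simp
  | cons Q P' ih =>
    simp only [List.map_cons, List.flatten_cons]
    exact (List.sublist_cons_self 1 Q).append ih

private lemma filter_flatten (P : List (List ℕ)) (hP : ∀ Q ∈ P, (1 : ℕ) ∉ Q) :
    ((P.map (fun Q => 1 :: Q)).flatten).filter (fun x => x ≠ 1) = P.flatten := by
  induction P with
  | nil => simp
  | cons Q P' ih =>
    simp only [List.map_cons, List.flatten_cons, List.filter_append, List.filter_cons]
    rw [if_neg (by simp), List.filter_eq_self.2 (fun a ha => by
      simp only [ne_eq, decide_eq_true_eq]
      rintro rfl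
      exact hP Q (List.mem_cons_self) ha),
      ih (fun R hR => hP R (List.mem_cons_of_mem _ hR))]

private lemma prefix_cases {r s b : ℕ} {u v : List ℕ}
    (h : u ++ v = List.replicate r 1 ++ b :: List.replicate s 1)
    (hu : (1 : ℕ) ∉ u) (hb : b ≠ 1) :
    (u = [] ∧ v = List.replicate r 1 ++ b :: List.replicate s 1) ∨
      (r = 0 ∧ u = [b] ∧ v = List.replicate s 1) := by
  cases u with
  | nil => exact Or.inl ⟨rfl, by simpa using h⟩
  | cons x u' =>
    right
    cases r with
    | succ r' =>
      rw [List.replicate_succ, List.cons_append, List.cons_append] at h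
      obtain ⟨hx, -⟩ := List.cons_eq_cons.1 h
      subst hx
      exact (hu (List.mem_cons_self)).elim
    | zero =>
      simp only [List.replicate_zero, List.nil_append, List.cons_append] at h
      obtain ⟨hx, huv⟩ := List.cons_eq_cons.1 h
      subst hx
      have hu' : u' = [] := by
        cases u' with
        | nil => rfl
        | cons y u'' =>
          have : y ∈ List.replicate s 1 := huv ▸ List.mem_append_left _ (List.mem_cons_self)
          exact absurd (List.eq_of_mem_replicate this ▸
            (List.mem_cons_of_mem _ (List.mem_cons_self (a := y) (l := u'')))) hu
      subst hu'
      exact ⟨rfl, rfl, by simpa using huv⟩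

private lemma key_lemma (P : List (List ℕ)) (hP : ∀ Q ∈ P, (1 : ℕ) ∉ Q) (r s b : ℕ) (hb : b ≠ 1)
    (h : (List.replicate r 1 ++ b :: List.replicate s 1) <+ (P.map (fun Q => 1 :: Q)).flatten) :
    ∃ i, i < P.length ∧ P.getD i [] ≠ [] ∧ r ≤ i + 1 ∧ i + 1 + s ≤ P.length := by
  induction P generalizing r with
  | nil =>
    rw [List.map_nil, List.flatten_nil] at h
    have := List.sublist_nil.1 h
    simp at this
  | cons Q P' ih =>
    have hPQ : (1 : ℕ) ∉ Q := hP Q (List.mem_cons_self)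
    have hP' : ∀ R ∈ P', (1 : ℕ) ∉ R := fun R hR => hP R (List.mem_cons_of_mem _ hR)
    rw [List.map_cons, List.flatten_cons] at h
    rw [List.cons_append] at h
    have base : ∀ v : List ℕ, [b] <+ Q → v = List.replicate s 1 →
        v <+ (P'.map (fun R => 1 :: R)).flatten →
        ∃ i, i < (Q :: P').length ∧ (Q :: P').getD i [] ≠ [] ∧ 1 ≤ i + 1 ∧
          i + 1 + s ≤ (Q :: P').length := by
      intro v hbQ hveq hv
      have hQne : Q ≠ [] := by
        rintro rfl
        simpa using (List.sublist_nil.1 hbQ)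
      have hs : s ≤ P'.length := by
        have := hv.count_le 1
        rw [hveq, List.count_replicate_self, count_one_flatten P' hP'] at this
        exact this
      exact ⟨0, by simp, by simpa using hQne, by omega, by simp; omega⟩
    have shift : ∀ r', r ≤ r' + 1 →
        (List.replicate r' 1 ++ b :: List.replicate s 1) <+ (P'.map (fun R => 1 :: R)).flatten →
        ∃ i, i < (Q :: P').length ∧ (Q :: P').getD i [] ≠ [] ∧ r ≤ i + 1 ∧
          i + 1 + s ≤ (Q :: P').length := by
      intro r' hr' hv
      obtain ⟨i, hi, hne, h1, h2⟩ := ih hP' r' hv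
      refine ⟨i + 1, by simpa using Nat.succ_lt_succ hi, by simpa using hne, by omega, ?_⟩
      simp only [List.length_cons]
      omega
    rcases List.sublist_cons_iff.1 h with h' | ⟨w, hw, hw'⟩
    · obtain ⟨u, v, huv, hu, hv⟩ := List.sublist_append_iff.1 h'
      have h1u : (1 : ℕ) ∉ u := fun h1 => hPQ (hu.subset h1)
      rcases prefix_cases huv.symm h1u hb with ⟨rfl, hveq⟩ | ⟨hr0, rfl, hveq⟩
      · exact shift r (by omega) (hveq ▸ hv)
      · obtain ⟨i, hi, hne, _, h2⟩ := base v hu hveq hv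
        exact ⟨i, hi, hne, by omega, h2⟩
    · cases r with
      | zero =>
        simp only [List.replicate_zero, List.nil_append] at hw
        exact absurd (List.head_eq_of_cons_eq hw) hb
      | succ r' =>
        rw [List.replicate_succ, List.cons_append] at hw
        obtain ⟨-, ht⟩ := List.cons_eq_cons.1 hw.symm
        subst ht
        obtain ⟨u, v, huv, hu, hv⟩ := List.sublist_append_iff.1 hw'
        have h1u : (1 : ℕ) ∉ u := fun h1 => hPQ (hu.subset h1)
        rcases prefix_cases huv.symm h1u hb with ⟨rfl, hveq⟩ | ⟨hr0, rfl, hveq⟩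
        · exact shift r' (by omega) (hveq ▸ hv)
        · obtain ⟨i, hi, hne, _, h2⟩ := base v hu hveq hv
          exact ⟨i, hi, hne, by omega, h2⟩
private lemma chunk_occ (P : List (List ℕ)) (hP : ∀ Q ∈ P, (1 : ℕ) ∉ Q)
    (hge : ∀ Q ∈ P, ∀ x ∈ Q, 1 < x) (r s i : ℕ)
    (hi : i < P.length) (hne : P.getD i [] ≠ []) (h1 : r ≤ i + 1) (h2 : i + 1 + s ≤ P.length) :
    ∃ a b, a < b ∧ (List.replicate r a ++ b :: List.replicate s a) <+
      (P.map (fun Q => 1 :: Q)).flatten := by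
  have hgd : P.getD i [] = P[i] := List.getD_eq_getElem P [] hi
  obtain ⟨b, t, hbt⟩ : ∃ b t, P[i] = b :: t := by
    rcases hQ : P[i] with _ | ⟨b, t⟩
    · exact absurd (hgd.trans hQ) hne
    · exact ⟨b, t, rfl⟩
  have hbmem : b ∈ P[i] := by rw [hbt]; exact List.mem_cons_self
  have hb : 1 < b := hge P[i] (List.getElem_mem hi) b hbmem
  refine ⟨1, b, hb, ?_⟩
  have hPsplit : P = P.take i ++ P[i] :: P.drop (i + 1) := by
    conv_lhs => rw [← List.take_append_drop i P, ← List.getElem_cons_drop hi]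
  have hdecomp : (P.map (fun Q => 1 :: Q)).flatten
      = (((P.take i).map (fun Q => 1 :: Q)).flatten ++ [1]) ++
        (P[i] ++ ((P.drop (i + 1)).map (fun Q => 1 :: Q)).flatten) := by
    conv_lhs => rw [hPsplit]
    rw [List.map_append, List.flatten_append, List.map_cons, List.flatten_cons]
    simp [List.append_assoc]
  rw [hdecomp]
  have sub1 : List.replicate r 1 <+ ((P.take i).map (fun Q => 1 :: Q)).flatten ++ [1] := by
    apply List.replicate_sublist_iff.2
    rw [List.count_append]
    have := count_one_flatten (P.take i) (fun R hR => hP R (List.mem_of_mem_take hR))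
    rw [this, List.length_take]
    simp
    omega
  have sub2 : b :: List.replicate s 1 <+
      P[i] ++ ((P.drop (i + 1)).map (fun Q => 1 :: Q)).flatten := by
    rw [hbt, List.cons_append]
    apply List.Sublist.cons₂
    have hs : List.replicate s 1 <+ ((P.drop (i + 1)).map (fun Q => 1 :: Q)).flatten := by
      apply List.replicate_sublist_iff.2
      rw [count_one_flatten (P.drop (i + 1)) (fun R hR => hP R (List.mem_of_mem_drop hR)),
        List.length_drop]
      omega
    exact hs.trans (List.sublist_append_right _ _)
  exact sub1.append sub2

/-- Let π be a canonical sequence decomposed as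
π = 1P₁1P₂⋯1P_p where the chunks Pᵢ contain no symbol 1 (so p = P.length
is the number of occurrences of 1), and let π⁻ be the concatenation of the
chunks with every symbol decreased by one. Then for r ≥ 1, s ≥ 0: π avoids
1^r 2 1^s iff π⁻ avoids 1^r 2 1^s and every chunk Pᵢ with r ≤ i ≤ p − s is
empty (chunks indexed 1-based; the 0-based chunk at index i is chunk i+1). -/
theorem statement8 (π : List ℕ) (hπ : IsCanonicalSeq π) (P : List (List ℕ))
    (hdec : π = (P.map (fun Q => 1 :: Q)).flatten)
    (hP : ∀ Q ∈ P, (1 : ℕ) ∉ Q) (r s : ℕ) (hr : 1 ≤ r) :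
    AvoidsPat π (List.replicate r 1 ++ 2 :: List.replicate s 1) ↔
      (AvoidsPat (P.flatten.map (· - 1)) (List.replicate r 1 ++ 2 :: List.replicate s 1) ∧
       ∀ i : ℕ, i < P.length → r ≤ i + 1 → i + 1 + s ≤ P.length → P.getD i [] = []) := by
  subst hdec
  have hmem1 : ∀ x ∈ (P.map (fun Q => 1 :: Q)).flatten, 1 ≤ x := by
    intro x hx
    obtain ⟨i, rfl⟩ := List.mem_iff_get.1 hx
    exact (hπ i.1 i.2).1
  have hge : ∀ Q ∈ P, ∀ x ∈ Q, 1 < x := by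
    intro Q hQ x hx
    have hxπ : x ∈ (P.map (fun Q => 1 :: Q)).flatten :=
      (flatten_sub P).subset (List.mem_flatten.2 ⟨Q, hQ, hx⟩)
    have h1x := hmem1 x hxπ
    rcases Nat.lt_or_ge 1 x with h | h
    · exact h
    · have hx1 : x = 1 := le_antisymm h h1x
      exact absurd (hx1 ▸ hx) (hP Q hQ)
  unfold AvoidsPat
  rw [containsPat_iff_s8 _ r s hr, containsPat_iff_s8 _ r s hr]
  constructor
  · intro hav
    refine ⟨?_, ?_⟩
    · rintro ⟨a, b, hab, hsub⟩
      apply hav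
      obtain ⟨l, hl, heq⟩ := List.sublist_map_iff.1 hsub
      have h2l : ∀ x ∈ l, 1 < x := fun x hx => by
        obtain ⟨Q, hQ, hxQ⟩ := List.mem_flatten.1 (hl.subset hx)
        exact hge Q hQ x hxQ
      refine ⟨a + 1, b + 1, by omega, ?_⟩
      have hl2 : l = List.replicate r (a + 1) ++ (b + 1) :: List.replicate s (a + 1) := by
        have h1 := congrArg (List.map (· + 1)) heq
        rw [List.map_map] at h1
        have h2 : l.map ((· + 1) ∘ (· - 1)) = l :=
          (List.map_congr_left fun x hx => by
            have := h2l x hx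
            simp only [Function.comp_apply, id_eq]
            omega).trans (List.map_id l)
        rw [h2] at h1
        rw [← h1]
        simp
      rw [← hl2]
      exact hl.trans (flatten_sub P)
    · intro i hi hri his
      by_contra hne
      exact hav (chunk_occ P hP hge r s i hi hne hri his)
  · rintro ⟨hav2, hemp⟩ ⟨a, b, hab, hsub⟩
    have hamem : a ∈ (P.map (fun Q => 1 :: Q)).flatten :=
      hsub.subset (List.mem_append_left _ (List.mem_replicate.2 ⟨by omega, rfl⟩))
    have ha1 : 1 ≤ a := hmem1 a hamem
    rcases Nat.lt_or_ge 1 a with h2a | h2a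
    · apply hav2
      refine ⟨a - 1, b - 1, by omega, ?_⟩
      have hfil := hsub.filter (fun x => x ≠ 1)
      rw [filter_flatten P hP] at hfil
      rw [List.filter_eq_self.2 (fun x hx => by
        simp only [ne_eq, decide_eq_true_eq]
        rcases List.mem_append.1 hx with h | h
        · have := List.eq_of_mem_replicate h
          omega
        · rcases List.mem_cons.1 h with rfl | h
          · omega
          · have := List.eq_of_mem_replicate h
            omega)] at hfil
      have hm := hfil.map (· - 1)
      simpa using hm
    · have ha : a = 1 := by omega
      subst ha
      have hb1 : b ≠ 1 := by omega
      obtain ⟨i, hi, hne, h1, h2⟩ := key_lemma P hP r s b hb1 hsub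
      exact hne (hemp i hi h1 h2)
end
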